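/- arXiv:1712.00261 — 6 statements merged into one kernel-verified Lean document; each statement's English description precedes it below -/
import Mathlib

section
/- Let L be a finite-dimensional nilpotent Lie algebra of dimension n over a field. Then the Schur multiplier M(L) satisfies dim M(L) ≤ n(n-1)/2. -/
open Module
open Cardinal

/-- The Schur multiplier rank: for the canonical free presentation
`0 → R → F → L → 0` with `F` the free Lie algebra on the set `L`,
this is `dim ((R ⊓ [F,F]) / [F,R])`. -/
noncomputable def schurRank (K : Type*) (L : Type*) [Field K] [LieRing L] [LieAlgebra K L] :
    Cardinal :=
  let F := FreeLieAlgebra K L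
  let π : F →ₗ⁅K⁆ L := FreeLieAlgebra.lift K (id : L → L)
  let R : LieIdeal K F := π.ker
  let A : Submodule K F :=
    LieSubmodule.toSubmodule (R ⊓ ⁅(⊤ : LieIdeal K F), (⊤ : LieIdeal K F)⁆)
  let B : Submodule K F := LieSubmodule.toSubmodule ⁅(⊤ : LieIdeal K F), R⁆
  Module.rank K (A ⧸ (B.comap A.subtype))

lemma card_lt_pairs (n : ℕ) :
    Fintype.card {p : Fin n × Fin n // p.1 < p.2} = n * (n - 1) / 2 := by
  have e : {p : Fin n × Fin n // p.1 < p.2} ≃ Σ j : Fin n, Fin j.val :=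
    { toFun := fun p => ⟨p.1.2, ⟨p.1.1.val, p.2⟩⟩
      invFun := fun s => ⟨(⟨s.2.val, lt_trans s.2.isLt s.1.isLt⟩, s.1), s.2.isLt⟩
      left_inv := fun p => rfl
      right_inv := fun s => rfl }
  rw [Fintype.card_congr e, Fintype.card_sigma]
  simp only [Fintype.card_fin]
  rw [Fin.sum_univ_eq_sum_range (fun i => i) n, Finset.sum_range_id]

set_option maxHeartbeats 1000000 in
lemma moneyhun_aux {K F L : Type*} [Field K] [LieRing F] [LieAlgebra K F]
    [LieRing L] [LieAlgebra K L] (π : F →ₗ⁅K⁆ L) (n : ℕ) (b : Basis (Fin n) K L)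
    (s : Fin n → F) (hs : ∀ i, π (s i) = b i) :
    Module.rank K
      ((LieSubmodule.toSubmodule (π.ker ⊓ ⁅(⊤ : LieIdeal K F), (⊤ : LieIdeal K F)⁆)) ⧸
        ((LieSubmodule.toSubmodule ⁅(⊤ : LieIdeal K F), π.ker⁆).comap
          (LieSubmodule.toSubmodule
            (π.ker ⊓ ⁅(⊤ : LieIdeal K F), (⊤ : LieIdeal K F)⁆)).subtype))
      ≤ ((n * (n - 1) / 2 : ℕ) : Cardinal) := by
  classical
  set R : LieIdeal K F := π.ker with hR
  set A : Submodule K F :=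
    LieSubmodule.toSubmodule (R ⊓ ⁅(⊤ : LieIdeal K F), (⊤ : LieIdeal K F)⁆) with hA
  set B : Submodule K F := LieSubmodule.toSubmodule ⁅(⊤ : LieIdeal K F), R⁆ with hB
  set q : F →ₗ[K] F ⧸ B := B.mkQ with hq
  have hBmem : ∀ (c r : F), r ∈ R → ⁅c, r⁆ ∈ B := fun c r hr =>
    LieSubmodule.lie_mem_lie (LieSubmodule.mem_top c) hr
  -- the class of a bracket only depends on images under π
  have key1 : ∀ a a' c : F, π a = π a' → q ⁅a, c⁆ = q ⁅a', c⁆ := by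
    intro a a' c h
    have hmem : a - a' ∈ R := by
      rw [hR, LieHom.mem_ker, map_sub, h, sub_self]
    have hb2 : ⁅a - a', c⁆ ∈ B := by
      have h1 : ⁅c, a - a'⁆ ∈ B := hBmem _ _ hmem
      rw [← lie_skew]
      exact neg_mem h1
    have h0 : q (⁅a, c⁆ - ⁅a', c⁆) = 0 := by
      rw [← sub_lie, hq, Submodule.mkQ_apply, Submodule.Quotient.mk_eq_zero]
      exact hb2
    rw [map_sub, sub_eq_zero] at h0
    exact h0
  have key2 : ∀ c u u' : F, π u = π u' → q ⁅c, u⁆ = q ⁅c, u'⁆ := by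
    intro c u u' h
    have hmem : u - u' ∈ R := by
      rw [hR, LieHom.mem_ker, map_sub, h, sub_self]
    have h0 : q (⁅c, u⁆ - ⁅c, u'⁆) = 0 := by
      rw [← lie_sub, hq, Submodule.mkQ_apply, Submodule.Quotient.mk_eq_zero]
      exact hBmem _ _ hmem
    rw [map_sub, sub_eq_zero] at h0
    exact h0
  -- a linear section of π on the span of the basis
  set σ : L →ₗ[K] F := b.constr K s with hσ
  have hσb : ∀ i, σ (b i) = s i := fun i => b.constr_basis K s i
  have hπσ : ∀ x : L, π (σ x) = x := by
    have : (π : F →ₗ[K] L).comp σ = LinearMap.id := by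
      apply b.ext
      intro i
      simp [hσb, hs]
    intro x
    have := LinearMap.ext_iff.mp this x
    simpa using this
  -- the spanning set
  set S : Set (F ⧸ B) :=
    Set.range (fun p : {p : Fin n × Fin n // p.1 < p.2} => q ⁅s p.1.1, s p.1.2⁆) with hS
  have hbase : ∀ i j, q ⁅s i, s j⁆ ∈ Submodule.span K S := by
    intro i j
    rcases lt_trichotomy i j with hij | rfl | hij
    · exact Submodule.subset_span ⟨⟨(i, j), hij⟩, rfl⟩
    · rw [lie_self, map_zero]; exact zero_mem _
    · have : q ⁅s i, s j⁆ = -q ⁅s j, s i⁆ := by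
        rw [← map_neg, lie_skew]
      rw [this]
      exact neg_mem (Submodule.subset_span ⟨⟨(j, i), hij⟩, rfl⟩)
  -- bilinear map ψ x y = q ⁅σ x, σ y⁆
  set ψ : L →ₗ[K] L →ₗ[K] F ⧸ B := LinearMap.mk₂ K (fun x y => q ⁅σ x, σ y⁆)
    (fun x x' y => by simp only [map_add, add_lie])
    (fun c x y => by simp only [map_smul, smul_lie])
    (fun x y y' => by simp only [map_add, lie_add])
    (fun c x y => by simp only [map_smul, lie_smul]) with hψ
  have hψapp : ∀ x y, ψ x y = q ⁅σ x, σ y⁆ := fun x y => rfl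
  have hψmem : ∀ x y : L, ψ x y ∈ Submodule.span K S := by
    have hy : ∀ i y, ψ (b i) y ∈ Submodule.span K S := by
      intro i y
      have hy' : y ∈ Submodule.span K (Set.range b) := by
        rw [b.span_eq]; trivial
      refine Submodule.span_induction ?_ ?_ ?_ ?_ hy'
      · rintro y ⟨j, rfl⟩
        rw [hψapp, hσb, hσb]
        exact hbase i j
      · rw [map_zero]; exact zero_mem _
      · intro u v _ _ h1 h2; rw [map_add]; exact add_mem h1 h2
      · intro c u _ h1; rw [map_smul]; exact Submodule.smul_mem _ _ h1
    intro x y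
    have hx' : x ∈ Submodule.span K (Set.range b) := by
      rw [b.span_eq]; trivial
    refine Submodule.span_induction ?_ ?_ ?_ ?_ hx'
    · rintro x ⟨i, rfl⟩; exact hy i y
    · rw [map_zero, LinearMap.zero_apply]; exact zero_mem _
    · intro u v _ _ h1 h2; rw [map_add, LinearMap.add_apply]; exact add_mem h1 h2
    · intro c u _ h1; rw [map_smul, LinearMap.smul_apply]; exact Submodule.smul_mem _ _ h1
  have hbr : ∀ a c : F, q ⁅a, c⁆ ∈ Submodule.span K S := by
    intro a c
    have h1 : q ⁅a, c⁆ = q ⁅σ (π a), σ (π c)⁆ := by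
      rw [key1 a (σ (π a)) c (hπσ (π a)).symm, key2 (σ (π a)) c (σ (π c)) (hπσ (π c)).symm]
    rw [h1, ← hψapp]
    exact hψmem _ _
  -- A maps into the span
  have hAle : A ≤ (Submodule.span K S).comap q := by
    have h1 : A ≤ LieSubmodule.toSubmodule ⁅(⊤ : LieIdeal K F), (⊤ : LieIdeal K F)⁆ := by
      intro x hx
      rw [hA, LieSubmodule.mem_toSubmodule, LieSubmodule.mem_inf] at hx
      rw [LieSubmodule.mem_toSubmodule]
      exact hx.2
    refine le_trans h1 ?_
    rw [LieSubmodule.lieIdeal_oper_eq_linear_span, Submodule.span_le]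
    rintro _ ⟨x, y, rfl⟩
    exact hbr _ _
  -- the quotient embeds into F ⧸ B
  have hcond : B.comap A.subtype ≤ LinearMap.ker (q.comp A.subtype) := by
    intro x hx
    rw [LinearMap.mem_ker, LinearMap.comp_apply, hq, Submodule.mkQ_apply,
      Submodule.Quotient.mk_eq_zero]
    exact hx
  set e : (A ⧸ B.comap A.subtype) →ₗ[K] F ⧸ B :=
    Submodule.liftQ (B.comap A.subtype) (q.comp A.subtype) hcond with he
  have hinj : Function.Injective e := by
    rw [← LinearMap.ker_eq_bot, he]
    apply Submodule.ker_liftQ_eq_bot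
    intro x hx
    rw [LinearMap.mem_ker, LinearMap.comp_apply, hq, Submodule.mkQ_apply,
      Submodule.Quotient.mk_eq_zero] at hx
    exact hx
  have hrange : LinearMap.range e ≤ Submodule.span K S := by
    rw [he, Submodule.range_liftQ]
    rintro _ ⟨⟨a, ha⟩, rfl⟩
    exact hAle ha
  calc Module.rank K (A ⧸ B.comap A.subtype)
      = Module.rank K (LinearMap.range e) := (LinearEquiv.ofInjective e hinj).rank_eq
    _ ≤ Module.rank K (Submodule.span K S) := Submodule.rank_mono hrange
    _ ≤ #S := rank_span_le _
    _ ≤ ((n * (n - 1) / 2 : ℕ) : Cardinal) := by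
        have h := Cardinal.mk_range_le_lift
          (f := fun p : {p : Fin n × Fin n // p.1 < p.2} => q ⁅s p.1.1, s p.1.2⁆)
        have h2 : #{p : Fin n × Fin n // p.1 < p.2} = ((n * (n - 1) / 2 : ℕ) : Cardinal) := by
          rw [Cardinal.mk_fintype, card_lt_pairs]
        rw [← hS, h2, Cardinal.lift_natCast] at h
        simpa [Cardinal.lift_uzero] using h

theorem schur_multiplier_le_moneyhun (K : Type*) (L : Type*) [Field K] [LieRing L]
    [LieAlgebra K L] [FiniteDimensional K L] (h : LieRing.IsNilpotent L)
    (n : ℕ) (hn : finrank K L = n) :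
    schurRank K L ≤ ((n * (n - 1) / 2 : ℕ) : Cardinal) := by
  let b : Basis (Fin n) K L := Module.finBasisOfFinrankEq K L hn
  exact moneyhun_aux (FreeLieAlgebra.lift K (id : L → L)) n b
    (fun i => FreeLieAlgebra.of K (b i))
    (fun i => FreeLieAlgebra.lift_of_apply _ _)
end

section
/- Let L be a finite-dimensional non-abelian nilpotent Lie algebra of dimension n whose derived subalgebra L² = [L,L] has dimension m ≥ 1. Then dim M(L) ≤ (n+m-2)(n-m-1)/2 + 1. -/
open Module

set_option linter.unusedSectionVars false
set_option linter.unusedVariables false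

section NiroAux
variable (K : Type*) (L : Type*) [Field K] [LieRing L] [LieAlgebra K L]

namespace Niro


lemma pairs_card (d : ℕ) :
    (Finset.univ.filter (fun p : Fin d × Fin d => p.1 < p.2)).card * 2 + d = d * d := by
  classical
  set T := Finset.univ.filter (fun p : Fin d × Fin d => p.1 < p.2) with hT
  set T' := Finset.univ.filter (fun p : Fin d × Fin d => p.2 < p.1) with hT'
  set TD := Finset.univ.filter (fun p : Fin d × Fin d => p.1 = p.2) with hTD
  have hswap : T.card = T'.card := by
    refine Finset.card_bij' (fun p _ => (p.2, p.1)) (fun p _ => (p.2, p.1)) ?_ ?_ ?_ ?_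
    · intro p hp
      simp only [hT, Finset.mem_filter, Finset.mem_univ, true_and] at hp
      simp only [hT', Finset.mem_filter, Finset.mem_univ, true_and]
      exact hp
    · intro p hp
      simp only [hT', Finset.mem_filter, Finset.mem_univ, true_and] at hp
      simp only [hT, Finset.mem_filter, Finset.mem_univ, true_and]
      exact hp
    · intro p _; rfl
    · intro p _; rfl
  have h1 : T.card + (Finset.univ.filter (fun p : Fin d × Fin d => ¬ p.1 < p.2)).card
      = d * d := by
    rw [Finset.card_filter_add_card_filter_not]
    simp [Finset.card_univ]
  have h2 : (Finset.univ.filter (fun p : Fin d × Fin d => ¬ p.1 < p.2)).card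
      = T'.card + TD.card := by
    rw [← Finset.card_filter_add_card_filter_not (fun p : Fin d × Fin d => p.2 < p.1)]
    congr 1
    · rw [Finset.filter_filter, hT']
      congr 1
      ext p
      simp only [Finset.mem_filter, Finset.mem_univ, true_and]
      constructor
      · rintro ⟨-, h⟩; exact h
      · intro h; exact ⟨asymm h, h⟩
    · rw [Finset.filter_filter, hTD]
      congr 1
      ext p
      simp only [Finset.mem_filter, Finset.mem_univ, true_and, Fin.lt_def, Fin.ext_iff]
      omega
  have h3 : TD.card = d := by
    have : TD.card = (Finset.univ : Finset (Fin d)).card := by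
      refine Finset.card_bij' (fun p _ => p.1) (fun i _ => (i, i)) ?_ ?_ ?_ ?_
      · intro p hp; simp
      · intro i _; simp [hTD]
      · intro p hp
        simp only [hTD, Finset.mem_filter, Finset.mem_univ, true_and] at hp
        exact Prod.ext rfl hp
      · intro i _; rfl
    simpa using this
  omega

lemma niro_arith (d m n r T : ℕ) (h2 : 2 ≤ d) (hm1 : 1 ≤ m) (hdm : d + m = n)
    (hT : T * 2 + d = d * d) (hr : r + m ≤ T + 2 + d * (m - 1)) :
    r ≤ (n + m - 2) * (n - m - 1) / 2 + 1 := by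
  obtain ⟨d', rfl⟩ : ∃ d', d = d' + 2 := ⟨d - 2, by omega⟩
  obtain ⟨m', rfl⟩ : ∃ m', m = m' + 1 := ⟨m - 1, by omega⟩
  subst hdm
  have e0 : d' + 2 + (m' + 1) + (m' + 1) - 2 = d' + 2 * m' + 2 := by omega
  have e0' : d' + 2 + (m' + 1) - (m' + 1) - 1 = d' + 1 := by omega
  rw [e0, e0']
  have e1 : (d' + 2 * m' + 2) * (d' + 1) = d' * d' + 2 * (d' * m') + 3 * d' + 2 * m' + 2 := by
    ring
  have e2 : (d' + 2) * (d' + 2) = d' * d' + 4 * d' + 4 := by ring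
  have em : m' + 1 - 1 = m' := rfl
  rw [em] at hr
  have e3 : (d' + 2) * m' = d' * m' + 2 * m' := by ring
  rw [e1]
  rw [e2] at hT
  rw [e3] at hr
  omega

noncomputable abbrev FL := FreeLieAlgebra K L
noncomputable def piF : FL K L →ₗ⁅K⁆ L := FreeLieAlgebra.lift K (id : L → L)
noncomputable def RR : LieIdeal K (FL K L) := (piF K L).ker
noncomputable def F2 : Submodule K (FL K L) :=
  LieSubmodule.toSubmodule ⁅(⊤ : LieIdeal K (FL K L)), (⊤ : LieIdeal K (FL K L))⁆
noncomputable def BB : Submodule K (FL K L) :=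
  LieSubmodule.toSubmodule ⁅(⊤ : LieIdeal K (FL K L)), RR K L⁆
noncomputable def AA : Submodule K (FL K L) :=
  LieSubmodule.toSubmodule ((RR K L) ⊓ ⁅(⊤ : LieIdeal K (FL K L)), (⊤ : LieIdeal K (FL K L))⁆)

lemma pi_of (a : L) : piF K L (FreeLieAlgebra.of K a) = a := by
  simp [piF, FreeLieAlgebra.lift_of_apply]

lemma mem_RR_iff (x : FL K L) : x ∈ RR K L ↔ piF K L x = 0 := by
  simp [RR, LieHom.mem_ker]

lemma lie_mem_F2 (x y : FL K L) : ⁅x, y⁆ ∈ F2 K L :=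
  LieSubmodule.lie_mem_lie (LieSubmodule.mem_top _) (LieSubmodule.mem_top _)

lemma memBB_left {r : FL K L} (hr : r ∈ RR K L) (y : FL K L) : ⁅r, y⁆ ∈ BB K L := by
  have : ⁅y, r⁆ ∈ BB K L := LieSubmodule.lie_mem_lie (LieSubmodule.mem_top _) hr
  rw [← lie_skew]; exact neg_mem this

lemma memBB_right (y : FL K L) {r : FL K L} (hr : r ∈ RR K L) : ⁅y, r⁆ ∈ BB K L :=
  LieSubmodule.lie_mem_lie (LieSubmodule.mem_top _) hr

lemma BB_le_F2 : BB K L ≤ F2 K L := fun x hx => LieSubmodule.mono_lie_right _ le_top hx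

lemma BB_le_RR : BB K L ≤ LieSubmodule.toSubmodule (RR K L) := fun x hx =>
  LieSubmodule.lie_le_right (RR K L) ⊤ hx

noncomputable abbrev VV := (F2 K L) ⧸ ((BB K L).comap (F2 K L).subtype)

noncomputable def mkV (x : FL K L) (hx : x ∈ F2 K L) : VV K L :=
  Submodule.Quotient.mk ⟨x, hx⟩

lemma mkV_eq {x y : FL K L} (hx : x ∈ F2 K L) (hy : y ∈ F2 K L)
    (h : x - y ∈ BB K L) : mkV K L x hx = mkV K L y hy := by
  rw [mkV, mkV, Submodule.Quotient.eq]
  exact h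

lemma mkV_add {x y : FL K L} (hx : x ∈ F2 K L) (hy : y ∈ F2 K L) :
    mkV K L (x + y) (add_mem hx hy) = mkV K L x hx + mkV K L y hy := rfl

lemma mkV_smul (t : K) {x : FL K L} (hx : x ∈ F2 K L) :
    mkV K L (t • x) (Submodule.smul_mem _ t hx) = t • mkV K L x hx := rfl

lemma mkV_neg {x : FL K L} (hx : x ∈ F2 K L) :
    mkV K L (-x) (neg_mem hx) = - mkV K L x hx := rfl

lemma mkV_zero_of_memBB {x : FL K L} (hx : x ∈ F2 K L) (h : x ∈ BB K L) :
    mkV K L x hx = 0 := by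
  rw [mkV, Submodule.Quotient.mk_eq_zero]
  exact h

/-- The fundamental bilinear map `L × L → V`. -/
noncomputable def om : L →ₗ[K] L →ₗ[K] VV K L :=
  LinearMap.mk₂ K
    (fun a b => mkV K L ⁅FreeLieAlgebra.of K a, FreeLieAlgebra.of K b⁆ (lie_mem_F2 K L _ _))
    (fun a a' b => by
      rw [← mkV_add]
      apply mkV_eq
      rw [← add_lie, ← sub_lie]
      apply memBB_left
      rw [mem_RR_iff]
      simp [pi_of])
    (fun t a b => by
      rw [← mkV_smul]
      apply mkV_eq
      have : ⁅FreeLieAlgebra.of K (t • a), FreeLieAlgebra.of K b⁆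
          - t • ⁅FreeLieAlgebra.of K a, FreeLieAlgebra.of K b⁆
          = ⁅FreeLieAlgebra.of K (t • a) - t • FreeLieAlgebra.of K a,
              FreeLieAlgebra.of K b⁆ := by rw [sub_lie, smul_lie]
      rw [this]
      apply memBB_left
      rw [mem_RR_iff]
      simp [pi_of])
    (fun a b b' => by
      rw [← mkV_add]
      apply mkV_eq
      rw [← lie_add, ← lie_sub]
      apply memBB_right
      rw [mem_RR_iff]
      simp [pi_of])
    (fun t a b => by
      rw [← mkV_smul]
      apply mkV_eq
      have : ⁅FreeLieAlgebra.of K a, FreeLieAlgebra.of K (t • b)⁆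
          - t • ⁅FreeLieAlgebra.of K a, FreeLieAlgebra.of K b⁆
          = ⁅FreeLieAlgebra.of K a,
              FreeLieAlgebra.of K (t • b) - t • FreeLieAlgebra.of K b⁆ := by
        rw [lie_sub]
        congr 1
        exact (lie_smul t _ _).symm
      rw [this]
      apply memBB_right
      rw [mem_RR_iff]
      simp [pi_of])

lemma om_skew (a b : L) : om K L a b = - om K L b a := by
  have h : om K L b a
      = mkV K L ⁅FreeLieAlgebra.of K b, FreeLieAlgebra.of K a⁆ (lie_mem_F2 K L _ _) := rfl
  rw [h, ← mkV_neg]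
  apply mkV_eq
  rw [← lie_skew]
  simp

/-- substitution: if `π x = a` then `[x, ι b] ≡ [ι a, ι b]`. -/
lemma mkV_lie_left {x : FL K L} (b : L) :
    mkV K L ⁅x, FreeLieAlgebra.of K b⁆ (lie_mem_F2 K L _ _)
      = om K L (piF K L x) b := by
  apply mkV_eq
  rw [← sub_lie]
  apply memBB_left
  rw [mem_RR_iff]
  simp [pi_of]

/-- The key Leibniz-type rewriting rule in `V`. -/
lemma om_lie (x a b : L) :
    om K L x ⁅a, b⁆ = om K L ⁅x, a⁆ b + om K L a ⁅x, b⁆ := by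
  set ι := FreeLieAlgebra.of K with hι
  have h1 : om K L x ⁅a, b⁆ = mkV K L ⁅ι x, ⁅ι a, ι b⁆⁆ (lie_mem_F2 K L _ _) := by
    rw [show om K L x ⁅a,b⁆ = mkV K L ⁅ι x, ι ⁅a,b⁆⁆ (lie_mem_F2 K L _ _) from rfl]
    apply mkV_eq
    rw [← lie_sub]
    apply memBB_right
    rw [mem_RR_iff]
    simp [hι, pi_of]
  have h2 : mkV K L ⁅ι x, ⁅ι a, ι b⁆⁆ (lie_mem_F2 K L _ _)
      = mkV K L ⁅⁅ι x, ι a⁆, ι b⁆ (lie_mem_F2 K L _ _)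
        + mkV K L ⁅ι a, ⁅ι x, ι b⁆⁆ (lie_mem_F2 K L _ _) := by
    rw [← mkV_add]
    apply mkV_eq
    rw [leibniz_lie]
    simp [sub_self, zero_mem]
  have h3 : mkV K L ⁅⁅ι x, ι a⁆, ι b⁆ (lie_mem_F2 K L _ _) = om K L ⁅x, a⁆ b := by
    rw [mkV_lie_left]
    congr 1
    simp [hι, pi_of]
  have h4 : mkV K L ⁅ι a, ⁅ι x, ι b⁆⁆ (lie_mem_F2 K L _ _) = om K L a ⁅x, b⁆ := by
    rw [show om K L a ⁅x,b⁆ = mkV K L ⁅ι a, ι ⁅x,b⁆⁆ (lie_mem_F2 K L _ _) from rfl]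
    apply mkV_eq
    rw [← lie_sub]
    apply memBB_right
    rw [mem_RR_iff]
    simp [hι, pi_of]
  rw [h1, h2, h3, h4]



local notation "γ" => LieModule.lowerCentralSeries K L L

lemma mkV_lie_full (x y : FL K L) :
    mkV K L ⁅x, y⁆ (lie_mem_F2 K L x y)
      = om K L (piF K L x) (piF K L y) := by
  show _ = mkV K L ⁅FreeLieAlgebra.of K (piF K L x), FreeLieAlgebra.of K (piF K L y)⁆ _
  apply mkV_eq
  set ι := FreeLieAlgebra.of K with hι
  have key : ⁅x, y⁆ - ⁅ι (piF K L x), ι (piF K L y)⁆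
      = ⁅x - ι (piF K L x), y⁆ + ⁅ι (piF K L x), y - ι (piF K L y)⁆ := by
    rw [sub_lie, lie_sub]
    abel
  rw [key]
  apply add_mem
  · apply memBB_left
    rw [mem_RR_iff]
    simp [hι, map_sub, pi_of]
  · apply memBB_right
    rw [mem_RR_iff]
    simp [hι, map_sub, pi_of]

lemma gamma_succ_span (k : ℕ) :
    (LieSubmodule.toSubmodule (γ (k+1)) : Submodule K L) =
      Submodule.span K {m | ∃ x : L, ∃ n ∈ γ k, ⁅x, n⁆ = m} := by
  rw [LieModule.lowerCentralSeries_succ, LieSubmodule.lieIdeal_oper_eq_linear_span']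
  congr 1
  ext m
  constructor
  · rintro ⟨x, -, n, hn, rfl⟩; exact ⟨x, n, hn, rfl⟩
  · rintro ⟨x, n, hn, rfl⟩; exact ⟨x, LieSubmodule.mem_top _, n, hn, rfl⟩

lemma lie_mem_gamma_succ {x m : L} (k : ℕ) (hm : m ∈ γ k) : ⁅x, m⁆ ∈ γ (k+1) := by
  rw [LieModule.lowerCentralSeries_succ]
  exact LieSubmodule.lie_mem_lie (LieSubmodule.mem_top _) hm

lemma lie_mem_gamma_succ' {x m : L} (k : ℕ) (hx : x ∈ γ k) : ⁅x, m⁆ ∈ γ (k+1) := by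
  rw [← lie_skew]
  exact neg_mem (lie_mem_gamma_succ K L k hx)

lemma gamma_additive : ∀ (b a : ℕ), ⁅(γ a : LieIdeal K L), γ b⁆ ≤ γ (a + b + 1) := by
  intro b
  induction b with
  | zero =>
    intro a
    rw [LieSubmodule.lie_comm]
    rw [show (γ 0) = (⊤ : LieIdeal K L) from LieModule.lowerCentralSeries_zero K L L]
    rw [← LieModule.lowerCentralSeries_succ]
  | succ b ih =>
    intro a
    rw [LieSubmodule.lie_le_iff]
    intro x hx m hm
    have hm' : m ∈ Submodule.span K {m | ∃ y : L, ∃ n ∈ γ b, ⁅y, n⁆ = m} := by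
      rw [← gamma_succ_span]
      exact hm
    clear hm
    induction hm' using Submodule.span_induction with
    | mem m hmem =>
      obtain ⟨y, n, hn, rfl⟩ := hmem
      have key : ⁅x, ⁅y, n⁆⁆ = ⁅⁅x, y⁆, n⁆ + ⁅y, ⁅x, n⁆⁆ := leibniz_lie x y n
      rw [key]
      apply add_mem
      · have hxy : ⁅x, y⁆ ∈ γ (a + 1) := lie_mem_gamma_succ' K L a hx
        have := ih (a + 1) (LieSubmodule.lie_mem_lie hxy hn)
        convert this using 2
        omega
      · have hxn : ⁅x, n⁆ ∈ γ (a + b + 1) := ih a (LieSubmodule.lie_mem_lie hx hn)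
        exact lie_mem_gamma_succ K L (x := y) (a+b+1) hxn
    | zero => simp
    | add u v _ _ hu hv => rw [lie_add]; exact add_mem hu hv
    | smul t u _ hu => rw [lie_smul]; exact Submodule.smul_mem _ t hu

lemma gamma_stab (hyp : (γ 1 : LieIdeal K L) ≤ γ 2) : ∀ k, (γ 1 : LieIdeal K L) ≤ γ (k+1) := by
  intro k
  induction k with
  | zero => rfl
  | succ k ih =>
    calc (γ 1 : LieIdeal K L) ≤ γ 2 := hyp
    _ = ⁅(⊤ : LieIdeal K L), γ 1⁆ := LieModule.lowerCentralSeries_succ K L L 1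
    _ ≤ ⁅(⊤ : LieIdeal K L), γ (k+1)⁆ := LieSubmodule.mono_lie_right _ ih
    _ = γ (k+2) := (LieModule.lowerCentralSeries_succ K L L (k+1)).symm

lemma gamma_bot_of_stab [FiniteDimensional K L] (h : LieRing.IsNilpotent L)
    (hyp : (γ 1 : LieIdeal K L) ≤ γ 2) : (γ 1 : LieIdeal K L) = ⊥ := by
  haveI := h
  obtain ⟨N, hN⟩ := LieModule.IsNilpotent.nilpotent K L L
  rw [eq_bot_iff, ← hN]
  rcases N with _ | N
  · exact le_top
  · exact gamma_stab K L hyp N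


section Span
variable [FiniteDimensional K L]

lemma lie_mem_gamma1 (x y : L) : ⁅x, y⁆ ∈ (γ 1 : LieIdeal K L) :=
  lie_mem_gamma_succ K L 0 (LieSubmodule.mem_top _)

lemma main_span (h : LieRing.IsNilpotent L)
    {d mq : ℕ} (e : Fin d → L) (u : L) (ff : Fin mq → L) (i₀ j₀ : Fin d)
    (hu : u = ⁅e i₀, e j₀⁆)
    (hdecomp : ∀ a : L, ∃ c ∈ (γ 1 : LieIdeal K L), a - c ∈ Submodule.span K (Set.range e))
    (hEdecomp : ∀ c ∈ (γ 1 : LieIdeal K L), c ∈ Submodule.span K (insert u (Set.range ff)))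
    (W : Submodule K (VV K L))
    (hW1 : ∀ i j, om K L (e i) (e j) ∈ W)
    (hW2 : om K L (e i₀) u ∈ W) (hW3 : om K L (e j₀) u ∈ W)
    (hW4 : ∀ i s, om K L (e i) (ff s) ∈ W) :
    ∀ a b : L, om K L a b ∈ W := by
  haveI := h
  obtain ⟨N, hN⟩ := LieModule.IsNilpotent.nilpotent K L L
  -- M0 : for x with `om x u ∈ W` and `om x (ff s) ∈ W`, all of `om x (γ 1) ∈ W`
  have M0 : ∀ x : L, om K L x u ∈ W → (∀ s, om K L x (ff s) ∈ W) →
      ∀ c ∈ (γ 1 : LieIdeal K L), om K L x c ∈ W := by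
    intro x hxu hxf c hc
    have hc' := hEdecomp c hc
    clear hc
    induction hc' using Submodule.span_induction with
    | mem v hv =>
      rcases hv with rfl | ⟨s, rfl⟩
      · exact hxu
      · exact hxf s
    | zero => rw [map_zero]; exact zero_mem W
    | add v w _ _ hv hw => rw [map_add]; exact add_mem hv hw
    | smul t v _ hv => rw [map_smul]; exact Submodule.smul_mem W t hv
  -- M1 : om (e i) c ∈ W for all c ∈ γ 1
  have M1 : ∀ i, ∀ c ∈ (γ 1 : LieIdeal K L), om K L (e i) c ∈ W := by
    intro i
    apply M0
    · -- om (e i) u ∈ W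
      rw [hu, om_lie]
      apply add_mem
      · rw [om_skew]
        apply neg_mem
        exact M0 (e j₀) hW3 (fun s => hW4 j₀ s) _ (lie_mem_gamma1 K L _ _)
      · exact M0 (e i₀) hW2 (fun s => hW4 i₀ s) _ (lie_mem_gamma1 K L _ _)
    · exact fun s => hW4 i s
  -- helpers for span inductions over `range e`
  have spanFst : ∀ g : L, (∀ i, om K L (e i) g ∈ W) →
      ∀ x ∈ Submodule.span K (Set.range e), om K L x g ∈ W := by
    intro g hgen x hx
    induction hx using Submodule.span_induction with
    | mem v hv => obtain ⟨i, rfl⟩ := hv; exact hgen i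
    | zero => rw [map_zero, LinearMap.zero_apply]; exact zero_mem W
    | add v w _ _ hv hw => rw [map_add, LinearMap.add_apply]; exact add_mem hv hw
    | smul t v _ hv => rw [map_smul, LinearMap.smul_apply]; exact Submodule.smul_mem W t hv
  have spanSnd : ∀ x : L, (∀ j, om K L x (e j) ∈ W) →
      ∀ b' ∈ Submodule.span K (Set.range e), om K L x b' ∈ W := by
    intro x hgen b' hb'
    induction hb' using Submodule.span_induction with
    | mem v hv => obtain ⟨j, rfl⟩ := hv; exact hgen j
    | zero => rw [map_zero]; exact zero_mem W
    | add v w _ _ hv hw => rw [map_add]; exact add_mem hv hw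
    | smul t v _ hv => rw [map_smul]; exact Submodule.smul_mem W t hv
  -- M2' : conditional reduction from arbitrary first argument
  have M2' : ∀ t : ℕ, 1 ≤ t →
      (∀ c' ∈ (γ 1 : LieIdeal K L), ∀ g ∈ (γ t : LieIdeal K L), om K L c' g ∈ W) →
      ∀ (a g : L), g ∈ (γ t : LieIdeal K L) → om K L a g ∈ W := by
    intro t ht hyp a g hg
    obtain ⟨ca, hca, hspan⟩ := hdecomp a
    have hg1 : g ∈ (γ 1 : LieIdeal K L) :=
      LieModule.antitone_lowerCentralSeries K L L ht hg
    have h1 : om K L (a - ca) g ∈ W :=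
      spanFst g (fun i => M1 i g hg1) _ hspan
    have h2 : om K L ca g ∈ W := hyp ca hca g hg
    have key : om K L (a - ca) g + om K L ca g = om K L a g := by
      rw [← LinearMap.add_apply, ← map_add, sub_add_cancel]
    rw [← key]
    exact add_mem h1 h2
  -- M3 : the double induction for both arguments in γ
  have M3 : ∀ r k j : ℕ, 1 ≤ j → 1 ≤ k → 2 * N ≤ j + k + r →
      ∀ c ∈ (γ j : LieIdeal K L), ∀ g ∈ (γ k : LieIdeal K L), om K L c g ∈ W := by
    intro r
    induction r with
    | zero =>
      intro k j hj hk hsum c hc g hg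
      have : N ≤ j ∨ N ≤ k := by omega
      rcases this with hNj | hNk
      · have : c = 0 := by
          have hcbot : c ∈ (γ N : LieIdeal K L) :=
            LieModule.antitone_lowerCentralSeries K L L hNj hc
          rw [hN] at hcbot
          simpa using hcbot
        rw [this, map_zero, LinearMap.zero_apply]; exact zero_mem W
      · have : g = 0 := by
          have hgbot : g ∈ (γ N : LieIdeal K L) :=
            LieModule.antitone_lowerCentralSeries K L L hNk hg
          rw [hN] at hgbot
          simpa using hgbot
        rw [this, map_zero]; exact zero_mem W
    | succ r ihr =>
      intro k
      induction k with
      | zero => omega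
      | succ k' ihk =>
        intro j hj _ hsum c hc g hg
        have hg' : g ∈ Submodule.span K {m | ∃ y : L, ∃ n ∈ (γ k' : LieIdeal K L), ⁅y, n⁆ = m} := by
          rw [← gamma_succ_span]
          exact hg
        clear hg
        induction hg' using Submodule.span_induction with
        | mem v hv =>
          obtain ⟨y, n, hn, rfl⟩ := hv
          rw [om_lie]
          apply add_mem
          · -- om ⁅c, y⁆ n
            have hcy : ⁅c, y⁆ ∈ (γ (j+1) : LieIdeal K L) := lie_mem_gamma_succ' K L j hc
            rcases Nat.eq_zero_or_pos k' with rfl | hk'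
            · rw [om_skew]
              apply neg_mem
              apply M2' (j+1) (by omega) ?_ n ⁅c, y⁆ hcy
              intro c' hc' g' hg'
              exact ihr (j+1) 1 le_rfl (by omega) (by omega) c' hc' g' hg'
            · exact ihk (j+1) (by omega) hk' (by omega) _ hcy n hn
          · -- om y ⁅c, n⁆
            have hcn : ⁅c, n⁆ ∈ (γ (j + k' + 1) : LieIdeal K L) := by
              rcases Nat.eq_zero_or_pos k' with rfl | hk'
              · have : ⁅c, n⁆ ∈ (γ (j+1) : LieIdeal K L) := lie_mem_gamma_succ' K L j hc
                simpa using this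
              · exact gamma_additive K L k' j (LieSubmodule.lie_mem_lie hc hn)
            apply M2' (j + k' + 1) (by omega) ?_ y _ hcn
            intro c' hc' g' hg'
            exact ihr (j + k' + 1) 1 le_rfl (by omega) (by omega) c' hc' g' hg'
        | zero => rw [map_zero]; exact zero_mem W
        | add v w _ _ hv hw => rw [map_add]; exact add_mem hv hw
        | smul t v _ hv => rw [map_smul]; exact Submodule.smul_mem W t hv
  -- P1 : om (e i) b ∈ W for every b
  have P1 : ∀ i (b : L), om K L (e i) b ∈ W := by
    intro i b
    obtain ⟨cb, hcb, hspan⟩ := hdecomp b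
    have h1 : om K L (e i) (b - cb) ∈ W :=
      spanSnd (e i) (fun j => hW1 i j) _ hspan
    have h2 : om K L (e i) cb ∈ W := M1 i cb hcb
    have key : om K L (e i) (b - cb) + om K L (e i) cb = om K L (e i) b := by
      rw [← map_add, sub_add_cancel]
    rw [← key]
    exact add_mem h1 h2
  -- main statement
  intro a b
  obtain ⟨ca, hca, hspan⟩ := hdecomp a
  have h1 : om K L (a - ca) b ∈ W :=
    spanFst b (fun i => P1 i b) _ hspan
  have h2 : om K L ca b ∈ W := by
    rw [om_skew]
    apply neg_mem
    apply M2' 1 le_rfl ?_ b ca hca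
    intro c' hc' g' hg'
    exact M3 (2*N) 1 1 le_rfl le_rfl (by omega) c' hc' g' hg'
  have key : om K L (a - ca) b + om K L ca b = om K L a b := by
    rw [← LinearMap.add_apply, ← map_add, sub_add_cancel]
  rw [← key]
  exact add_mem h1 h2


set_option maxHeartbeats 2000000 in
theorem main_bound (h : LieRing.IsNilpotent L)
    (n m : ℕ) (hn : finrank K L = n)
    (hm : finrank K (LieSubmodule.toSubmodule
      ⁅(⊤ : LieIdeal K L), (⊤ : LieIdeal K L)⁆) = m)
    (hm1 : 1 ≤ m) :
    Module.rank K ((AA K L) ⧸ ((BB K L).comap (AA K L).subtype))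
      ≤ (((n + m - 2) * (n - m - 1) / 2 + 1 : ℕ) : Cardinal) := by
  classical
  have hγ1 : (γ 1 : LieIdeal K L) = ⁅(⊤ : LieIdeal K L), (⊤ : LieIdeal K L)⁆ := by
    have h1 := LieModule.lowerCentralSeries_succ K L L 0
    rw [LieModule.lowerCentralSeries_zero] at h1
    exact h1
  set E : Submodule K L := LieSubmodule.toSubmodule (γ 1 : LieIdeal K L) with hE
  have hmE : finrank K E = m := by rw [hE, hγ1]; exact hm
  -- the complement family e
  obtain ⟨σ, hσ⟩ := LinearMap.exists_rightInverse_of_surjective E.mkQ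
    (Submodule.range_mkQ E)
  have hσ_apply : ∀ q, E.mkQ (σ q) = q := fun q => LinearMap.ext_iff.mp hσ q
  set d := finrank K (L ⧸ E) with hd
  let bq := Module.finBasis K (L ⧸ E)
  let e : Fin d → L := fun i => σ (bq i)
  have hrange : ∀ a : L, σ (E.mkQ a) ∈ Submodule.span K (Set.range e) := by
    intro a
    have h1 : Submodule.span K (Set.range e) =
        Submodule.map σ (Submodule.span K (Set.range bq)) := by
      rw [LinearMap.map_span]
      congr 1
      rw [← Set.range_comp]
      rfl
    rw [h1, Basis.span_eq]
    exact ⟨E.mkQ a, Submodule.mem_top, rfl⟩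
  have hmemE : ∀ a : L, a - σ (E.mkQ a) ∈ E := by
    intro a
    rw [← Submodule.Quotient.mk_eq_zero E]
    have : E.mkQ (a - σ (E.mkQ a)) = 0 := by
      rw [map_sub, hσ_apply, sub_self]
    simpa [Submodule.mkQ_apply] using this
  have hdecomp : ∀ a : L, ∃ c ∈ (γ 1 : LieIdeal K L),
      a - c ∈ Submodule.span K (Set.range e) := by
    intro a
    refine ⟨a - σ (E.mkQ a), hmemE a, ?_⟩
    have : a - (a - σ (E.mkQ a)) = σ (E.mkQ a) := by abel
    rw [this]
    exact hrange a
  -- existence of the special pair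
  have hpair : ∃ i₀ j₀ : Fin d, ⁅e i₀, e j₀⁆ ≠ 0 := by
    by_contra hno
    push_neg at hno
    have key : ∀ x ∈ Submodule.span K (Set.range e),
        ∀ y ∈ Submodule.span K (Set.range e), ⁅x, y⁆ ∈ (γ 2 : LieIdeal K L) := by
      intro x hx
      induction hx using Submodule.span_induction with
      | mem v hv =>
        intro y hy
        induction hy using Submodule.span_induction with
        | mem w hw =>
          obtain ⟨i, rfl⟩ := hv; obtain ⟨j, rfl⟩ := hw
          rw [hno i j]; exact zero_mem _
        | zero => rw [lie_zero]; exact zero_mem _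
        | add y₁ y₂ _ _ h₁ h₂ => rw [lie_add]; exact add_mem h₁ h₂
        | smul t y₁ _ h₁ => rw [lie_smul]; exact Submodule.smul_mem _ t h₁
      | zero => intro y _; rw [zero_lie]; exact zero_mem _
      | add x₁ x₂ _ _ h₁ h₂ => intro y hy; rw [add_lie]; exact add_mem (h₁ y hy) (h₂ y hy)
      | smul t x₁ _ h₁ => intro y hy; rw [smul_lie]; exact Submodule.smul_mem _ t (h₁ y hy)
    have hle : (γ 1 : LieIdeal K L) ≤ γ 2 := by
      rw [hγ1, LieSubmodule.lie_le_iff]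
      intro x _ y _
      obtain ⟨cx, hcx, hsx⟩ := hdecomp x
      obtain ⟨cy, hcy, hsy⟩ := hdecomp y
      have hxy : ⁅x, y⁆ = ⁅x - cx, y - cy⁆ + ⁅x - cx, cy⁆ + (⁅cx, y - cy⁆ + ⁅cx, cy⁆) := by
        rw [← lie_add, ← lie_add, ← add_lie, sub_add_cancel, sub_add_cancel]
      rw [hxy]
      refine add_mem (add_mem ?_ ?_) (add_mem ?_ ?_)
      · exact key _ hsx _ hsy
      · exact lie_mem_gamma_succ K L 1 hcy
      · exact lie_mem_gamma_succ' K L 1 hcx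
      · exact lie_mem_gamma_succ' K L 1 hcx
    have hbot : (γ 1 : LieIdeal K L) = ⊥ := gamma_bot_of_stab K L h hle
    have : finrank K E = 0 := by
      rw [hE, hbot]
      simp [LieSubmodule.bot_toSubmodule]
    omega
  obtain ⟨i₀, j₀, hu0⟩ := hpair
  set u : L := ⁅e i₀, e j₀⁆ with hu
  have huE : u ∈ E := lie_mem_gamma1 K L _ _
  set uE : ↥E := ⟨u, huE⟩ with huE'
  have huE0 : uE ≠ 0 := by
    intro hcon
    apply hu0
    have := congrArg (fun z : ↥E => (z : L)) hcon
    exact this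
  -- the family ff
  obtain ⟨τ, hτ⟩ := LinearMap.exists_rightInverse_of_surjective
    (Submodule.span K {uE}).mkQ (Submodule.range_mkQ _)
  have hτ_apply : ∀ q, (Submodule.span K {uE}).mkQ (τ q) = q := fun q =>
    LinearMap.ext_iff.mp hτ q
  set mq := finrank K (↥E ⧸ Submodule.span K {uE}) with hmq'
  let bq2 := Module.finBasis K (↥E ⧸ Submodule.span K {uE})
  let ffE : Fin mq → ↥E := fun s => τ (bq2 s)
  let ff : Fin mq → L := fun s => (ffE s : L)
  have hmqm : mq + 1 = m := by
    have h1 := Submodule.finrank_quotient_add_finrank (Submodule.span K {uE})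
    rw [finrank_span_singleton huE0] at h1
    rw [hmq']
    rw [hmE] at h1
    omega
  have hrange2 : ∀ c : ↥E, τ ((Submodule.span K {uE}).mkQ c) ∈
      Submodule.span K (Set.range ffE) := by
    intro c
    have h1 : Submodule.span K (Set.range ffE) =
        Submodule.map τ (Submodule.span K (Set.range bq2)) := by
      rw [LinearMap.map_span]
      congr 1
      rw [← Set.range_comp]
      rfl
    rw [h1, Basis.span_eq]
    exact ⟨_, Submodule.mem_top, rfl⟩
  have hEdecomp : ∀ c ∈ (γ 1 : LieIdeal K L),
      c ∈ Submodule.span K (insert u (Set.range ff)) := by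
    intro c hc
    have hcE : c ∈ E := hc
    set cE : ↥E := ⟨c, hcE⟩ with hcE'
    have h1 : cE - τ ((Submodule.span K {uE}).mkQ cE) ∈ Submodule.span K {uE} := by
      rw [← Submodule.Quotient.mk_eq_zero (Submodule.span K {uE})]
      have : (Submodule.span K {uE}).mkQ (cE - τ ((Submodule.span K {uE}).mkQ cE)) = 0 := by
        rw [map_sub, hτ_apply, sub_self]
      simpa [Submodule.mkQ_apply] using this
    have h3 : cE ∈ Submodule.span K (insert uE (Set.range ffE)) := by
      have e1 : cE = (cE - τ ((Submodule.span K {uE}).mkQ cE))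
          + τ ((Submodule.span K {uE}).mkQ cE) := by abel
      rw [e1]
      apply add_mem
      · exact Submodule.span_mono (by simp) h1
      · exact Submodule.span_mono (Set.subset_insert _ _) (hrange2 cE)
    have h4 : c = E.subtype cE := rfl
    rw [h4]
    have h5 : E.subtype '' (insert uE (Set.range ffE)) = insert u (Set.range ff) := by
      rw [Set.image_insert_eq]
      congr 1
      rw [← Set.range_comp]
      rfl
    have h6 := Submodule.mem_map_of_mem (f := E.subtype) h3
    rw [LinearMap.map_span, h5] at h6
    exact h6
  -- the finite generating set
  set T : Finset (Fin d × Fin d) := Finset.univ.filter (fun p => p.1 < p.2) with hT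
  let S : Finset (VV K L) :=
    (T.image (fun p => om K L (e p.1) (e p.2)) ∪
      {om K L (e i₀) u, om K L (e j₀) u}) ∪
      (Finset.univ : Finset (Fin d × Fin mq)).image (fun p => om K L (e p.1) (ff p.2))
  set W : Submodule K (VV K L) := Submodule.span K (↑S : Set (VV K L)) with hW
  have om_self : ∀ a : L, om K L a a = 0 := by
    intro a
    show mkV K L ⁅FreeLieAlgebra.of K a, FreeLieAlgebra.of K a⁆ _ = 0
    apply mkV_zero_of_memBB
    rw [lie_self]
    exact zero_mem _
  have hW1 : ∀ i j, om K L (e i) (e j) ∈ W := by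
    intro i j
    rcases lt_trichotomy i j with hij | hij | hij
    · apply Submodule.subset_span
      apply Finset.mem_coe.mpr
      apply Finset.mem_union_left
      apply Finset.mem_union_left
      exact Finset.mem_image.mpr ⟨(i, j), by simp [T, hij], rfl⟩
    · rw [hij, om_self]; exact zero_mem _
    · rw [om_skew]
      apply neg_mem
      apply Submodule.subset_span
      apply Finset.mem_coe.mpr
      apply Finset.mem_union_left
      apply Finset.mem_union_left
      exact Finset.mem_image.mpr ⟨(j, i), by simp [T, hij], rfl⟩
  have hW2 : om K L (e i₀) u ∈ W := by
    apply Submodule.subset_span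
    apply Finset.mem_coe.mpr
    apply Finset.mem_union_left
    apply Finset.mem_union_right
    simp
  have hW3 : om K L (e j₀) u ∈ W := by
    apply Submodule.subset_span
    apply Finset.mem_coe.mpr
    apply Finset.mem_union_left
    apply Finset.mem_union_right
    simp
  have hW4 : ∀ i s, om K L (e i) (ff s) ∈ W := by
    intro i s
    apply Submodule.subset_span
    apply Finset.mem_coe.mpr
    apply Finset.mem_union_right
    exact Finset.mem_image.mpr ⟨(i, s), Finset.mem_univ _, rfl⟩
  have hspan := main_span K L h e u ff i₀ j₀ hu hdecomp hEdecomp W hW1 hW2 hW3 hW4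

  -- every element of V lies in W
  have hF2span : (F2 K L : Submodule K (FL K L)) =
      Submodule.span K {z : FL K L | ∃ x y : FL K L, ⁅x, y⁆ = z} := by
    show LieSubmodule.toSubmodule
      (⁅(⊤ : LieIdeal K (FL K L)), (⊤ : LieIdeal K (FL K L))⁆) = _
    rw [LieSubmodule.lieIdeal_oper_eq_linear_span']
    congr 1
    ext z
    constructor
    · rintro ⟨x, -, y, -, rfl⟩; exact ⟨x, y, rfl⟩
    · rintro ⟨x, y, rfl⟩; exact ⟨x, LieSubmodule.mem_top _, y, LieSubmodule.mem_top _, rfl⟩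
  set Bc : Submodule K ↥(F2 K L) := (BB K L).comap (F2 K L).subtype with hBc
  have htopW : ∀ v : VV K L, v ∈ W := by
    have hsub2 : (F2 K L) ≤ Submodule.map (F2 K L).subtype (Submodule.comap Bc.mkQ W) := by
      refine le_trans (le_of_eq hF2span) (Submodule.span_le.mpr ?_)
      rintro z ⟨x, y, rfl⟩
      refine ⟨⟨⁅x, y⁆, lie_mem_F2 K L x y⟩, ?_, rfl⟩
      have h0 : Bc.mkQ ⟨⁅x, y⁆, lie_mem_F2 K L x y⟩
          = mkV K L ⁅x, y⁆ (lie_mem_F2 K L x y) := rfl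
      show Bc.mkQ _ ∈ W
      rw [h0, mkV_lie_full]
      exact hspan _ _
    intro v
    obtain ⟨x, rfl⟩ := Submodule.Quotient.mk_surjective Bc v
    obtain ⟨x', hx', hxx⟩ := hsub2 x.2
    have hxeq : x' = x := Subtype.ext hxx
    rw [← hxeq]
    exact hx'
  -- rank V ≤ S.card
  have hVrank : Module.rank K (VV K L) ≤ (S.card : Cardinal) := by
    have hspaneq : Submodule.span K (↑S : Set (VV K L)) = ⊤ := by
      rw [eq_top_iff]; intro v _; exact htopW v
    have h1 := rank_span_finset_le (R := K) S
    rw [hspaneq] at h1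
    calc Module.rank K (VV K L)
        = Module.rank K ↥(⊤ : Submodule K (VV K L)) := (rank_top K _).symm
    _ ≤ (S.card : Cardinal) := h1
  -- the map φ : V → L induced by π
  let π₂ : ↥(F2 K L) →ₗ[K] L := (piF K L).toLinearMap.comp (F2 K L).subtype
  have hBker : Bc ≤ LinearMap.ker π₂ := by
    intro x hx
    have hx' : (x : FL K L) ∈ BB K L := hx
    have h2 := BB_le_RR K L hx'
    rw [LinearMap.mem_ker]
    show piF K L (x : FL K L) = 0
    rw [← mem_RR_iff]
    exact h2
  let φ : VV K L →ₗ[K] L := Bc.liftQ π₂ hBker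
  have hrangeφ : LinearMap.range φ = E := by
    apply le_antisymm
    · rintro w ⟨v, rfl⟩
      obtain ⟨x, rfl⟩ := Submodule.Quotient.mk_surjective Bc v
      have hφx : φ (Submodule.Quotient.mk x) = π₂ x := Submodule.liftQ_apply _ _ _
      rw [hφx]
      show piF K L (x : FL K L) ∈ E
      have hpi : ∀ z ∈ Submodule.span K {z : FL K L | ∃ x y : FL K L, ⁅x, y⁆ = z},
          piF K L z ∈ E := by
        intro z hz
        induction hz using Submodule.span_induction with
        | mem w hw =>
          obtain ⟨x₁, y₁, rfl⟩ := hw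
          rw [LieHom.map_lie]
          exact lie_mem_gamma1 K L _ _
        | zero => rw [map_zero]; exact zero_mem E
        | add y₁ y₂ _ _ h₁ h₂ => rw [map_add]; exact add_mem h₁ h₂
        | smul t y₁ _ h₁ => rw [map_smul]; exact Submodule.smul_mem _ t h₁
      exact hpi _ (by rw [← hF2span]; exact x.2)
    · have hEspan : E = Submodule.span K {z : L | ∃ a b : L, ⁅a, b⁆ = z} := by
        rw [hE, hγ1, LieSubmodule.lieIdeal_oper_eq_linear_span']
        congr 1
        ext z
        constructor
        · rintro ⟨a, -, b, -, rfl⟩; exact ⟨a, b, rfl⟩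
        · rintro ⟨a, b, rfl⟩
          exact ⟨a, LieSubmodule.mem_top _, b, LieSubmodule.mem_top _, rfl⟩
      rw [hEspan]
      apply Submodule.span_le.mpr
      rintro z ⟨a, b, rfl⟩
      refine ⟨om K L a b, ?_⟩
      have h1 : om K L a b = Submodule.Quotient.mk
          (⟨⁅FreeLieAlgebra.of K a, FreeLieAlgebra.of K b⁆,
            lie_mem_F2 K L _ _⟩ : ↥(F2 K L)) := rfl
      rw [h1, Submodule.liftQ_apply]
      show piF K L ⁅FreeLieAlgebra.of K a, FreeLieAlgebra.of K b⁆ = ⁅a, b⁆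
      rw [LieHom.map_lie, pi_of, pi_of]
  have hq : Module.rank K (VV K L ⧸ LinearMap.ker φ) = (m : Cardinal) := by
    have h1 := LinearEquiv.lift_rank_eq (LinearMap.quotKerEquivRange φ)
    rw [hrangeφ] at h1
    have h2 : Module.rank K ↥E = (m : Cardinal) := by
      rw [← Module.finrank_eq_rank, hmE]
    rw [h2, Cardinal.lift_natCast] at h1
    exact Cardinal.lift_injective (by rw [h1, Cardinal.lift_natCast])
  -- the injection of the Schur multiplier into ker φ
  have hAF2 : AA K L ≤ F2 K L := by
    intro x hx
    have hx' : x ∈ (RR K L) ⊓ ⁅(⊤ : LieIdeal K (FL K L)), (⊤ : LieIdeal K (FL K L))⁆ := hx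
    exact ((LieSubmodule.mem_inf _ _ _).mp hx').2
  have hAR : ∀ x : FL K L, x ∈ AA K L → piF K L x = 0 := by
    intro x hx
    have hx' : x ∈ (RR K L) ⊓ ⁅(⊤ : LieIdeal K (FL K L)), (⊤ : LieIdeal K (FL K L))⁆ := hx
    have h2 := ((LieSubmodule.mem_inf _ _ _).mp hx').1
    rwa [mem_RR_iff] at h2
  set Ac : Submodule K ↥(AA K L) := (BB K L).comap (AA K L).subtype with hAc
  let incl : ↥(AA K L) →ₗ[K] ↥(F2 K L) := Submodule.inclusion hAF2
  have hkerψ : Ac ≤ LinearMap.ker (Bc.mkQ.comp incl) := by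
    intro x hx
    rw [LinearMap.mem_ker, LinearMap.comp_apply, Submodule.mkQ_apply,
      Submodule.Quotient.mk_eq_zero]
    exact hx
  let ψ := Ac.liftQ (Bc.mkQ.comp incl) hkerψ
  have hψinj : Function.Injective ψ := by
    rw [← LinearMap.ker_eq_bot]
    apply Submodule.ker_liftQ_eq_bot
    intro x hx
    rw [LinearMap.mem_ker, LinearMap.comp_apply, Submodule.mkQ_apply,
      Submodule.Quotient.mk_eq_zero] at hx
    exact hx
  have hrangeψ : LinearMap.range ψ ≤ LinearMap.ker φ := by
    rintro w ⟨a, rfl⟩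
    obtain ⟨x, rfl⟩ := Submodule.Quotient.mk_surjective Ac a
    rw [LinearMap.mem_ker]
    have h1 : ψ (Submodule.Quotient.mk x) = Bc.mkQ (incl x) := Submodule.liftQ_apply _ _ _
    rw [h1, Submodule.mkQ_apply]
    have h2 : φ (Submodule.Quotient.mk (incl x)) = π₂ (incl x) := Submodule.liftQ_apply _ _ _
    rw [h2]
    show piF K L (x : FL K L) = 0
    exact hAR _ x.2
  have hrankA : Module.rank K (↥(AA K L) ⧸ Ac) ≤ Module.rank K ↥(LinearMap.ker φ) := by
    rw [← rank_range_of_injective ψ hψinj]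
    exact Submodule.rank_mono hrangeψ
  have hchain : Module.rank K (↥(AA K L) ⧸ Ac) + (m : Cardinal) ≤ (S.card : Cardinal) := by
    have h1 := Submodule.rank_quotient_add_rank (LinearMap.ker φ)
    calc Module.rank K (↥(AA K L) ⧸ Ac) + (m : Cardinal)
        ≤ Module.rank K ↥(LinearMap.ker φ) + (m : Cardinal) := add_le_add_left hrankA _
    _ = (m : Cardinal) + Module.rank K ↥(LinearMap.ker φ) := add_comm _ _
    _ = Module.rank K (VV K L ⧸ LinearMap.ker φ)
        + Module.rank K ↥(LinearMap.ker φ) := by rw [hq]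
    _ = Module.rank K (VV K L) := h1
    _ ≤ (S.card : Cardinal) := hVrank
  -- counting
  have hScard : S.card ≤ T.card + 2 + d * mq := by
    have c1 : (T.image (fun p => om K L (e p.1) (e p.2))).card ≤ T.card :=
      Finset.card_image_le
    have c2 : ({om K L (e i₀) u, om K L (e j₀) u} : Finset (VV K L)).card ≤ 2 := by
      apply le_trans (Finset.card_insert_le _ _)
      simp
    have c3 : ((Finset.univ : Finset (Fin d × Fin mq)).image
        (fun p => om K L (e p.1) (ff p.2))).card ≤ d * mq := by
      apply le_trans Finset.card_image_le
      simp [Finset.card_univ]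
    have c4 := Finset.card_union_le
      (T.image (fun p => om K L (e p.1) (e p.2)) ∪
        {om K L (e i₀) u, om K L (e j₀) u})
      ((Finset.univ : Finset (Fin d × Fin mq)).image (fun p => om K L (e p.1) (ff p.2)))
    have c5 := Finset.card_union_le
      (T.image (fun p => om K L (e p.1) (e p.2)))
      ({om K L (e i₀) u, om K L (e j₀) u} : Finset (VV K L))
    calc S.card ≤ _ := c4
    _ ≤ T.card + 2 + d * mq := by omega
  have hdm : d + m = n := by
    have h1 := Submodule.finrank_quotient_add_finrank E
    rw [hmE, hn] at h1
    exact h1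
  have hne : i₀ ≠ j₀ := by
    intro hcon
    apply hu0
    rw [hu, hcon, lie_self]
  have hd2 : 2 ≤ d := by
    by_contra hcon
    push_neg at hcon
    have : Subsingleton (Fin d) := Fin.subsingleton_iff_le_one.mpr (by omega)
    exact hne (Subsingleton.elim _ _)
  -- final numerics
  have hfin : Module.rank K (↥(AA K L) ⧸ Ac) < Cardinal.aleph0 :=
    lt_of_le_of_lt (le_trans le_self_add hchain) (Cardinal.nat_lt_aleph0 _)
  obtain ⟨r, hr⟩ := Cardinal.lt_aleph0.mp hfin
  rw [hr] at hchain ⊢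
  have hrm : r + m ≤ S.card := by
    have h1 : ((r + m : ℕ) : Cardinal) ≤ (S.card : Cardinal) := by
      push_cast
      exact hchain
    exact_mod_cast h1
  have hTc : T.card * 2 + d = d * d := by
    rw [hT]
    exact pairs_card d
  have hrT : r + m ≤ T.card + 2 + d * (m - 1) := by
    have hmq2 : mq = m - 1 := by omega
    rw [← hmq2]
    omega
  have hfinal : r ≤ (n + m - 2) * (n - m - 1) / 2 + 1 :=
    niro_arith d m n r T.card hd2 hm1 hdm hTc hrT
  exact_mod_cast hfinal


end Span

end Niro

end NiroAux

theorem schur_multiplier_le_niroomand (K : Type*) (L : Type*) [Field K] [LieRing L]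
    [LieAlgebra K L] [FiniteDimensional K L] (h : LieRing.IsNilpotent L)
    (hna : ¬ IsLieAbelian L) (n m : ℕ) (hn : finrank K L = n)
    (hm : finrank K (LieSubmodule.toSubmodule ⁅(⊤ : LieIdeal K L), (⊤ : LieIdeal K L)⁆) = m)
    (hm1 : 1 ≤ m) :
    schurRank K L ≤ (((n + m - 2) * (n - m - 1) / 2 + 1 : ℕ) : Cardinal) := by
  have hb := Niro.main_bound K L h n m hn hm hm1
  exact hb
end

section
/- Let L be a finite-dimensional Lie algebra and K a central ideal of L. Then dim M(L) + dim(L² ∩ K) ≤ dim M(L/K) + dim M(K) + dim((L/K)^{ab} ⊗ K). -/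
open Module

section Helpers
variable {k : Type*} [Field k] {M N : Type*} [AddCommGroup M] [Module k M]
  [AddCommGroup N] [Module k N]

/-- Induced map between subquotients. -/
noncomputable def sqMap (φ : M →ₗ[k] N) (A B : Submodule k M) (A' B' : Submodule k N)
    (hA : ∀ x ∈ A, φ x ∈ A') (hB : ∀ x ∈ B, φ x ∈ B') :
    (A ⧸ B.comap A.subtype) →ₗ[k] (A' ⧸ B'.comap A'.subtype) :=
  Submodule.mapQ _ _ (φ.restrict hA) (by
    intro x hx
    simp only [Submodule.mem_comap] at hx ⊢
    exact hB _ hx)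

theorem sqMap_mk (φ : M →ₗ[k] N) (A B : Submodule k M) (A' B' : Submodule k N)
    (hA : ∀ x ∈ A, φ x ∈ A') (hB : ∀ x ∈ B, φ x ∈ B') (x : A) :
    sqMap φ A B A' B' hA hB (Submodule.Quotient.mk x)
      = Submodule.Quotient.mk (φ.restrict hA x) := by
  simp [sqMap, Submodule.mapQ_apply]

theorem sqMap_surjective (φ : M →ₗ[k] N) (A B : Submodule k M) (A' B' : Submodule k N)
    (hA : ∀ x ∈ A, φ x ∈ A') (hB : ∀ x ∈ B, φ x ∈ B')
    (h : ∀ a' ∈ A', ∃ a ∈ A, φ a - a' ∈ B') :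
    Function.Surjective (sqMap φ A B A' B' hA hB) := by
  intro y
  obtain ⟨a', rfl⟩ := Submodule.Quotient.mk_surjective _ y
  obtain ⟨a, ha, hd⟩ := h a' a'.2
  refine ⟨Submodule.Quotient.mk ⟨a, ha⟩, ?_⟩
  rw [sqMap_mk, Submodule.Quotient.eq]
  simpa [LinearMap.restrict_apply] using hd

theorem sqMap_injective (φ : M →ₗ[k] N) (A B : Submodule k M) (A' B' : Submodule k N)
    (hA : ∀ x ∈ A, φ x ∈ A') (hB : ∀ x ∈ B, φ x ∈ B')
    (h : ∀ a ∈ A, φ a ∈ B' → a ∈ B) :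
    Function.Injective (sqMap φ A B A' B' hA hB) := by
  rw [← LinearMap.ker_eq_bot, eq_bot_iff]
  intro y hy
  obtain ⟨a, rfl⟩ := Submodule.Quotient.mk_surjective _ y
  rw [LinearMap.mem_ker, sqMap_mk, Submodule.Quotient.mk_eq_zero] at hy
  rw [Submodule.mem_bot, Submodule.Quotient.mk_eq_zero]
  simp only [Submodule.mem_comap] at hy ⊢
  exact h a a.2 hy

/-- Rank additivity for subquotients. -/
theorem rank_sq_add (A B C : Submodule k M) (hBC : B ≤ C) (hCA : C ≤ A) :
    Module.rank k (A ⧸ B.comap A.subtype)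
      = Module.rank k (A ⧸ C.comap A.subtype) + Module.rank k (C ⧸ B.comap C.subtype) := by
  set B' := B.comap A.subtype with hB'
  set C' := C.comap A.subtype with hC'
  have hBC' : B' ≤ C' := Submodule.comap_mono hBC
  set W : Submodule k (A ⧸ B') := C'.map B'.mkQ with hW
  have e1 : ((A ⧸ B') ⧸ W) ≃ₗ[k] (A ⧸ C') := Submodule.quotientQuotientEquivQuotient B' C' hBC'
  set f : (C : Type _) →ₗ[k] (A ⧸ B') := B'.mkQ ∘ₗ Submodule.inclusion hCA with hf
  have hker : LinearMap.ker f = B.comap C.subtype := by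
    ext x
    simp only [hf, LinearMap.mem_ker, LinearMap.comp_apply, Submodule.mkQ_apply,
      Submodule.Quotient.mk_eq_zero, Submodule.mem_comap, hB']
    rfl
  have hrange : LinearMap.range f = W := by
    rw [hf, LinearMap.range_comp, Submodule.range_inclusion, hW]
  have e2 : (C ⧸ B.comap C.subtype) ≃ₗ[k] W := by
    rw [← hker, ← hrange]
    exact f.quotKerEquivRange
  have := Submodule.rank_quotient_add_rank W
  rw [e1.rank_eq, ← e2.rank_eq] at this
  rw [← this, add_comm]
end Helpers
section LieHelpers
variable {k : Type*} [Field k] {L L' : Type*} [LieRing L] [LieAlgebra k L]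
  [LieRing L'] [LieAlgebra k L']

theorem map_bracket_le (f : L →ₗ⁅k⁆ L') (A B : LieIdeal k L) (A' B' : LieIdeal k L')
    (hA : ∀ x ∈ A, f x ∈ A') (hB : ∀ x ∈ B, f x ∈ B') :
    ∀ x ∈ (LieSubmodule.toSubmodule ⁅A, B⁆), f x ∈ LieSubmodule.toSubmodule ⁅A', B'⁆ := by
  intro x hx
  rw [LieSubmodule.lieIdeal_oper_eq_linear_span] at hx
  have hle : Submodule.span k { m | ∃ (y : A) (n : B), ⁅(y : L), (n : L)⁆ = m }
      ≤ Submodule.comap f.toLinearMap (LieSubmodule.toSubmodule ⁅A', B'⁆) := by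
    rw [Submodule.span_le]
    rintro _ ⟨⟨a, ha⟩, ⟨b, hb⟩, rfl⟩
    simp only [Set.mem_setOf_eq, SetLike.mem_coe, Submodule.mem_comap, LieHom.coe_toLinearMap,
      LieHom.map_lie]
    exact LieSubmodule.lie_mem_lie (hA a ha) (hB b hb)
  exact hle hx

theorem map_bracket_top_eq (f : L →ₗ⁅k⁆ L') (hf : Function.Surjective f) :
    Submodule.map f.toLinearMap
        (LieSubmodule.toSubmodule ⁅(⊤ : LieIdeal k L), (⊤ : LieIdeal k L)⁆)
      = LieSubmodule.toSubmodule ⁅(⊤ : LieIdeal k L'), (⊤ : LieIdeal k L')⁆ := by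
  rw [LieSubmodule.lieIdeal_oper_eq_linear_span, LieSubmodule.lieIdeal_oper_eq_linear_span,
    Submodule.map_span]
  congr 1
  ext m
  constructor
  · rintro ⟨_, ⟨⟨a, _⟩, ⟨b, _⟩, rfl⟩, rfl⟩
    exact ⟨⟨f a, trivial⟩, ⟨f b, trivial⟩, (f.map_lie a b).symm⟩
  · rintro ⟨⟨a, _⟩, ⟨b, _⟩, rfl⟩
    obtain ⟨a', rfl⟩ := hf a
    obtain ⟨b', rfl⟩ := hf b
    exact ⟨⁅a', b'⁆, ⟨⟨a', trivial⟩, ⟨b', trivial⟩, rfl⟩, f.map_lie a' b'⟩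

/-- The quotient map by a Lie ideal, as a morphism of Lie algebras. -/
def lieQuotMk (I : LieIdeal k L) : L →ₗ⁅k⁆ L ⧸ I :=
  { I.toSubmodule.mkQ with map_lie' := by intros; rfl }

@[simp] theorem lieQuotMk_apply (I : LieIdeal k L) (x : L) :
    lieQuotMk I x = Submodule.Quotient.mk (p := I.toSubmodule) x := rfl

theorem lieQuotMk_surjective (I : LieIdeal k L) : Function.Surjective (lieQuotMk I) :=
  Submodule.Quotient.mk_surjective _

theorem lieQuotMk_eq_zero (I : LieIdeal k L) (x : L) :
    lieQuotMk I x = 0 ↔ x ∈ I := Submodule.Quotient.mk_eq_zero _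
end LieHelpers

universe u

set_option maxHeartbeats 2000000 in
theorem schur_multiplier_central_ideal (k : Type u) (L : Type u) [Field k] [LieRing L]
    [LieAlgebra k L] [FiniteDimensional k L]
    (I : LieIdeal k L) (hI : I ≤ LieAlgebra.center k L) :
    schurRank k L
      + Module.rank k (LieSubmodule.toSubmodule (⁅(⊤ : LieIdeal k L), (⊤ : LieIdeal k L)⁆ ⊓ I))
    ≤ schurRank k (L ⧸ I) + schurRank k I
      + Module.rank k (TensorProduct k
          ((L ⧸ I) ⧸ LieSubmodule.toSubmodule
            ⁅(⊤ : LieIdeal k (L ⧸ I)), (⊤ : LieIdeal k (L ⧸ I))⁆)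
          (LieSubmodule.toSubmodule I)) := by
  classical
  set π : FreeLieAlgebra k L →ₗ⁅k⁆ L := FreeLieAlgebra.lift k (id : L → L) with hπdef
  set R : LieIdeal k (FreeLieAlgebra k L) := π.ker with hRdef
  set μ : FreeLieAlgebra k L →ₗ⁅k⁆ L ⧸ I := (lieQuotMk I).comp π with hμdef
  set T : LieIdeal k (FreeLieAlgebra k L) := μ.ker with hTdef
  set f2 : Submodule k (FreeLieAlgebra k L) :=
    LieSubmodule.toSubmodule ⁅(⊤ : LieIdeal k (FreeLieAlgebra k L)), (⊤ : LieIdeal k (FreeLieAlgebra k L))⁆ with hf2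
  set fr : Submodule k (FreeLieAlgebra k L) := LieSubmodule.toSubmodule ⁅(⊤ : LieIdeal k (FreeLieAlgebra k L)), R⁆ with hfr
  set ft : Submodule k (FreeLieAlgebra k L) := LieSubmodule.toSubmodule ⁅(⊤ : LieIdeal k (FreeLieAlgebra k L)), T⁆ with hft
  set tt : Submodule k (FreeLieAlgebra k L) := LieSubmodule.toSubmodule ⁅T, T⁆ with htt
  set rS : Submodule k (FreeLieAlgebra k L) := LieSubmodule.toSubmodule R with hrS
  set tS : Submodule k (FreeLieAlgebra k L) := LieSubmodule.toSubmodule T with htS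
  -- basic facts
  have hπsurj : Function.Surjective π := fun x =>
    ⟨FreeLieAlgebra.of k x, by simp [hπdef, FreeLieAlgebra.lift_of_apply]⟩
  have hμsurj : Function.Surjective μ := by
    intro y
    obtain ⟨l, rfl⟩ := lieQuotMk_surjective I y
    obtain ⟨x, rfl⟩ := hπsurj l
    exact ⟨x, by simp [hμdef]⟩
  have hmemT : ∀ x : FreeLieAlgebra k L, x ∈ T ↔ π x ∈ I := by
    intro x
    rw [hTdef, LieHom.mem_ker, hμdef, LieHom.comp_apply, lieQuotMk_eq_zero]
  have hmemR : ∀ x : FreeLieAlgebra k L, x ∈ R ↔ π x = 0 := fun x => LieHom.mem_ker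
  have hRT : R ≤ T := by
    intro x hx
    rw [hmemT]
    rw [hmemR] at hx
    rw [hx]
    exact I.zero_mem
  have hcent : ∀ y : L, y ∈ I → ∀ z : L, ⁅z, y⁆ = 0 := fun y hy z =>
    (LieModule.mem_maxTrivSubmodule k L L y).mp (hI hy) z
  have hftR : (⁅(⊤ : LieIdeal k (FreeLieAlgebra k L)), T⁆ : LieIdeal k (FreeLieAlgebra k L)) ≤ R := by
    rw [LieSubmodule.lieIdeal_oper_eq_span, LieSubmodule.lieSpan_le]
    rintro _ ⟨⟨x, -⟩, ⟨y, hy⟩, rfl⟩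
    have hyI : π y ∈ I := (hmemT y).1 hy
    simp only [SetLike.mem_coe, hmemR, LieHom.map_lie]
    exact hcent _ hyI _
  have hfr_ft : fr ≤ ft := by
    rw [hfr, hft]
    exact (LieSubmodule.toSubmodule_le_toSubmodule _ _).mpr (LieSubmodule.mono_lie (le_refl _) hRT)
  have hft_f2 : ft ≤ f2 := by
    rw [hft, hf2]
    exact (LieSubmodule.toSubmodule_le_toSubmodule _ _).mpr (LieSubmodule.mono_lie (le_refl _) le_top)
  have hft_tS : ft ≤ tS := by
    rw [hft, htS]
    exact (LieSubmodule.toSubmodule_le_toSubmodule _ _).mpr (LieSubmodule.lie_le_right _ _)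
  have htt_ft : tt ≤ ft := by
    rw [htt, hft]
    exact (LieSubmodule.toSubmodule_le_toSubmodule _ _).mpr (LieSubmodule.mono_lie le_top (le_refl _))
  have hfr_rS : fr ≤ rS := by
    rw [hfr, hrS]
    exact (LieSubmodule.toSubmodule_le_toSubmodule _ _).mpr (LieSubmodule.lie_le_right _ _)
  have hft_rS : ft ≤ rS := by
    rw [hft, hrS]
    exact (LieSubmodule.toSubmodule_le_toSubmodule _ _).mpr hftR
  have hrS_tS : rS ≤ tS := by
    rw [hrS, htS]
    exact (LieSubmodule.toSubmodule_le_toSubmodule _ _).mpr hRT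
  -- Step A
  set L2I : Submodule k L :=
    LieSubmodule.toSubmodule (⁅(⊤ : LieIdeal k L), (⊤ : LieIdeal k L)⁆ ⊓ I) with hL2I
  set X : Submodule k (FreeLieAlgebra k L) := tS ⊓ f2 with hX
  set Arf : Submodule k (FreeLieAlgebra k L) :=
    LieSubmodule.toSubmodule
      (R ⊓ ⁅(⊤ : LieIdeal k (FreeLieAlgebra k L)), (⊤ : LieIdeal k (FreeLieAlgebra k L))⁆)
    with hArf
  have hArf_eq : Arf = rS ⊓ f2 := by
    rw [hArf, LieSubmodule.inf_toSubmodule, hrS, hf2]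
  have hSRL : schurRank k L = Module.rank k (Arf ⧸ fr.comap Arf.subtype) := rfl
  have hπf2 : ∀ x ∈ f2, π x ∈
      (LieSubmodule.toSubmodule (⁅(⊤ : LieIdeal k L), (⊤ : LieIdeal k L)⁆)) := by
    intro x hx
    exact map_bracket_le π ⊤ ⊤ ⊤ ⊤ (fun _ _ => LieSubmodule.mem_top _)
      (fun _ _ => LieSubmodule.mem_top _) x (by rwa [hf2] at hx)
  have hψ0mem : ∀ x : X, π (x : FreeLieAlgebra k L) ∈ L2I := by
    intro x
    obtain ⟨hxt, hxf⟩ := Submodule.mem_inf.mp x.2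
    rw [hL2I, LieSubmodule.inf_toSubmodule]
    refine Submodule.mem_inf.mpr ⟨hπf2 _ hxf, ?_⟩
    rw [LieSubmodule.mem_toSubmodule]
    exact (hmemT _).1 (by rwa [htS, LieSubmodule.mem_toSubmodule] at hxt)
  set ψ0 : X →ₗ[k] L2I :=
    LinearMap.codRestrict L2I (π.toLinearMap ∘ₗ X.subtype) hψ0mem with hψ0
  have hfrker : fr.comap X.subtype ≤ LinearMap.ker ψ0 := by
    intro x hx
    rw [Submodule.mem_comap] at hx
    have hxr : (x : FreeLieAlgebra k L) ∈ R := by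
      have := hfr_rS hx
      rwa [hrS, LieSubmodule.mem_toSubmodule] at this
    rw [LinearMap.mem_ker]
    exact Subtype.ext ((hmemR _).1 hxr)
  set ψ : (X ⧸ fr.comap X.subtype) →ₗ[k] L2I := Submodule.liftQ _ ψ0 hfrker with hψ
  have hψsurj : Function.Surjective ψ := by
    intro y
    have hy : (y : L) ∈ LieSubmodule.toSubmodule
        (⁅(⊤ : LieIdeal k L), (⊤ : LieIdeal k L)⁆ ⊓ I) := y.2
    rw [LieSubmodule.inf_toSubmodule] at hy
    obtain ⟨hy2, hyI⟩ := Submodule.mem_inf.mp hy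
    rw [← map_bracket_top_eq π hπsurj] at hy2
    obtain ⟨x, hxf2, hxeq⟩ := Submodule.mem_map.mp hy2
    have hxT : x ∈ tS := by
      rw [htS, LieSubmodule.mem_toSubmodule, hmemT]
      have hxeq' : π x = (y : L) := hxeq
      rw [hxeq']
      rwa [LieSubmodule.mem_toSubmodule] at hyI
    refine ⟨Submodule.Quotient.mk ⟨x, Submodule.mem_inf.mpr ⟨hxT, by rwa [hf2]⟩⟩, ?_⟩
    rw [hψ, Submodule.liftQ_apply]
    exact Subtype.ext hxeq
  set Z := LinearMap.ker ψ with hZ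
  have e1 : ((X ⧸ fr.comap X.subtype) ⧸ Z) ≃ₗ[k] L2I := ψ.quotKerEquivOfSurjective hψsurj
  have hA0 : ∀ x ∈ Arf, LinearMap.id (R := k) x ∈ X := by
    intro x hx
    rw [hArf_eq] at hx
    obtain ⟨h1, h2⟩ := Submodule.mem_inf.mp hx
    exact Submodule.mem_inf.mpr ⟨hrS_tS h1, h2⟩
  have hB0 : ∀ x ∈ fr, LinearMap.id (R := k) x ∈ fr := fun _ h => h
  set m0 := sqMap LinearMap.id Arf fr X fr hA0 hB0 with hm0
  have hm0Z : ∀ w, m0 w ∈ Z := by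
    intro w
    obtain ⟨a, rfl⟩ := Submodule.Quotient.mk_surjective _ w
    rw [hm0, sqMap_mk, hZ, LinearMap.mem_ker, hψ, Submodule.liftQ_apply]
    have har : (a : FreeLieAlgebra k L) ∈ rS := by
      have h2 : (a : FreeLieAlgebra k L) ∈ rS ⊓ f2 := by rw [← hArf_eq]; exact a.2
      exact h2.1
    refine Subtype.ext ?_
    have : π ((LinearMap.id (R := k)).restrict hA0 a : FreeLieAlgebra k L) = 0 := by
      apply (hmemR _).1
      rw [LinearMap.restrict_apply]
      rwa [hrS, LieSubmodule.mem_toSubmodule] at har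
    exact this
  set m1 := LinearMap.codRestrict Z m0 hm0Z with hm1
  have hm1inj : Function.Injective m1 := by
    intro a b hab
    exact sqMap_injective _ _ _ _ _ _ _ (fun _ _ h => h) (congrArg Subtype.val hab)
  have hstepA1 : schurRank k L ≤ Module.rank k Z := by
    rw [hSRL]
    exact LinearMap.rank_le_of_injective m1 hm1inj
  have hstepA2 : Module.rank k L2I
      = Module.rank k ((X ⧸ fr.comap X.subtype) ⧸ Z) := e1.symm.rank_eq
  have hstepA : schurRank k L + Module.rank k L2I
      ≤ Module.rank k (X ⧸ fr.comap X.subtype) := by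
    calc schurRank k L + Module.rank k L2I
        ≤ Module.rank k Z + Module.rank k ((X ⧸ fr.comap X.subtype) ⧸ Z) :=
          add_le_add hstepA1 (le_of_eq hstepA2)
      _ = Module.rank k (X ⧸ fr.comap X.subtype) := by
          rw [add_comm]; exact Submodule.rank_quotient_add_rank Z
  -- Step B
  have hft_X : ft ≤ X := le_inf hft_tS hft_f2
  have hstepB : Module.rank k (X ⧸ fr.comap X.subtype)
      = Module.rank k (X ⧸ ft.comap X.subtype) + Module.rank k (ft ⧸ fr.comap ft.subtype) :=
    rank_sq_add X fr ft hfr_ft hft_X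
  -- Step C
  have hmemTmu : ∀ x : FreeLieAlgebra k L, x ∈ T ↔ μ x = 0 := fun x => LieHom.mem_ker
  set π' : FreeLieAlgebra k (L ⧸ I) →ₗ⁅k⁆ L ⧸ I :=
    FreeLieAlgebra.lift k (id : L ⧸ I → L ⧸ I) with hπ'def
  set R' : LieIdeal k (FreeLieAlgebra k (L ⧸ I)) := π'.ker with hR'def
  set g2 : Submodule k (FreeLieAlgebra k (L ⧸ I)) :=
    LieSubmodule.toSubmodule ⁅(⊤ : LieIdeal k (FreeLieAlgebra k (L ⧸ I))),
      (⊤ : LieIdeal k (FreeLieAlgebra k (L ⧸ I)))⁆ with hg2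
  set gr' : Submodule k (FreeLieAlgebra k (L ⧸ I)) :=
    LieSubmodule.toSubmodule ⁅(⊤ : LieIdeal k (FreeLieAlgebra k (L ⧸ I))), R'⁆ with hgr'
  set A' : Submodule k (FreeLieAlgebra k (L ⧸ I)) :=
    LieSubmodule.toSubmodule (R' ⊓ ⁅(⊤ : LieIdeal k (FreeLieAlgebra k (L ⧸ I))),
      (⊤ : LieIdeal k (FreeLieAlgebra k (L ⧸ I)))⁆) with hA'
  have hSR' : schurRank k (L ⧸ I) = Module.rank k (A' ⧸ gr'.comap A'.subtype) := rfl
  set α : FreeLieAlgebra k (L ⧸ I) →ₗ⁅k⁆ FreeLieAlgebra k L :=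
    FreeLieAlgebra.lift k (fun c : L ⧸ I => FreeLieAlgebra.of k (Quotient.out c)) with hα
  set β : FreeLieAlgebra k L →ₗ⁅k⁆ FreeLieAlgebra k (L ⧸ I) :=
    FreeLieAlgebra.lift k (fun x : L => FreeLieAlgebra.of k ((lieQuotMk I) x)) with hβ
  have hμα : ∀ g, μ (α g) = π' g := by
    suffices h : μ.comp α = π' by
      intro g
      have := DFunLike.congr_fun h g
      simpa using this
    apply FreeLieAlgebra.hom_ext
    intro c
    rw [LieHom.comp_apply, hα, FreeLieAlgebra.lift_of_apply, hπ'def,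
      FreeLieAlgebra.lift_of_apply, hμdef, LieHom.comp_apply, hπdef,
      FreeLieAlgebra.lift_of_apply]
    show lieQuotMk I (Quotient.out c) = c
    rw [lieQuotMk_apply, ← Submodule.Quotient.mk''_eq_mk]
    exact Quotient.out_eq' c
  have hπ'β : ∀ x, π' (β x) = μ x := by
    suffices h : π'.comp β = μ by
      intro x
      have := DFunLike.congr_fun h x
      simpa using this
    apply FreeLieAlgebra.hom_ext
    intro x
    rw [LieHom.comp_apply, hβ, FreeLieAlgebra.lift_of_apply, hπ'def,
      FreeLieAlgebra.lift_of_apply, hμdef, LieHom.comp_apply, hπdef,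
      FreeLieAlgebra.lift_of_apply]
    rfl
  have hαT : ∀ x ∈ R', α x ∈ T := by
    intro x hx
    rw [hmemTmu, hμα]
    exact LieHom.mem_ker.mp hx
  have hA'X : ∀ x ∈ A', α.toLinearMap x ∈ X := by
    intro x hx
    rw [hA', LieSubmodule.inf_toSubmodule] at hx
    obtain ⟨h1, h2⟩ := Submodule.mem_inf.mp hx
    refine Submodule.mem_inf.mpr ⟨?_, ?_⟩
    · rw [htS, LieSubmodule.mem_toSubmodule]
      exact hαT x ((LieSubmodule.mem_toSubmodule _).mp h1)
    · rw [hf2]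
      exact map_bracket_le α ⊤ ⊤ ⊤ ⊤ (fun _ _ => LieSubmodule.mem_top _)
        (fun _ _ => LieSubmodule.mem_top _) x h2
  have hB'ft : ∀ x ∈ gr', α.toLinearMap x ∈ ft := by
    intro x hx
    rw [hft]
    exact map_bracket_le α ⊤ R' ⊤ T (fun _ _ => LieSubmodule.mem_top _) hαT x
      (by rwa [hgr'] at hx)
  have hd : ∀ y, α (β y) - y ∈ T := by
    intro y
    rw [hmemTmu, map_sub, hμα, hπ'β, sub_self]
  have hkey : ∀ x ∈ f2, α (β x) - x ∈ ft := by
    have hsub : f2 ≤ Submodule.comap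
        (α.toLinearMap ∘ₗ β.toLinearMap - LinearMap.id) ft := by
      rw [hf2, LieSubmodule.lieIdeal_oper_eq_linear_span, Submodule.span_le]
      rintro _ ⟨⟨a, -⟩, ⟨b, -⟩, rfl⟩
      simp only [SetLike.mem_coe, Submodule.mem_comap, LinearMap.sub_apply,
        LinearMap.comp_apply, LinearMap.id_apply, LieHom.coe_toLinearMap]
      have hab : α (β ⁅a, b⁆) = ⁅α (β a), α (β b)⁆ := by
        rw [LieHom.map_lie, LieHom.map_lie]
      rw [hab]
      have hid : ⁅α (β a), α (β b)⁆ - ⁅a, b⁆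
          = ⁅α (β a) - a, α (β b)⁆ + ⁅a, α (β b) - b⁆ := by
        rw [sub_lie, lie_sub]; abel
      rw [hid]
      apply Submodule.add_mem
      · have h1 : ⁅α (β a) - a, α (β b)⁆
            ∈ ⁅T, (⊤ : LieIdeal k (FreeLieAlgebra k L))⁆ :=
          LieSubmodule.lie_mem_lie (hd a) (LieSubmodule.mem_top _)
        rw [LieSubmodule.lie_comm] at h1
        rw [hft]
        exact (LieSubmodule.mem_toSubmodule _).mpr h1
      · have h2 : ⁅a, α (β b) - b⁆ ∈ ⁅(⊤ : LieIdeal k (FreeLieAlgebra k L)), T⁆ :=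
          LieSubmodule.lie_mem_lie (LieSubmodule.mem_top _) (hd b)
        rw [hft]
        exact (LieSubmodule.mem_toSubmodule _).mpr h2
    intro x hx
    have := hsub hx
    simpa using this
  set m2 := sqMap α.toLinearMap A' gr' X ft hA'X hB'ft with hm2
  have hm2surj : Function.Surjective m2 := by
    apply sqMap_surjective
    intro a' ha'
    obtain ⟨ha't, ha'f⟩ := Submodule.mem_inf.mp ha'
    refine ⟨β a', ?_, by simpa using hkey a' ha'f⟩
    rw [hA', LieSubmodule.inf_toSubmodule]
    refine Submodule.mem_inf.mpr ⟨?_, ?_⟩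
    · rw [LieSubmodule.mem_toSubmodule, hR'def, LieHom.mem_ker, hπ'β]
      apply (hmemTmu a').mp
      rwa [htS, LieSubmodule.mem_toSubmodule] at ha't
    · exact map_bracket_le β ⊤ ⊤ ⊤ ⊤ (fun _ _ => LieSubmodule.mem_top _)
        (fun _ _ => LieSubmodule.mem_top _) a' (by rwa [hf2] at ha'f)
  have hstepC : Module.rank k (X ⧸ ft.comap X.subtype) ≤ schurRank k (L ⧸ I) := by
    rw [hSR']
    exact LinearMap.rank_le_of_surjective m2 hm2surj
  -- Step D split
  set uS : Submodule k (FreeLieAlgebra k L) := tt ⊔ fr with huS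
  have hfr_u : fr ≤ uS := le_sup_right
  have hu_ft : uS ≤ ft := sup_le htt_ft hfr_ft
  have hstepD : Module.rank k (ft ⧸ fr.comap ft.subtype)
      = Module.rank k (ft ⧸ uS.comap ft.subtype)
        + Module.rank k (uS ⧸ fr.comap uS.subtype) :=
    rank_sq_add ft fr uS hfr_u hu_ft
  -- Step D1
  set πG : FreeLieAlgebra k ↥I →ₗ⁅k⁆ ↥I := FreeLieAlgebra.lift k (id : ↥I → ↥I) with hπG
  set S : LieIdeal k (FreeLieAlgebra k ↥I) := πG.ker with hSdef
  set gIS : Submodule k (FreeLieAlgebra k ↥I) :=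
    LieSubmodule.toSubmodule ⁅(⊤ : LieIdeal k (FreeLieAlgebra k ↥I)), S⁆ with hgIS
  set AG : Submodule k (FreeLieAlgebra k ↥I) :=
    LieSubmodule.toSubmodule (S ⊓ ⁅(⊤ : LieIdeal k (FreeLieAlgebra k ↥I)),
      (⊤ : LieIdeal k (FreeLieAlgebra k ↥I))⁆) with hAG
  have hSRI : schurRank k ↥I = Module.rank k (AG ⧸ gIS.comap AG.subtype) := rfl
  set θ : FreeLieAlgebra k ↥I →ₗ⁅k⁆ FreeLieAlgebra k L :=
    FreeLieAlgebra.lift k (fun x : ↥I => FreeLieAlgebra.of k (x : L)) with hθdef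
  have hπθ : ∀ g, π (θ g) = ((πG g : ↥I) : L) := by
    suffices h : π.comp θ = (LieIdeal.incl I).comp πG by
      intro g
      have := DFunLike.congr_fun h g
      simpa using this
    apply FreeLieAlgebra.hom_ext
    intro x
    rw [LieHom.comp_apply, LieHom.comp_apply, hθdef, FreeLieAlgebra.lift_of_apply, hπdef,
      FreeLieAlgebra.lift_of_apply, hπG, FreeLieAlgebra.lift_of_apply]
    rfl
  have hθT : ∀ g, θ g ∈ T := fun g => (hmemT _).mpr (by rw [hπθ]; exact (πG g).2)
  have hθS : ∀ x ∈ S, θ x ∈ R := by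
    intro x hx
    rw [hmemR, hπθ]
    rw [hSdef, LieHom.mem_ker] at hx
    rw [hx]
    rfl
  have hAGu : ∀ x ∈ AG, θ.toLinearMap x ∈ uS := by
    intro x hx
    rw [hAG, LieSubmodule.inf_toSubmodule] at hx
    have h2 := (Submodule.mem_inf.mp hx).2
    have hxtt : θ.toLinearMap x ∈ tt := by
      rw [htt]
      exact map_bracket_le θ ⊤ ⊤ T T (fun y _ => hθT y) (fun y _ => hθT y) x h2
    exact Submodule.mem_sup_left hxtt
  have hBGfr : ∀ x ∈ gIS, θ.toLinearMap x ∈ fr := by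
    intro x hx
    have h1 : θ x ∈ LieSubmodule.toSubmodule ⁅T, R⁆ :=
      map_bracket_le θ ⊤ S T R (fun y _ => hθT y) hθS x (by rwa [hgIS] at hx)
    have hle : LieSubmodule.toSubmodule ⁅T, R⁆ ≤ fr := by
      rw [hfr]
      exact (LieSubmodule.toSubmodule_le_toSubmodule _ _).mpr
        (LieSubmodule.mono_lie le_top (le_refl _))
    exact hle h1
  set m3 := sqMap θ.toLinearMap AG gIS uS fr hAGu hBGfr with hm3
  have htt_cover : tt ≤ (Submodule.map θ.toLinearMap AG) ⊔ fr := by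
    rw [htt, LieSubmodule.lieIdeal_oper_eq_linear_span, Submodule.span_le]
    rintro _ ⟨⟨t1, ht1⟩, ⟨t2, ht2⟩, rfl⟩
    set x1 : ↥I := ⟨π t1, (hmemT t1).1 ht1⟩ with hx1
    set x2 : ↥I := ⟨π t2, (hmemT t2).1 ht2⟩ with hx2
    set g : FreeLieAlgebra k ↥I := ⁅FreeLieAlgebra.of k x1, FreeLieAlgebra.of k x2⁆ with hg
    have hgS : g ∈ S := by
      rw [hSdef, LieHom.mem_ker, hg, LieHom.map_lie, hπG, FreeLieAlgebra.lift_of_apply,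
        FreeLieAlgebra.lift_of_apply]
      refine Subtype.ext ?_
      show ⁅(x1 : L), (x2 : L)⁆ = (0 : L)
      exact hcent _ x2.2 _
    have hgAG : g ∈ AG := by
      rw [hAG, LieSubmodule.inf_toSubmodule]
      refine Submodule.mem_inf.mpr ⟨(LieSubmodule.mem_toSubmodule _).mpr hgS, ?_⟩
      refine (LieSubmodule.mem_toSubmodule _).mpr ?_
      rw [hg]
      exact LieSubmodule.lie_mem_lie (LieSubmodule.mem_top _) (LieSubmodule.mem_top _)
    have hθg : θ.toLinearMap g = ⁅FreeLieAlgebra.of k (π t1), FreeLieAlgebra.of k (π t2)⁆ := by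
      show θ g = _
      rw [hg, LieHom.map_lie, hθdef, FreeLieAlgebra.lift_of_apply, FreeLieAlgebra.lift_of_apply]
    have hofT : ∀ t : FreeLieAlgebra k L, t ∈ T → FreeLieAlgebra.of k (π t) ∈ T := by
      intro t ht
      rw [hmemT, hπdef, FreeLieAlgebra.lift_of_apply]
      exact (hmemT t).1 ht
    have hofR : ∀ t : FreeLieAlgebra k L, t - FreeLieAlgebra.of k (π t) ∈ R := by
      intro t
      rw [hmemR, map_sub]
      have : π (FreeLieAlgebra.of k (π t)) = π t := by
        rw [hπdef, FreeLieAlgebra.lift_of_apply]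
        rfl
      rw [this, sub_self]
    have hdiff : ⁅t1, t2⁆ - θ.toLinearMap g ∈ fr := by
      rw [hθg]
      have hident : ⁅t1, t2⁆ - ⁅FreeLieAlgebra.of k (π t1), FreeLieAlgebra.of k (π t2)⁆
          = ⁅t1 - FreeLieAlgebra.of k (π t1), t2⁆
            + ⁅FreeLieAlgebra.of k (π t1), t2 - FreeLieAlgebra.of k (π t2)⁆ := by
        rw [sub_lie, lie_sub]
        abel
      rw [hident]
      apply Submodule.add_mem
      · have h1 : ⁅t1 - FreeLieAlgebra.of k (π t1), t2⁆
            ∈ ⁅R, (⊤ : LieIdeal k (FreeLieAlgebra k L))⁆ :=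
          LieSubmodule.lie_mem_lie (hofR t1) (LieSubmodule.mem_top _)
        rw [LieSubmodule.lie_comm] at h1
        rw [hfr]
        exact (LieSubmodule.mem_toSubmodule _).mpr h1
      · have h2 : ⁅FreeLieAlgebra.of k (π t1), t2 - FreeLieAlgebra.of k (π t2)⁆
            ∈ ⁅(⊤ : LieIdeal k (FreeLieAlgebra k L)), R⁆ :=
          LieSubmodule.lie_mem_lie (LieSubmodule.mem_top _) (hofR t2)
        rw [hfr]
        exact (LieSubmodule.mem_toSubmodule _).mpr h2
    refine Submodule.mem_sup.mpr ⟨θ.toLinearMap g, Submodule.mem_map.mpr ⟨g, hgAG, rfl⟩,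
      ⁅t1, t2⁆ - θ.toLinearMap g, hdiff, by abel⟩
  have hm3surj : Function.Surjective m3 := by
    apply sqMap_surjective
    intro a' ha'
    have ha'' : a' ∈ tt ⊔ fr := by rwa [huS] at ha'
    obtain ⟨x, hx, y, hy, rfl⟩ := Submodule.mem_sup.mp ha''
    obtain ⟨w, hw, z, hz, hxz⟩ := Submodule.mem_sup.mp (htt_cover hx)
    obtain ⟨a, haAG, rfl⟩ := Submodule.mem_map.mp hw
    refine ⟨a, haAG, ?_⟩
    have heq : θ.toLinearMap a - (x + y) = -z - y := by rw [← hxz]; abel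
    rw [heq]
    exact Submodule.sub_mem _ (Submodule.neg_mem _ hz) hy
  have hstepD1 : Module.rank k (uS ⧸ fr.comap uS.subtype) ≤ schurRank k ↥I := by
    rw [hSRI]
    exact LinearMap.rank_le_of_surjective m3 hm3surj
  -- Step D2
  have hbmem : ∀ (x : FreeLieAlgebra k L) (y : ↥tS), ⁅x, (y : FreeLieAlgebra k L)⁆ ∈ ft := by
    intro x y
    rw [hft]
    exact (LieSubmodule.mem_toSubmodule _).mpr
      (LieSubmodule.lie_mem_lie (LieSubmodule.mem_top _)
        ((LieSubmodule.mem_toSubmodule T).mp y.2))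
  set b0 : FreeLieAlgebra k L →ₗ[k] ↥tS →ₗ[k] (ft ⧸ uS.comap ft.subtype) :=
    LinearMap.mk₂ k
      (fun x y => Submodule.Quotient.mk ⟨⁅x, (y : FreeLieAlgebra k L)⁆, hbmem x y⟩)
      (fun x x' y => by
        rw [← Submodule.Quotient.mk_add]
        exact congrArg _ (Subtype.ext (add_lie x x' (y : FreeLieAlgebra k L))))
      (fun c x y => by
        rw [← Submodule.Quotient.mk_smul]
        exact congrArg _ (Subtype.ext (smul_lie c x (y : FreeLieAlgebra k L))))
      (fun x y y' => by
        rw [← Submodule.Quotient.mk_add]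
        exact congrArg _ (Subtype.ext (lie_add x (y : FreeLieAlgebra k L) (y' : FreeLieAlgebra k L))))
      (fun c x y => by
        rw [← Submodule.Quotient.mk_smul]
        exact congrArg _ (Subtype.ext (lie_smul c x (y : FreeLieAlgebra k L))))
    with hb0
  have hb0apply : ∀ (x : FreeLieAlgebra k L) (y : ↥tS),
      b0 x y = Submodule.Quotient.mk ⟨⁅x, (y : FreeLieAlgebra k L)⁆, hbmem x y⟩ := by
    intro x y
    rw [hb0]
    rfl
  have hkerV : tS ⊔ f2 ≤ LinearMap.ker b0 := by
    apply sup_le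
    · intro x hx
      rw [LinearMap.mem_ker]
      apply LinearMap.ext
      intro y
      rw [hb0apply, LinearMap.zero_apply, Submodule.Quotient.mk_eq_zero, Submodule.mem_comap]
      apply Submodule.mem_sup_left
      rw [htt]
      exact (LieSubmodule.mem_toSubmodule _).mpr
        (LieSubmodule.lie_mem_lie ((LieSubmodule.mem_toSubmodule T).mp hx)
          ((LieSubmodule.mem_toSubmodule T).mp y.2))
    · rw [hf2, LieSubmodule.lieIdeal_oper_eq_linear_span, Submodule.span_le]
      rintro _ ⟨⟨a, -⟩, ⟨b, -⟩, rfl⟩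
      simp only [SetLike.mem_coe, LinearMap.mem_ker]
      apply LinearMap.ext
      intro y
      rw [hb0apply, LinearMap.zero_apply, Submodule.Quotient.mk_eq_zero, Submodule.mem_comap]
      have hab : ⁅⁅a, b⁆, (y : FreeLieAlgebra k L)⁆
          = ⁅a, ⁅b, (y : FreeLieAlgebra k L)⁆⁆ - ⁅b, ⁅a, (y : FreeLieAlgebra k L)⁆⁆ :=
        lie_lie a b (y : FreeLieAlgebra k L)
      show ⁅⁅a, b⁆, (y : FreeLieAlgebra k L)⁆ ∈ uS
      rw [hab]
      have hmemfr : ∀ w : FreeLieAlgebra k L, ∀ v ∈ R, ⁅w, v⁆ ∈ uS := by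
        intro w v hv
        apply Submodule.mem_sup_right
        rw [hfr]
        exact (LieSubmodule.mem_toSubmodule _).mpr
          (LieSubmodule.lie_mem_lie (LieSubmodule.mem_top _) hv)
      have hbyR : ⁅b, (y : FreeLieAlgebra k L)⁆ ∈ R := by
        apply hftR
        exact LieSubmodule.lie_mem_lie (LieSubmodule.mem_top _)
          ((LieSubmodule.mem_toSubmodule T).mp y.2)
      have hayR : ⁅a, (y : FreeLieAlgebra k L)⁆ ∈ R := by
        apply hftR
        exact LieSubmodule.lie_mem_lie (LieSubmodule.mem_top _)
          ((LieSubmodule.mem_toSubmodule T).mp y.2)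
      exact Submodule.sub_mem _ (hmemfr a _ hbyR) (hmemfr b _ hayR)
  set bV : ((FreeLieAlgebra k L) ⧸ (tS ⊔ f2)) →ₗ[k] (↥tS →ₗ[k] (ft ⧸ uS.comap ft.subtype)) :=
    Submodule.liftQ _ b0 hkerV with hbV
  have hkerW : rS.comap tS.subtype ≤ LinearMap.ker bV.flip := by
    intro y hy
    rw [Submodule.mem_comap] at hy
    have hyR : (y : FreeLieAlgebra k L) ∈ R := (LieSubmodule.mem_toSubmodule R).mp hy
    rw [LinearMap.mem_ker]
    apply LinearMap.ext
    intro v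
    obtain ⟨x, rfl⟩ := Submodule.Quotient.mk_surjective _ v
    show bV (Submodule.Quotient.mk x) y = 0
    rw [hbV, Submodule.liftQ_apply, hb0apply, Submodule.Quotient.mk_eq_zero,
      Submodule.mem_comap]
    apply Submodule.mem_sup_right
    rw [hfr]
    exact (LieSubmodule.mem_toSubmodule _).mpr
      (LieSubmodule.lie_mem_lie (LieSubmodule.mem_top _) hyR)
  set bW : (↥tS ⧸ rS.comap tS.subtype) →ₗ[k]
      (((FreeLieAlgebra k L) ⧸ (tS ⊔ f2)) →ₗ[k] (ft ⧸ uS.comap ft.subtype)) :=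
    Submodule.liftQ _ bV.flip hkerW with hbW
  set m4 : TensorProduct k ((FreeLieAlgebra k L) ⧸ (tS ⊔ f2)) (↥tS ⧸ rS.comap tS.subtype)
      →ₗ[k] (ft ⧸ uS.comap ft.subtype) := TensorProduct.lift bW.flip with hm4
  have hm4compute : ∀ (a : FreeLieAlgebra k L) (y : ↥tS),
      m4 (Submodule.Quotient.mk a ⊗ₜ[k] Submodule.Quotient.mk y)
        = Submodule.Quotient.mk ⟨⁅a, (y : FreeLieAlgebra k L)⁆, hbmem a y⟩ := by
    intro a y
    rw [hm4, TensorProduct.lift.tmul, LinearMap.flip_apply, hbW, Submodule.liftQ_apply,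
      LinearMap.flip_apply, hbV, Submodule.liftQ_apply, hb0apply]
  have hm4surj : Function.Surjective m4 := by
    have hN : ft ≤ Submodule.map ft.subtype
        (Submodule.comap (uS.comap ft.subtype).mkQ (LinearMap.range m4)) := by
      conv_lhs => rw [hft, LieSubmodule.lieIdeal_oper_eq_linear_span]
      rw [Submodule.span_le]
      rintro _ ⟨⟨a, -⟩, ⟨b, hb⟩, rfl⟩
      have hbts : b ∈ tS := (LieSubmodule.mem_toSubmodule T).mpr hb
      refine Submodule.mem_map.mpr ⟨⟨⁅a, b⁆, hbmem a ⟨b, hbts⟩⟩, ?_, rfl⟩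
      rw [Submodule.mem_comap]
      exact ⟨Submodule.Quotient.mk a ⊗ₜ[k] Submodule.Quotient.mk ⟨b, hbts⟩,
        by rw [hm4compute]; rfl⟩
    intro q
    obtain ⟨w, rfl⟩ := Submodule.Quotient.mk_surjective _ q
    obtain ⟨w'', hw'', heq⟩ := Submodule.mem_map.mp (hN w.2)
    obtain ⟨t, ht⟩ := Submodule.mem_comap.mp hw''
    refine ⟨t, ?_⟩
    rw [ht]
    have : w'' = w := Subtype.ext heq
    rw [this]
    rfl
  -- the two equivalences
  set L2q : Submodule k (L ⧸ I) := LieSubmodule.toSubmodule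
    ⁅(⊤ : LieIdeal k (L ⧸ I)), (⊤ : LieIdeal k (L ⧸ I))⁆ with hL2q
  set c1 : FreeLieAlgebra k L →ₗ[k] ((L ⧸ I) ⧸ L2q) := L2q.mkQ ∘ₗ μ.toLinearMap with hc1
  have hc1surj : Function.Surjective c1 := by
    intro z
    obtain ⟨w, rfl⟩ := Submodule.Quotient.mk_surjective _ z
    obtain ⟨x, rfl⟩ := hμsurj w
    exact ⟨x, rfl⟩
  have hkerc1 : LinearMap.ker c1 = tS ⊔ f2 := by
    ext x
    rw [LinearMap.mem_ker, hc1, LinearMap.comp_apply, Submodule.mkQ_apply,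
      Submodule.Quotient.mk_eq_zero]
    constructor
    · intro hx
      rw [hL2q, ← map_bracket_top_eq μ hμsurj] at hx
      obtain ⟨x', hx', heq⟩ := Submodule.mem_map.mp hx
      have heq' : μ x' = μ x := heq
      have hxt : x - x' ∈ tS := by
        rw [htS, LieSubmodule.mem_toSubmodule, hmemTmu, map_sub, heq', sub_self]
      have hxf : x' ∈ f2 := by rwa [hf2]
      have hxx : x = (x - x') + x' := by abel
      rw [hxx]
      exact Submodule.add_mem _ (Submodule.mem_sup_left hxt) (Submodule.mem_sup_right hxf)
    · intro hx
      obtain ⟨s, hs, t, htm, rfl⟩ := Submodule.mem_sup.mp hx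
      have h1 : μ s = 0 := (hmemTmu s).mp ((LieSubmodule.mem_toSubmodule T).mp hs)
      have h2 : μ t ∈ L2q := by
        rw [hL2q]
        exact map_bracket_le μ ⊤ ⊤ ⊤ ⊤ (fun _ _ => LieSubmodule.mem_top _)
          (fun _ _ => LieSubmodule.mem_top _) t (by rwa [hf2] at htm)
      have h3 : μ (s + t) = μ t := by rw [map_add, h1, zero_add]
      show μ (s + t) ∈ L2q
      rw [h3]
      exact h2
  have eV : ((FreeLieAlgebra k L) ⧸ (tS ⊔ f2)) ≃ₗ[k] ((L ⧸ I) ⧸ L2q) :=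
    (Submodule.quotEquivOfEq _ _ hkerc1.symm).trans (c1.quotKerEquivOfSurjective hc1surj)
  set c2 : ↥tS →ₗ[k] ↥(LieSubmodule.toSubmodule I) :=
    LinearMap.codRestrict _ (π.toLinearMap ∘ₗ tS.subtype)
      (fun y => (LieSubmodule.mem_toSubmodule I).mpr
        ((hmemT _).1 ((LieSubmodule.mem_toSubmodule T).mp y.2))) with hc2
  have hc2surj : Function.Surjective c2 := by
    intro y
    have hyI : (y : L) ∈ I := (LieSubmodule.mem_toSubmodule I).mp y.2
    have h1 : FreeLieAlgebra.of k (y : L) ∈ tS := by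
      rw [htS, LieSubmodule.mem_toSubmodule, hmemT, hπdef, FreeLieAlgebra.lift_of_apply]
      exact hyI
    refine ⟨⟨_, h1⟩, Subtype.ext ?_⟩
    show π (FreeLieAlgebra.of k (y : L)) = (y : L)
    rw [hπdef, FreeLieAlgebra.lift_of_apply]
    rfl
  have hkerc2 : LinearMap.ker c2 = rS.comap tS.subtype := by
    ext y
    rw [LinearMap.mem_ker, Submodule.mem_comap]
    constructor
    · intro h
      have h0 : π (y : FreeLieAlgebra k L) = 0 := congrArg Subtype.val h
      rw [hrS, LieSubmodule.mem_toSubmodule, hmemR]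
      exact h0
    · intro h
      apply Subtype.ext
      show π (y : FreeLieAlgebra k L) = 0
      exact (hmemR _).1 ((LieSubmodule.mem_toSubmodule R).mp h)
  have eW : (↥tS ⧸ rS.comap tS.subtype) ≃ₗ[k] ↥(LieSubmodule.toSubmodule I) :=
    (Submodule.quotEquivOfEq _ _ hkerc2.symm).trans (c2.quotKerEquivOfSurjective hc2surj)
  have eT := TensorProduct.congr eV eW
  have hstepD2 : Module.rank k (ft ⧸ uS.comap ft.subtype)
      ≤ Module.rank k (TensorProduct k ((L ⧸ I) ⧸ L2q) ↥(LieSubmodule.toSubmodule I)) := by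
    calc Module.rank k (ft ⧸ uS.comap ft.subtype)
        ≤ Module.rank k (TensorProduct k ((FreeLieAlgebra k L) ⧸ (tS ⊔ f2))
            (↥tS ⧸ rS.comap tS.subtype)) := LinearMap.rank_le_of_surjective m4 hm4surj
      _ = Module.rank k (TensorProduct k ((L ⧸ I) ⧸ L2q) ↥(LieSubmodule.toSubmodule I)) :=
          eT.rank_eq
  -- final assembly
  calc schurRank k L + Module.rank k L2I
      ≤ Module.rank k (X ⧸ fr.comap X.subtype) := hstepA
    _ = Module.rank k (X ⧸ ft.comap X.subtype)
        + Module.rank k (ft ⧸ fr.comap ft.subtype) := hstepB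
    _ = Module.rank k (X ⧸ ft.comap X.subtype)
        + (Module.rank k (ft ⧸ uS.comap ft.subtype)
          + Module.rank k (uS ⧸ fr.comap uS.subtype)) := by rw [hstepD]
    _ ≤ schurRank k (L ⧸ I)
        + (Module.rank k (TensorProduct k ((L ⧸ I) ⧸ L2q) ↥(LieSubmodule.toSubmodule I))
          + schurRank k ↥I) := add_le_add hstepC (add_le_add hstepD2 hstepD1)
    _ = schurRank k (L ⧸ I) + schurRank k ↥I
        + Module.rank k (TensorProduct k ((L ⧸ I) ⧸ L2q) ↥(LieSubmodule.toSubmodule I)) := by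
          ring
end

section
/- Let L be a Lie algebra over a field. For all i ≥ 3 and all elements x₁, x₂, ..., x_{i+1} ∈ L, the following identity holds: [[x₁,...,x_i]_l, x_{i+1}] + [[x_{i+1}, [x₁,...,x_{i-1}]_l], x_i] + [[[x_i, x_{i+1}]_r, [x₁,...,x_{i-2}]_l], x_{i-1}] + [[[x_{i-1}, x_i, x_{i+1}]_r, [x₁,...,x_{i-3}]_l], x_{i-2}] + ... + [[x₂,...,x_{i+1}]_r, x₁] = 0, where the k-th term (for 3 ≤ k ≤ i+1) is [[[x_{i+3-k},...,x_{i+1}]_r, [x₁,...,x_{i+1-k}]_l], x_{i+2-k}]. -/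
open Module

variable {L : Type*}

/-- Left-normed bracket `[x₁,...,xᵢ]_l = [...[[x₁,x₂],x₃],...,xᵢ]` (zero for the empty list). -/
def bracketL [LieRing L] : List L → L
  | [] => 0
  | a :: t => t.foldl (fun y z => ⁅y, z⁆) a

/-- Right-normed bracket `[x₁,...,xᵢ]_r = [x₁,[x₂,[...,[xᵢ₋₁,xᵢ]...]]]` (zero for the empty list). -/
def bracketR [LieRing L] : List L → L
  | [] => 0
  | [a] => a
  | a :: b :: t => ⁅a, bracketR (b :: t)⁆

lemma bracketL_concat [LieRing L] (l : List L) (hl : l ≠ []) (z : L) :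
    bracketL (l ++ [z]) = ⁅bracketL l, z⁆ := by
  cases l with
  | nil => simp at hl
  | cons a t => simp [bracketL, List.foldl_append]

lemma bracketR_cons' [LieRing L] (a : L) (l : List L) (hl : l ≠ []) :
    bracketR (a :: l) = ⁅a, bracketR l⁆ := by
  cases l with
  | nil => simp at hl
  | cons b t => rfl

theorem jacobi_type_identity (K : Type*) (L : Type*) [Field K] [LieRing L] [LieAlgebra K L]
    (i : ℕ) (hi : 3 ≤ i) (x : ℕ → L) :
    (∑ k ∈ Finset.Icc 1 (i + 1),
      if k = 1 then ⁅bracketL ((List.range' 1 i).map x), x (i + 1)⁆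
      else
        ⁅(let r := bracketR ((List.range' (i + 3 - k) (k - 1)).map x)
          let l := (List.range' 1 (i + 1 - k)).map x
          if l.isEmpty then r else ⁅r, bracketL l⁆), x (i + 2 - k)⁆) = 0 := by
  set F : ℕ → L := fun k =>
      if k = 1 then ⁅bracketL ((List.range' 1 i).map x), x (i + 1)⁆
      else
        ⁅(let r := bracketR ((List.range' (i + 3 - k) (k - 1)).map x)
          let l := (List.range' 1 (i + 1 - k)).map x
          if l.isEmpty then r else ⁅r, bracketL l⁆), x (i + 2 - k)⁆ with hF
  -- abbreviations
  set Lb : ℕ → L := fun n => bracketL ((List.range' 1 n).map x) with hLb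
  set Rb : ℕ → ℕ → L := fun j m => bracketR ((List.range' j m).map x) with hRb
  have Lb_succ : ∀ n, 1 ≤ n → Lb (n + 1) = ⁅Lb n, x (n + 1)⁆ := by
    intro n hn
    have h1 : (List.range' 1 n).map x ≠ [] := by
      simp [List.range'_eq_nil_iff]; omega
    simp only [hLb]
    rw [List.range'_concat, List.map_append, List.map_singleton, bracketL_concat _ h1]
    norm_num [add_comm]
  have Rb_cons : ∀ j m, 1 ≤ m → Rb j (m + 1) = ⁅x j, Rb (j + 1) m⁆ := by
    intro j m hm
    have h1 : (List.range' (j + 1) m).map x ≠ [] := by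
      simp [List.range'_eq_nil_iff]; omega
    simp only [hRb]
    rw [List.range'_succ, List.map_cons, bracketR_cons' _ _ h1]
  have Rb_one : ∀ j, Rb j 1 = x j := fun j => rfl
  have Lb_one : Lb 1 = x 1 := rfl
  -- key telescoping lemma
  have key : ∀ m, 2 ≤ m → m ≤ i →
      (∑ k ∈ Finset.Icc 1 m, F k) = -⁅Rb (i + 2 - m) m, Lb (i + 1 - m)⁆ := by
    intro m hm
    induction m, hm using Nat.le_induction with
    | base =>
      intro _
      obtain ⟨n, rfl⟩ : ∃ n, i = n + 3 := ⟨i - 3, by omega⟩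
      have hIcc : Finset.Icc 1 2 = {1, 2} := rfl
      rw [hIcc, Finset.sum_insert (by decide), Finset.sum_singleton]
      have e1 : F 1 = ⁅⁅Lb (n + 2), x (n + 3)⁆, x (n + 4)⁆ := by
        have : Lb (n + 3) = ⁅Lb (n + 2), x (n + 3)⁆ := Lb_succ (n + 2) (by omega)
        simp only [hF, if_pos rfl, hLb] at this ⊢
        rw [this]
      have e2 : F 2 = ⁅⁅x (n + 4), Lb (n + 2)⁆, x (n + 3)⁆ := by
        have h1 : n + 3 + 3 - 2 = n + 4 := by omega
        have h2 : n + 3 + 1 - 2 = n + 2 := by omega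
        have h3 : n + 3 + 2 - 2 = n + 3 := by omega
        simp only [hF, if_neg (by omega : ¬ (2 : ℕ) = 1), h1, h2, h3]
        have hne : ((List.range' 1 (n + 2)).map x).isEmpty = false := by
          simp [List.range'_eq_nil_iff]
        simp only [hne, Bool.false_eq_true, if_false]
        rfl
      have e3 : Rb (n + 3) 2 = ⁅x (n + 3), x (n + 4)⁆ := by
        rw [Rb_cons (n + 3) 1 le_rfl, Rb_one]
      have h4 : n + 3 + 2 - 2 = n + 3 := by omega
      have h5 : n + 3 + 1 - 2 = n + 2 := by omega
      rw [e1, e2, h4, h5, e3]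
      have jac : ∀ a b c : L, ⁅⁅a, b⁆, c⁆ + ⁅⁅c, a⁆, b⁆ = -⁅⁅b, c⁆, a⁆ := by
        intro a b c
        rw [lie_lie a b c, ← lie_skew ⁅c, a⁆ b, ← lie_skew c a, ← lie_skew ⁅b, c⁆ a]
        simp only [lie_neg, neg_neg]
        abel
      exact jac (Lb (n + 2)) (x (n + 3)) (x (n + 4))
    | succ m hm ih =>
      intro hmi
      obtain ⟨d, rfl⟩ : ∃ d, i = m + 1 + d := ⟨i - (m + 1), by omega⟩
      rw [Finset.sum_Icc_succ_top (by omega), ih (by omega)]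
      have eF : F (m + 1) = ⁅⁅Rb (d + 3) m, Lb (d + 1)⁆, x (d + 2)⁆ := by
        have h1 : m + 1 + d + 3 - (m + 1) = d + 3 := by omega
        have h2 : m + 1 - 1 = m := by omega
        have h3 : m + 1 + d + 1 - (m + 1) = d + 1 := by omega
        have h4 : m + 1 + d + 2 - (m + 1) = d + 2 := by omega
        simp only [hF, if_neg (by omega : ¬ m + 1 = 1), h1, h2, h3, h4]
        have hne : ((List.range' 1 (d + 1)).map x).isEmpty = false := by
          simp [List.range'_eq_nil_iff]
        simp only [hne, Bool.false_eq_true, if_false]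
        rfl
      have h5 : m + 1 + d + 2 - m = d + 3 := by omega
      have h6 : m + 1 + d + 1 - m = d + 2 := by omega
      have h7 : m + 1 + d + 2 - (m + 1) = d + 2 := by omega
      have h8 : m + 1 + d + 1 - (m + 1) = d + 1 := by omega
      rw [eF, h5, h6, h7, h8]
      have eL : Lb (d + 2) = ⁅Lb (d + 1), x (d + 2)⁆ := Lb_succ (d + 1) (by omega)
      have eR : Rb (d + 2) (m + 1) = ⁅x (d + 2), Rb (d + 3) m⁆ :=
        Rb_cons (d + 2) m (by omega)
      rw [eL, eR]
      rw [leibniz_lie (Rb (d + 3) m) (Lb (d + 1)) (x (d + 2)),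
        ← lie_skew (x (d + 2)) (Rb (d + 3) m), neg_lie,
        ← lie_skew ⁅Rb (d + 3) m, x (d + 2)⁆ (Lb (d + 1))]
      abel
  -- conclude
  obtain ⟨j, rfl⟩ : ∃ j, i = j + 1 := ⟨i - 1, by omega⟩
  have h1 : j + 1 + 2 - (j + 1) = 2 := by omega
  have h2 : j + 1 + 1 - (j + 1) = 1 := by omega
  have eF : F (j + 1 + 1) = ⁅Rb 2 (j + 1), x 1⁆ := by
    have h3 : j + 1 + 3 - (j + 1 + 1) = 2 := by omega
    have h4 : j + 1 + 1 - 1 = j + 1 := by omega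
    have h5 : j + 1 + 1 - (j + 1 + 1) = 0 := by omega
    have h6 : j + 1 + 2 - (j + 1 + 1) = 1 := by omega
    simp only [hF, if_neg (by omega : ¬ j + 1 + 1 = 1), h3, h4, h5, h6,
      List.range'_zero, List.map_nil, List.isEmpty_nil, if_true]
    rfl
  have main : (∑ k ∈ Finset.Icc 1 (j + 1 + 1), F k) = 0 := by
    rw [Finset.sum_Icc_succ_top (by omega) F, key (j + 1) (by omega) le_rfl,
      h1, h2, Lb_one, eF]
    abel
  exact main
end

section
/- Let L be the 4-dimensional Lie algebra L(3,4,1,4) over a field of characteristic ≠ 2, with basis x₁, x₂, x₃, x₄ and nonzero brackets [x₁,x₂] = x₃, [x₁,x₃] = x₄. Then dim M(L) = 2; in particular the bound dim M(L) ≤ n/2 for even n is attained. -/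
set_option linter.unusedSectionVars false

open Module FreeLieAlgebra

section Basics
variable {K L : Type*} [Field K] [LieRing L] [LieAlgebra K L]
variable (b : Basis (Fin 4) K L)

noncomputable def om1 (x y : L) : K := b.repr x 0 * b.repr y 3 - b.repr x 3 * b.repr y 0
noncomputable def om2 (x y : L) : K := b.repr x 1 * b.repr y 2 - b.repr x 2 * b.repr y 1

variable (h12 : ⁅b 0, b 1⁆ = b 2) (h13 : ⁅b 0, b 2⁆ = b 3)
    (h14 : ⁅b 0, b 3⁆ = 0) (h23 : ⁅b 1, b 2⁆ = 0) (h24 : ⁅b 1, b 3⁆ = 0)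
    (h34 : ⁅b 2, b 3⁆ = 0)

include h12 h13 h14 h23 h24 h34 in
lemma lie_eq_L3414 (x y : L) :
    ⁅x, y⁆ = (b.repr x 0 * b.repr y 1 - b.repr x 1 * b.repr y 0) • b 2
      + (b.repr x 0 * b.repr y 2 - b.repr x 2 * b.repr y 0) • b 3 := by
  have h21 : ⁅b 1, b 0⁆ = -b 2 := by rw [← lie_skew, h12]
  have h31 : ⁅b 2, b 0⁆ = -b 3 := by rw [← lie_skew, h13]
  have h41 : ⁅b 3, b 0⁆ = 0 := by rw [← lie_skew, h14, neg_zero]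
  have h32 : ⁅b 2, b 1⁆ = 0 := by rw [← lie_skew, h23, neg_zero]
  have h42 : ⁅b 3, b 1⁆ = 0 := by rw [← lie_skew, h24, neg_zero]
  have h43 : ⁅b 3, b 2⁆ = 0 := by rw [← lie_skew, h34, neg_zero]
  conv_lhs => rw [← b.sum_repr x, ← b.sum_repr y]
  rw [Fin.sum_univ_four, Fin.sum_univ_four]
  simp only [add_lie, lie_add, smul_lie, lie_smul, h12, h13, h14, h23, h24, h34,
    h21, h31, h41, h32, h42, h43, lie_self, smul_zero, add_zero, zero_add, smul_neg,
    smul_smul]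
  module

include h12 h13 h14 h23 h24 h34 in
lemma repr_lie_L3414 (x y : L) :
    b.repr ⁅x, y⁆ 0 = 0 ∧ b.repr ⁅x, y⁆ 1 = 0 ∧
    b.repr ⁅x, y⁆ 2 = b.repr x 0 * b.repr y 1 - b.repr x 1 * b.repr y 0 ∧
    b.repr ⁅x, y⁆ 3 = b.repr x 0 * b.repr y 2 - b.repr x 2 * b.repr y 0 := by
  rw [lie_eq_L3414 b h12 h13 h14 h23 h24 h34 x y]
  simp [Finsupp.single_apply, Basis.repr_self]

include h12 h13 h14 h23 h24 h34 in
noncomputable def extLieRing : LieRing (L × K × K) where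
  bracket p q := (⁅p.1, q.1⁆, om1 b p.1 q.1, om2 b p.1 q.1)
  add_lie x y z := by
    ext <;> simp [om1, om2, add_lie] <;> ring
  lie_add x y z := by
    ext <;> simp [om1, om2, lie_add] <;> ring
  lie_self x := by
    ext <;> simp [om1, om2] <;> ring
  leibniz_lie x y z := by
    ext
    · exact leibniz_lie _ _ _
    · show om1 b x.1 ⁅y.1, z.1⁆ = om1 b ⁅x.1, y.1⁆ z.1 + om1 b y.1 ⁅x.1, z.1⁆
      simp only [om1, (repr_lie_L3414 b h12 h13 h14 h23 h24 h34 _ _).1,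
        (repr_lie_L3414 b h12 h13 h14 h23 h24 h34 _ _).2.2.2]
      ring
    · show om2 b x.1 ⁅y.1, z.1⁆ = om2 b ⁅x.1, y.1⁆ z.1 + om2 b y.1 ⁅x.1, z.1⁆
      simp only [om2, (repr_lie_L3414 b h12 h13 h14 h23 h24 h34 _ _).2.1,
        (repr_lie_L3414 b h12 h13 h14 h23 h24 h34 _ _).2.2.1]
      ring

include h12 h13 h14 h23 h24 h34 in
noncomputable def extLieAlgebra :
    @LieAlgebra K (L × K × K) _ (extLieRing b h12 h13 h14 h23 h24 h34) :=
  letI := extLieRing b h12 h13 h14 h23 h24 h34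
  { toModule := Prod.instModule
    lie_smul := fun t x y => by
      ext
      · exact lie_smul t x.1 y.1
      · show om1 b x.1 (t • y.1) = t * om1 b x.1 y.1
        simp [om1, map_smul]; ring
      · show om2 b x.1 (t • y.1) = t * om2 b x.1 y.1
        simp [om2, map_smul]; ring }

end Basics

section Main
variable {K L : Type*} [Field K] [LieRing L] [LieAlgebra K L]

/-- the canonical projection of the free presentation -/
noncomputable def piF : FreeLieAlgebra K L →ₗ⁅K⁆ L := FreeLieAlgebra.lift K (id : L → L)

lemma piF_of (x : L) : piF (of K x) = x := lift_of_apply _ _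

/-- generators of a Lie subalgebra generate it -/
lemma of_generates (S : LieSubalgebra K (FreeLieAlgebra K L))
    (hS : ∀ x : L, of K x ∈ S) (f : FreeLieAlgebra K L) : f ∈ S := by
  let g : L → S := fun x => ⟨of K x, hS x⟩
  let Φ := FreeLieAlgebra.lift K g
  have h : S.incl.comp Φ = LieHom.id := by
    apply FreeLieAlgebra.hom_ext
    intro x
    simp [Φ, g, lift_of_apply]
  have : S.incl (Φ f) = f := by
    have := congrArg (fun (h : FreeLieAlgebra K L →ₗ⁅K⁆ FreeLieAlgebra K L) => h f) h
    simpa using this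
  rw [← this]
  exact (Φ f).2

variable (b : Basis (Fin 4) K L)
variable (h12 : ⁅b 0, b 1⁆ = b 2) (h13 : ⁅b 0, b 2⁆ = b 3)
    (h14 : ⁅b 0, b 3⁆ = 0) (h23 : ⁅b 1, b 2⁆ = 0) (h24 : ⁅b 1, b 3⁆ = 0)
    (h34 : ⁅b 2, b 3⁆ = 0)

local notation "FL" => FreeLieAlgebra K L
local notation "R" => LieHom.ker (piF (K := K) (L := L))
local notation "BB" => (LieSubmodule.toSubmodule
  ⁅(⊤ : LieIdeal K FL), LieHom.ker (piF (K := K) (L := L))⁆ : Submodule K FL)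
local notation "AA" => (LieSubmodule.toSubmodule
  ((LieHom.ker (piF (K := K) (L := L))) ⊓ ⁅(⊤ : LieIdeal K FL), (⊤ : LieIdeal K FL)⁆) :
  Submodule K FL)

lemma mem_B_of_lie_R (f r : FL) (hr : piF r = 0) : ⁅f, r⁆ ∈ BB := by
  rw [LieSubmodule.mem_toSubmodule]
  exact LieSubmodule.lie_mem_lie (LieSubmodule.mem_top f) (LieHom.mem_ker.mpr hr)

lemma mem_B_of_lie_R' (f r : FL) (hr : piF r = 0) : ⁅r, f⁆ ∈ BB := by
  rw [← lie_skew]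
  exact neg_mem (mem_B_of_lie_R f r hr)

lemma B_le_R : ∀ x ∈ BB, piF x = 0 := by
  intro x hx
  rw [LieSubmodule.mem_toSubmodule] at hx
  exact LieHom.mem_ker.mp (LieSubmodule.lie_le_right _ _ hx)

/-- the two distinguished elements -/
noncomputable def vv1 : FreeLieAlgebra K L := ⁅of K (b 0), of K (b 3)⁆
noncomputable def vv2 : FreeLieAlgebra K L := ⁅of K (b 1), of K (b 2)⁆

/-- the span of basic brackets -/
noncomputable def CC : Submodule K (FreeLieAlgebra K L) :=
  Submodule.span K (Set.range fun p : Fin 4 × Fin 4 => ⁅of K (b p.1), of K (b p.2)⁆)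

include h12 h13 h14 h23 h24 h34 in
lemma exists_tau : ∃ g : FL →ₗ[K] K × K,
    (g (vv1 b) = (1, 0)) ∧ (g (vv2 b) = (0, 1)) ∧ (∀ x ∈ BB, g x = 0) := by
  letI instE : LieRing (L × K × K) := extLieRing b h12 h13 h14 h23 h24 h34
  letI : LieAlgebra K (L × K × K) := extLieAlgebra b h12 h13 h14 h23 h24 h34
  let τ : FL →ₗ⁅K⁆ (L × K × K) := FreeLieAlgebra.lift K (fun x : L => ((x, 0, 0) : L × K × K))
  -- the first component of τ is piF
  let pL : (L × K × K) →ₗ⁅K⁆ L :=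
    { toFun := Prod.fst
      map_add' := fun _ _ => rfl
      map_smul' := fun _ _ => rfl
      map_lie' := rfl }
  have hfst : ∀ f : FL, (τ f).1 = piF f := by
    have h : pL.comp τ = piF (K := K) (L := L) := by
      apply FreeLieAlgebra.hom_ext
      intro x
      simp [τ, pL, lift_of_apply, piF_of]; rfl
    intro f
    have := congrArg (fun (h : FL →ₗ⁅K⁆ L) => h f) h
    exact this
  -- τ kills brackets with R
  have hkill : ∀ (f r : FL), piF r = 0 → τ ⁅f, r⁆ = 0 := by
    intro f r hr
    rw [LieHom.map_lie]
    show ((⁅(τ f).1, (τ r).1⁆ : L), om1 b (τ f).1 (τ r).1, om2 b (τ f).1 (τ r).1) = 0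
    rw [hfst r, hr]
    simp [om1, om2]
  refine ⟨(LinearMap.snd K L (K × K)).comp τ.toLinearMap, ?_, ?_, ?_⟩
  · show (τ (vv1 b)).2 = (1, 0)
    have : τ (vv1 b) = ⁅τ (of K (b 0)), τ (of K (b 3))⁆ := LieHom.map_lie _ _ _
    rw [this]
    simp only [τ, lift_of_apply]
    show ((⁅b 0, b 3⁆ : L), om1 b (b 0) (b 3), om2 b (b 0) (b 3)).2 = (1, 0)
    simp [om1, om2, Basis.repr_self, Finsupp.single_apply]
  · show (τ (vv2 b)).2 = (0, 1)
    have : τ (vv2 b) = ⁅τ (of K (b 1)), τ (of K (b 2))⁆ := LieHom.map_lie _ _ _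
    rw [this]
    simp only [τ, lift_of_apply]
    show ((⁅b 1, b 2⁆ : L), om1 b (b 1) (b 2), om2 b (b 1) (b 2)).2 = (0, 1)
    simp [om1, om2, Basis.repr_self, Finsupp.single_apply]
  · intro x hx
    rw [LieSubmodule.mem_toSubmodule, ← LieSubmodule.mem_toSubmodule,
      LieSubmodule.lieIdeal_oper_eq_linear_span'] at hx
    show (τ x).2 = 0
    have : τ x = 0 := by
      induction hx using Submodule.span_induction with
      | mem z hz =>
        obtain ⟨f, -, r, hr, rfl⟩ := hz
        exact hkill f r (LieHom.mem_ker.mp hr)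
      | zero => exact τ.toLinearMap.map_zero
      | add _ _ _ _ ha hb => rw [map_add τ, ha, hb]; exact add_zero _
      | smul t _ _ hc => rw [map_smul τ, hc]; exact smul_zero _
    rw [this]; rfl


lemma pi_of_lie (x y : L) : piF ⁅of K x, of K y⁆ = ⁅x, y⁆ := by
  rw [LieHom.map_lie, piF_of, piF_of]

lemma c_mem_C (i j : Fin 4) : ⁅of K (b i), of K (b j)⁆ ∈ CC b :=
  Submodule.subset_span ⟨(i, j), rfl⟩

include h12 h13 h23 in
lemma c13_mem_B : ⁅of K (b 1), of K (b 3)⁆ ∈ BB := by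
  set e0 := of K (b 0); set e1 := of K (b 1); set e2 := of K (b 2); set e3 := of K (b 3)
  set s : FL := e3 - ⁅e0, e2⁆ with hs_def
  have hs : piF s = 0 := by
    simp [hs_def, e0, e2, e3, piF_of, pi_of_lie, h13]
  set u : FL := ⁅e0, e1⁆ - e2 with hu_def
  have hu : piF u = 0 := by
    simp [hu_def, e0, e1, e2, piF_of, pi_of_lie, h12]
  have e1eq : ⁅e1, e3⁆ = ⁅e1, ⁅e0, e2⁆⁆ + ⁅e1, s⁆ := by
    rw [← lie_add]; congr 1; simp [hs_def]
  have m_s : ⁅e1, s⁆ ∈ BB := mem_B_of_lie_R _ s hs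
  have e2eq : ⁅e1, ⁅e0, e2⁆⁆ = -⁅⁅e0, e2⁆, e1⁆ := by rw [← lie_skew]
  have e3eq : ⁅⁅e0, e2⁆, e1⁆ = ⁅e0, ⁅e2, e1⁆⁆ - ⁅e2, ⁅e0, e1⁆⁆ := lie_lie _ _ _
  have m_a : ⁅e0, ⁅e2, e1⁆⁆ ∈ BB := by
    apply mem_B_of_lie_R
    rw [pi_of_lie, ← lie_skew, h23, neg_zero]
  have m_b : ⁅e2, ⁅e0, e1⁆⁆ ∈ BB := by
    have : ⁅e2, ⁅e0, e1⁆⁆ = ⁅e2, u⁆ := by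
      simp [hu_def, lie_sub, lie_self]
    rw [this]
    exact mem_B_of_lie_R _ u hu
  rw [e1eq, e2eq, e3eq]
  exact add_mem (neg_mem (sub_mem m_a m_b)) m_s

include h12 h14 h24 in
lemma c23_mem_B : ⁅of K (b 2), of K (b 3)⁆ ∈ BB := by
  set e0 := of K (b 0); set e1 := of K (b 1); set e2 := of K (b 2); set e3 := of K (b 3)
  set u : FL := ⁅e0, e1⁆ - e2 with hu_def
  have hu : piF u = 0 := by
    simp [hu_def, e0, e1, e2, piF_of, pi_of_lie, h12]
  have e1eq : ⁅e2, e3⁆ = ⁅⁅e0, e1⁆, e3⁆ - ⁅u, e3⁆ := by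
    rw [← sub_lie]; congr 1; simp [hu_def]
  have e2eq : ⁅⁅e0, e1⁆, e3⁆ = ⁅e0, ⁅e1, e3⁆⁆ - ⁅e1, ⁅e0, e3⁆⁆ := lie_lie _ _ _
  have m_a : ⁅e0, ⁅e1, e3⁆⁆ ∈ BB := by
    apply mem_B_of_lie_R; rw [pi_of_lie, h24]
  have m_b : ⁅e1, ⁅e0, e3⁆⁆ ∈ BB := by
    apply mem_B_of_lie_R; rw [pi_of_lie, h14]
  have m_u : ⁅u, e3⁆ ∈ BB := mem_B_of_lie_R' _ u hu
  rw [e1eq, e2eq]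
  exact sub_mem (sub_mem m_a m_b) m_u

lemma expand_left (g : FL) (x : L)
    (h : ∀ j : Fin 4, ⁅of K (b j), g⁆ ∈ BB ⊔ CC b) : ⁅of K x, g⁆ ∈ BB ⊔ CC b := by
  set rx : FL := of K x - (b.repr x 0 • of K (b 0) + b.repr x 1 • of K (b 1)
    + b.repr x 2 • of K (b 2) + b.repr x 3 • of K (b 3)) with hrx
  have hr : piF rx = 0 := by
    have hz := b.sum_repr x
    rw [Fin.sum_univ_four] at hz
    simp [hrx, piF_of, hz]
  have he : ⁅of K x, g⁆ = ⁅rx, g⁆ + (b.repr x 0 • ⁅of K (b 0), g⁆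
      + b.repr x 1 • ⁅of K (b 1), g⁆ + b.repr x 2 • ⁅of K (b 2), g⁆
      + b.repr x 3 • ⁅of K (b 3), g⁆) := by
    simp only [hrx, sub_lie, add_lie, smul_lie]
    abel
  rw [he]
  refine add_mem (Submodule.mem_sup_left (mem_B_of_lie_R' g rx hr)) ?_
  exact add_mem (add_mem (add_mem (Submodule.smul_mem _ _ (h 0)) (Submodule.smul_mem _ _ (h 1)))
    (Submodule.smul_mem _ _ (h 2))) (Submodule.smul_mem _ _ (h 3))

lemma expand_right (g : FL) (y : L)
    (h : ∀ j : Fin 4, ⁅g, of K (b j)⁆ ∈ BB ⊔ CC b) : ⁅g, of K y⁆ ∈ BB ⊔ CC b := by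
  set ry : FL := of K y - (b.repr y 0 • of K (b 0) + b.repr y 1 • of K (b 1)
    + b.repr y 2 • of K (b 2) + b.repr y 3 • of K (b 3)) with hry
  have hr : piF ry = 0 := by
    have hz := b.sum_repr y
    rw [Fin.sum_univ_four] at hz
    simp [hry, piF_of, hz]
  have he : ⁅g, of K y⁆ = ⁅g, ry⁆ + (b.repr y 0 • ⁅g, of K (b 0)⁆
      + b.repr y 1 • ⁅g, of K (b 1)⁆ + b.repr y 2 • ⁅g, of K (b 2)⁆
      + b.repr y 3 • ⁅g, of K (b 3)⁆) := by
    have hsm : ∀ (c : K) (w : FL), ⁅g, c • w⁆ = c • ⁅g, w⁆ := fun c w => lie_smul c g w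
    simp only [hry, lie_sub, lie_add, hsm]
    abel
  rw [he]
  refine add_mem (Submodule.mem_sup_left (mem_B_of_lie_R g ry hr)) ?_
  exact add_mem (add_mem (add_mem (Submodule.smul_mem _ _ (h 0)) (Submodule.smul_mem _ _ (h 1)))
    (Submodule.smul_mem _ _ (h 2))) (Submodule.smul_mem _ _ (h 3))

lemma lie_of_of_mem_D (x y : L) : ⁅of K x, of K y⁆ ∈ BB ⊔ CC b :=
  expand_left b (of K y) x fun i =>
    expand_right b (of K (b i)) y fun j => Submodule.mem_sup_right (c_mem_C b i j)

lemma lieD (f : FL) (hf : ∀ x : L, ⁅f, of K x⁆ ∈ BB ⊔ CC b) :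
    ∀ d ∈ BB ⊔ CC b, ⁅f, d⁆ ∈ BB ⊔ CC b := by
  intro d hd
  obtain ⟨p, hp, q, hq, rfl⟩ := Submodule.mem_sup.mp hd
  rw [lie_add]
  clear hd
  refine add_mem (Submodule.mem_sup_left (mem_B_of_lie_R f p (B_le_R p hp))) ?_
  induction hq using Submodule.span_induction with
  | mem z hz =>
    obtain ⟨⟨i, j⟩, rfl⟩ := hz
    set w : FL := ⁅of K (b i), of K (b j)⁆ - of K ⁅b i, b j⁆ with hw_def
    have hw : piF w = 0 := by simp [hw_def, pi_of_lie, piF_of]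
    have he : ⁅f, ⁅of K (b i), of K (b j)⁆⁆ = ⁅f, of K ⁅b i, b j⁆⁆ + ⁅f, w⁆ := by
      rw [← lie_add]; congr 1; simp [hw_def]
    rw [he]
    exact add_mem (hf _) (Submodule.mem_sup_left (mem_B_of_lie_R f w hw))
  | zero => rw [lie_zero]; exact zero_mem _
  | add u v _ _ hu hv => rw [lie_add]; exact add_mem hu hv
  | smul t u _ hu =>
    have e : ⁅f, t • u⁆ = t • ⁅f, u⁆ := lie_smul t f u
    rw [e]; exact Submodule.smul_mem _ t hu

lemma lie_of_mem_D (f : FL) (x : L) : ⁅f, of K x⁆ ∈ BB ⊔ CC b := by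
  let U : LieSubalgebra K FL :=
    { carrier := {f : FL | ∀ x : L, ⁅f, of K x⁆ ∈ BB ⊔ CC b}
      add_mem' := fun hf hg x => by rw [add_lie]; exact add_mem (hf x) (hg x)
      zero_mem' := fun x => by rw [zero_lie]; exact zero_mem _
      smul_mem' := fun t f hf x => by rw [smul_lie]; exact Submodule.smul_mem _ t (hf x)
      lie_mem' := fun {f g} hf hg x => by
        rw [lie_lie]
        exact sub_mem (lieD b f hf _ (hg x)) (lieD b g hg _ (hf x)) }
  have : f ∈ U := of_generates U (fun y => fun x => lie_of_of_mem_D b y x) f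
  exact this x

lemma lie_mem_D (f g : FL) : ⁅f, g⁆ ∈ BB ⊔ CC b := by
  let V : LieSubalgebra K FL :=
    { carrier := {g : FL | ∀ f : FL, ⁅f, g⁆ ∈ BB ⊔ CC b}
      add_mem' := fun hf hg f => by rw [lie_add]; exact add_mem (hf f) (hg f)
      zero_mem' := fun f => by rw [lie_zero]; exact zero_mem _
      smul_mem' := fun t g hg f => by
        have e : ⁅f, t • g⁆ = t • ⁅f, g⁆ := lie_smul t f g
        rw [e]; exact Submodule.smul_mem _ t (hg f)
      lie_mem' := fun {g1 g2} hg1 hg2 f => by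
        rw [leibniz_lie]
        exact add_mem (hg2 ⁅f, g1⁆)
          (lieD b g1 (fun x => lie_of_mem_D b g1 x) _ (hg2 f)) }
  have : g ∈ V := of_generates V (fun y => fun f => lie_of_mem_D b f y) g
  exact this f


include h12 h13 h14 h23 h24 h34 in
lemma upper_bound (a : FL) (ha : a ∈ AA) :
    a ∈ BB ⊔ Submodule.span K {vv1 b, vv2 b} := by
  rw [LieSubmodule.mem_toSubmodule, LieSubmodule.mem_inf] at ha
  have haR : piF a = 0 := LieHom.mem_ker.mp ha.1
  have haFF : a ∈ (LieSubmodule.toSubmodule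
      ⁅(⊤ : LieIdeal K FL), (⊤ : LieIdeal K FL)⁆ : Submodule K FL) := by
    rw [LieSubmodule.mem_toSubmodule]; exact ha.2
  have hFFle : (LieSubmodule.toSubmodule
      ⁅(⊤ : LieIdeal K FL), (⊤ : LieIdeal K FL)⁆ : Submodule K FL) ≤ BB ⊔ CC b := by
    rw [LieSubmodule.lieIdeal_oper_eq_linear_span', Submodule.span_le]
    rintro z ⟨f, -, g, -, rfl⟩
    exact lie_mem_D b f g
  obtain ⟨p, hp, q, hq, rfl⟩ := Submodule.mem_sup.mp (hFFle haFF)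
  rw [CC, Submodule.mem_span_range_iff_exists_fun] at hq
  obtain ⟨t, ht⟩ := hq
  have hpq : piF p = 0 := B_le_R p hp
  have hπq : piF q = 0 := by
    have h' : piF p + piF q = 0 := by rw [← map_add piF]; exact haR
    rwa [hpq, zero_add] at h'
  -- skew symmetry helpers in L
  have k21 : ⁅b 1, b 0⁆ = -b 2 := by rw [← lie_skew, h12]
  have k31 : ⁅b 2, b 0⁆ = -b 3 := by rw [← lie_skew, h13]
  have k41 : ⁅b 3, b 0⁆ = 0 := by rw [← lie_skew, h14, neg_zero]
  have k32 : ⁅b 2, b 1⁆ = 0 := by rw [← lie_skew, h23, neg_zero]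
  have k42 : ⁅b 3, b 1⁆ = 0 := by rw [← lie_skew, h24, neg_zero]
  have k43 : ⁅b 3, b 2⁆ = 0 := by rw [← lie_skew, h34, neg_zero]
  have hsum : piF q = (t (0,1) - t (1,0)) • b 2 + (t (0,2) - t (2,0)) • b 3 := by
    rw [← ht]
    have hmap : piF (∑ i : Fin 4 × Fin 4, t i • ⁅of K (b i.1), of K (b i.2)⁆)
        = ∑ i : Fin 4 × Fin 4, t i • piF.toLinearMap ⁅of K (b i.1), of K (b i.2)⁆ := by
      show piF.toLinearMap _ = _
      rw [map_sum]; simp only [map_smul]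
    rw [hmap]
    simp only [LieHom.coe_toLinearMap, pi_of_lie]
    rw [Fintype.sum_prod_type]
    simp only [Fin.sum_univ_four, h12, h13, h14, h23, h24, h34,
      k21, k31, k41, k32, k42, k43, lie_self, smul_zero, smul_neg, add_zero, zero_add]
    module
  have hcoef : (t (0,1) - t (1,0)) • b 2 + (t (0,2) - t (2,0)) • b 3 = 0 := by
    rw [← hsum]; exact hπq
  have e01 : t (0,1) = t (1,0) := by
    have h2 := congrArg (fun w => b.repr w 2) hcoef
    simp [Basis.repr_self, Finsupp.single_apply, sub_eq_zero] at h2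
    exact h2
  have e02 : t (0,2) = t (2,0) := by
    have h3 := congrArg (fun w => b.repr w 3) hcoef
    simp [Basis.repr_self, Finsupp.single_apply, sub_eq_zero] at h3
    exact h3
  -- skew helpers in FL
  have s10 : ⁅of K (b 1), of K (b 0)⁆ = -⁅of K (b 0), of K (b 1)⁆ := by rw [← lie_skew]
  have s20 : ⁅of K (b 2), of K (b 0)⁆ = -⁅of K (b 0), of K (b 2)⁆ := by rw [← lie_skew]
  have s30 : ⁅of K (b 3), of K (b 0)⁆ = -⁅of K (b 0), of K (b 3)⁆ := by rw [← lie_skew]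
  have s21 : ⁅of K (b 2), of K (b 1)⁆ = -⁅of K (b 1), of K (b 2)⁆ := by rw [← lie_skew]
  have s31 : ⁅of K (b 3), of K (b 1)⁆ = -⁅of K (b 1), of K (b 3)⁆ := by rw [← lie_skew]
  have s32 : ⁅of K (b 3), of K (b 2)⁆ = -⁅of K (b 2), of K (b 3)⁆ := by rw [← lie_skew]
  have hqe : q = (t (0,3) - t (3,0)) • vv1 b + (t (1,2) - t (2,1)) • vv2 b
      + ((t (1,3) - t (3,1)) • ⁅of K (b 1), of K (b 3)⁆
        + (t (2,3) - t (3,2)) • ⁅of K (b 2), of K (b 3)⁆) := by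
    rw [← ht, Fintype.sum_prod_type]
    simp only [Fin.sum_univ_four, s10, s20, s30, s21, s31, s32, lie_self, vv1, vv2,
      smul_neg, smul_zero, add_zero, zero_add, e01, e02]
    module
  have hqm : q ∈ BB ⊔ Submodule.span K {vv1 b, vv2 b} := by
    rw [hqe]
    refine add_mem (add_mem ?_ ?_) (add_mem ?_ ?_)
    · exact Submodule.mem_sup_right (Submodule.smul_mem _ _
        (Submodule.subset_span (Set.mem_insert _ _)))
    · exact Submodule.mem_sup_right (Submodule.smul_mem _ _
        (Submodule.subset_span (Set.mem_insert_of_mem _ rfl)))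
    · exact Submodule.mem_sup_left (Submodule.smul_mem _ _
        (c13_mem_B b h12 h13 h23))
    · exact Submodule.mem_sup_left (Submodule.smul_mem _ _
        (c23_mem_B b h12 h14 h24))
  exact add_mem (Submodule.mem_sup_left hp) hqm

include h12 h13 h14 h23 h24 h34 in
lemma vv1_mem_A : vv1 b ∈ AA := by
  rw [LieSubmodule.mem_toSubmodule, LieSubmodule.mem_inf]
  refine ⟨LieHom.mem_ker.mpr ?_, LieSubmodule.lie_mem_lie (LieSubmodule.mem_top _)
    (LieSubmodule.mem_top _)⟩
  rw [vv1, pi_of_lie, h14]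

include h23 in
lemma vv2_mem_A : vv2 b ∈ AA := by
  rw [LieSubmodule.mem_toSubmodule, LieSubmodule.mem_inf]
  refine ⟨LieHom.mem_ker.mpr ?_, LieSubmodule.lie_mem_lie (LieSubmodule.mem_top _)
    (LieSubmodule.mem_top _)⟩
  rw [vv2, pi_of_lie, h23]


include h12 h13 h14 h23 h24 h34 in
lemma schurRank_eq_two :
    Module.rank K ((AA) ⧸ ((BB).comap (AA).subtype)) = 2 := by
  obtain ⟨g, hg1, hg2, hgB⟩ := exists_tau b h12 h13 h14 h23 h24 h34
  have hker : (BB).comap (AA).subtype ≤ LinearMap.ker (g.comp (AA).subtype) := by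
    intro x hx
    rw [LinearMap.mem_ker]
    exact hgB x.1 hx
  let Φ : ((AA) ⧸ ((BB).comap (AA).subtype)) →ₗ[K] K × K :=
    Submodule.liftQ _ (g.comp (AA).subtype) hker
  have hsurj : Function.Surjective Φ := by
    intro z
    refine ⟨Submodule.Quotient.mk ⟨z.1 • vv1 b + z.2 • vv2 b,
      add_mem (Submodule.smul_mem _ _ (vv1_mem_A b h12 h13 h14 h23 h24 h34))
        (Submodule.smul_mem _ _ (vv2_mem_A b h23))⟩, ?_⟩
    rw [Submodule.liftQ_apply]
    show g (z.1 • vv1 b + z.2 • vv2 b) = z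
    rw [map_add, map_smul, map_smul, hg1, hg2]
    ext <;> simp
  have hinj : Function.Injective Φ := by
    rw [injective_iff_map_eq_zero]
    intro m hm
    obtain ⟨⟨a, haA⟩, rfl⟩ := Submodule.Quotient.mk_surjective _ m
    have hga : g a = 0 := by
      rwa [Submodule.liftQ_apply] at hm
    have hup := upper_bound b h12 h13 h14 h23 h24 h34 a haA
    obtain ⟨p, hp, w, hw, hsum⟩ := Submodule.mem_sup.mp hup
    obtain ⟨s, u, rfl⟩ := Submodule.mem_span_pair.mp hw
    have hgp : g p = 0 := hgB p hp
    have hval : g a = (s, u) := by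
      rw [← hsum, map_add, hgp, zero_add, map_add, map_smul, map_smul, hg1, hg2]
      ext <;> simp
    have hs : s = 0 := by
      have := hval.symm.trans hga
      exact congrArg Prod.fst this
    have hu : u = 0 := by
      have := hval.symm.trans hga
      exact congrArg Prod.snd this
    have haB : a ∈ BB := by
      rw [← hsum, hs, hu]
      simpa using hp
    exact (Submodule.Quotient.mk_eq_zero _).mpr haB
  have e := LinearEquiv.ofBijective Φ ⟨hinj, hsurj⟩
  have h2 : Module.rank K (K × K) = 2 := by
    rw [rank_prod', rank_self]
    exact one_add_one_eq_two
  have h3 := e.lift_rank_eq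
  rw [h2, Cardinal.lift_ofNat] at h3
  rwa [Cardinal.lift_eq_ofNat_iff] at h3

end Main

theorem schur_multiplier_L3414 (K : Type*) (L : Type*) [Field K] [LieRing L] [LieAlgebra K L]
    (hchar : ringChar K ≠ 2) (b : Basis (Fin 4) K L)
    (h12 : ⁅b 0, b 1⁆ = b 2) (h13 : ⁅b 0, b 2⁆ = b 3)
    (h14 : ⁅b 0, b 3⁆ = 0) (h23 : ⁅b 1, b 2⁆ = 0) (h24 : ⁅b 1, b 3⁆ = 0)
    (h34 : ⁅b 2, b 3⁆ = 0) :
    schurRank K L = 2 ∧ finrank K L / 2 = 2 := by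
  constructor
  · exact schurRank_eq_two b h12 h13 h14 h23 h24 h34
  · have : finrank K L = 4 := by
      rw [Module.finrank_eq_card_basis b]
      simp
    rw [this]
end

section
/- Let L be the 5-dimensional Lie algebra L(7,5,1,7) over a field of characteristic ≠ 2, with basis x₁,...,x₅ and nonzero brackets [x₁,x₂] = x₃, [x₁,x₃] = x₄, [x₁,x₄] = x₅. Then dim M(L) = 3; in particular the bound dim M(L) ≤ (n+1)/2 for odd n is attained. -/
open Module

open Module

section CExtSec
variable (K : Type*) (L : Type*) [Field K] [LieRing L] [LieAlgebra K L]

/-- Central extension of `L` by `K³` along the 2-cocycle `ω`. -/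
def CExt (ω : L →ₗ[K] L →ₗ[K] (Fin 3 → K))
    (_h1 : ∀ x : L, ω x x = 0)
    (_h2 : ∀ x y z : L, ω ⁅x, y⁆ z + ω ⁅y, z⁆ x + ω ⁅z, x⁆ y = 0) : Type _ :=
  L × (Fin 3 → K)

variable (ω : L →ₗ[K] L →ₗ[K] (Fin 3 → K))
  (h1 : ∀ x : L, ω x x = 0)
  (h2 : ∀ x y z : L, ω ⁅x, y⁆ z + ω ⁅y, z⁆ x + ω ⁅z, x⁆ y = 0)

instance : AddCommGroup (CExt K L ω h1 h2) :=
  inferInstanceAs (AddCommGroup (L × (Fin 3 → K)))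

instance : Module K (CExt K L ω h1 h2) :=
  inferInstanceAs (Module K (L × (Fin 3 → K)))

theorem omega_skew {ω : L →ₗ[K] L →ₗ[K] (Fin 3 → K)} (h1 : ∀ x : L, ω x x = 0)
    (x y : L) : ω x y = - ω y x := by
  have h := h1 (x + y)
  simp only [map_add, LinearMap.add_apply, h1 x, h1 y, zero_add, add_zero] at h
  exact eq_neg_of_add_eq_zero_right h

instance : LieRing (CExt K L ω h1 h2) where
  bracket p q := (⁅p.1, q.1⁆, ω p.1 q.1)
  add_lie p q r := by
    show (⁅p.1 + q.1, r.1⁆, ω (p.1 + q.1) r.1)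
      = ((⁅p.1, r.1⁆, ω p.1 r.1) + (⁅q.1, r.1⁆, ω q.1 r.1) : L × (Fin 3 → K))
    simp [Prod.ext_iff, add_lie]
  lie_add p q r := by
    show (⁅p.1, q.1 + r.1⁆, ω p.1 (q.1 + r.1))
      = ((⁅p.1, q.1⁆, ω p.1 q.1) + (⁅p.1, r.1⁆, ω p.1 r.1) : L × (Fin 3 → K))
    simp [Prod.ext_iff, lie_add]
  lie_self p := by
    show (⁅p.1, p.1⁆, ω p.1 p.1) = ((0, 0) : L × (Fin 3 → K))
    simp [h1]
  leibniz_lie p q r := by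
    have h := h2 p.1 q.1 r.1
    have e1 : ω ⁅q.1, r.1⁆ p.1 = - ω p.1 ⁅q.1, r.1⁆ := by
      rw [omega_skew K L h1]
    have e2 : ω ⁅r.1, p.1⁆ q.1 = ω q.1 ⁅p.1, r.1⁆ := by
      have e : (⁅r.1, p.1⁆ : L) = -⁅p.1, r.1⁆ := by rw [← lie_skew]
      rw [e, map_neg, LinearMap.neg_apply, omega_skew K L h1, neg_neg]
    rw [e1, e2] at h
    have key : ω p.1 ⁅q.1, r.1⁆ = ω ⁅p.1, q.1⁆ r.1 + ω q.1 ⁅p.1, r.1⁆ := by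
      rw [eq_comm, ← sub_eq_zero, ← h]; abel
    show (⁅p.1, ⁅q.1, r.1⁆⁆, ω p.1 ⁅q.1, r.1⁆)
      = ((⁅⁅p.1, q.1⁆, r.1⁆, ω ⁅p.1, q.1⁆ r.1) + (⁅q.1, ⁅p.1, r.1⁆⁆, ω q.1 ⁅p.1, r.1⁆)
          : L × (Fin 3 → K))
    simp [Prod.ext_iff, key]

instance : LieAlgebra K (CExt K L ω h1 h2) where
  lie_smul t p q := by
    show (⁅p.1, (t • q).1⁆, ω p.1 (t • q).1)
      = (t • ((⁅p.1, q.1⁆, ω p.1 q.1) : L × (Fin 3 → K)))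
    have e : ((t • q).1 : L) = t • q.1 := rfl
    simp [Prod.ext_iff, e]

/-- first projection as a Lie algebra hom -/
def CExt.fstHom : CExt K L ω h1 h2 →ₗ⁅K⁆ L where
  toFun p := p.1
  map_add' p q := rfl
  map_smul' t p := rfl
  map_lie' {p q} := rfl

/-- second projection as a linear map -/
def CExt.sndLin : CExt K L ω h1 h2 →ₗ[K] (Fin 3 → K) where
  toFun p := p.2
  map_add' p q := rfl
  map_smul' t p := rfl

theorem CExt.lie_of_fst_zero (p q : CExt K L ω h1 h2) (h : CExt.fstHom K L ω h1 h2 q = 0) :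
    ⁅p, q⁆ = 0 := by
  have hq : q.1 = 0 := h
  show ((⁅p.1, q.1⁆ : L), ω p.1 q.1) = (0, (0 : Fin 3 → K))
  simp [hq]

theorem CExt.snd_lie (p q : CExt K L ω h1 h2) :
    CExt.sndLin K L ω h1 h2 ⁅p, q⁆ = ω p.1 q.1 := rfl


/-- pair constructor -/
def CExt.mk (x : L) (u : Fin 3 → K) : CExt K L ω h1 h2 := (x, u)

theorem CExt.fstHom_mk (x : L) (u : Fin 3 → K) :
    CExt.fstHom K L ω h1 h2 (CExt.mk K L ω h1 h2 x u) = x := rfl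

theorem CExt.sndLin_mk (x : L) (u : Fin 3 → K) :
    CExt.sndLin K L ω h1 h2 (CExt.mk K L ω h1 h2 x u) = u := rfl

theorem CExt.lie_mk (x y : L) (u v : Fin 3 → K) :
    ⁅CExt.mk K L ω h1 h2 x u, CExt.mk K L ω h1 h2 y v⁆
      = CExt.mk K L ω h1 h2 ⁅x, y⁆ (ω x y) := rfl

end CExtSec


section Brk
variable {K : Type*} {L : Type*} [Field K] [LieRing L] [LieAlgebra K L]

theorem sum_lie'' {ι : Type*} (s : Finset ι) (f : ι → L) (y : L) :
    ⁅∑ i ∈ s, f i, y⁆ = ∑ i ∈ s, ⁅f i, y⁆ := by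
  induction s using Finset.cons_induction with
  | empty => simp
  | cons a s ha ih => simp [Finset.sum_cons, add_lie, ih]

theorem lie_sum'' {ι : Type*} (s : Finset ι) (x : L) (f : ι → L) :
    ⁅x, ∑ i ∈ s, f i⁆ = ∑ i ∈ s, ⁅x, f i⁆ := by
  induction s using Finset.cons_induction with
  | empty => simp
  | cons a s ha ih => simp [Finset.sum_cons, lie_add, ih]

variable (b : Basis (Fin 5) K L)
variable (h12 : ⁅b 0, b 1⁆ = b 2) (h13 : ⁅b 0, b 2⁆ = b 3) (h14 : ⁅b 0, b 3⁆ = b 4)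
    (h15 : ⁅b 0, b 4⁆ = 0) (h23 : ⁅b 1, b 2⁆ = 0) (h24 : ⁅b 1, b 3⁆ = 0) (h25 : ⁅b 1, b 4⁆ = 0)
    (h34 : ⁅b 2, b 3⁆ = 0) (h35 : ⁅b 2, b 4⁆ = 0) (h45 : ⁅b 3, b 4⁆ = 0)

include h12 h13 h14 h15 h23 h24 h25 h34 h35 h45 in
theorem brkf (x y : L) :
    ⁅x, y⁆ = (b.repr x 0 * b.repr y 1 - b.repr x 1 * b.repr y 0) • b 2
      + (b.repr x 0 * b.repr y 2 - b.repr x 2 * b.repr y 0) • b 3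
      + (b.repr x 0 * b.repr y 3 - b.repr x 3 * b.repr y 0) • b 4 := by
  have l10 : ⁅b 1, b 0⁆ = -b 2 := by rw [← lie_skew, h12]
  have l20 : ⁅b 2, b 0⁆ = -b 3 := by rw [← lie_skew, h13]
  have l30 : ⁅b 3, b 0⁆ = -b 4 := by rw [← lie_skew, h14]
  have l40 : ⁅b 4, b 0⁆ = 0 := by rw [← lie_skew, h15, neg_zero]
  have l21 : ⁅b 2, b 1⁆ = 0 := by rw [← lie_skew, h23, neg_zero]
  have l31 : ⁅b 3, b 1⁆ = 0 := by rw [← lie_skew, h24, neg_zero]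
  have l41 : ⁅b 4, b 1⁆ = 0 := by rw [← lie_skew, h25, neg_zero]
  have l32 : ⁅b 3, b 2⁆ = 0 := by rw [← lie_skew, h34, neg_zero]
  have l42 : ⁅b 4, b 2⁆ = 0 := by rw [← lie_skew, h35, neg_zero]
  have l43 : ⁅b 4, b 3⁆ = 0 := by rw [← lie_skew, h45, neg_zero]
  have e : ⁅x, y⁆ = ∑ i, ∑ j, b.repr x i • (b.repr y j • ⁅b i, b j⁆) := by
    conv_lhs => rw [← b.sum_repr x, ← b.sum_repr y]
    rw [sum_lie'']
    refine Finset.sum_congr rfl fun i _ => ?_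
    rw [smul_lie, lie_sum'']
    rw [Finset.smul_sum]
    refine Finset.sum_congr rfl fun j _ => ?_
    rw [lie_smul]
  rw [e]
  simp only [Fin.sum_univ_five]
  rw [h12, h13, h14, h15, h23, h24, h25, h34, h35, h45,
    l10, l20, l30, l40, l21, l31, l41, l32, l42, l43]
  simp only [lie_self, smul_zero, smul_neg, add_zero, zero_add, smul_smul]
  module

include h12 h13 h14 h15 h23 h24 h25 h34 h35 h45 in
theorem repr_lie (x y : L) (k : Fin 5) :
    b.repr ⁅x, y⁆ k =
      ![0, 0, b.repr x 0 * b.repr y 1 - b.repr x 1 * b.repr y 0,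
        b.repr x 0 * b.repr y 2 - b.repr x 2 * b.repr y 0,
        b.repr x 0 * b.repr y 3 - b.repr x 3 * b.repr y 0] k := by
  rw [brkf b h12 h13 h14 h15 h23 h24 h25 h34 h35 h45 x y]
  fin_cases k <;>
    simp [Finsupp.add_apply, Finsupp.smul_apply, Basis.repr_self, Finsupp.single_apply]

end Brk

section Om
variable {K : Type*} {L : Type*} [Field K] [LieRing L] [LieAlgebra K L]

/-- The 2-cocycle representing a basis of `H₂` of `L(7,5,1,7)`. -/
noncomputable def omegaB (b : Basis (Fin 5) K L) : L →ₗ[K] L →ₗ[K] (Fin 3 → K) :=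
  LinearMap.mk₂ K
    (fun x y => ![b.repr x 0 * b.repr y 4 - b.repr x 4 * b.repr y 0,
        b.repr x 1 * b.repr y 2 - b.repr x 2 * b.repr y 1,
        (b.repr x 1 * b.repr y 4 - b.repr x 4 * b.repr y 1)
          - (b.repr x 2 * b.repr y 3 - b.repr x 3 * b.repr y 2)])
    (fun x x' y => by
      funext k; fin_cases k <;>
        (simp [Finsupp.add_apply]; ring))
    (fun t x y => by
      funext k; fin_cases k <;>
        (simp [Finsupp.smul_apply]; ring))
    (fun x y y' => by
      funext k; fin_cases k <;>
        (simp [Finsupp.add_apply]; ring))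
    (fun t x y => by
      funext k; fin_cases k <;>
        (simp [Finsupp.smul_apply]; ring))

theorem omegaB_apply (b : Basis (Fin 5) K L) (x y : L) :
    omegaB b x y = ![b.repr x 0 * b.repr y 4 - b.repr x 4 * b.repr y 0,
        b.repr x 1 * b.repr y 2 - b.repr x 2 * b.repr y 1,
        (b.repr x 1 * b.repr y 4 - b.repr x 4 * b.repr y 1)
          - (b.repr x 2 * b.repr y 3 - b.repr x 3 * b.repr y 2)] := rfl

theorem omegaB_self (b : Basis (Fin 5) K L) (x : L) : omegaB b x x = 0 := by
  funext k; rw [omegaB_apply]; fin_cases k <;> (simp; ring)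

end Om

section Coc
variable {K : Type*} {L : Type*} [Field K] [LieRing L] [LieAlgebra K L]
variable (b : Basis (Fin 5) K L)
variable (h12 : ⁅b 0, b 1⁆ = b 2) (h13 : ⁅b 0, b 2⁆ = b 3) (h14 : ⁅b 0, b 3⁆ = b 4)
    (h15 : ⁅b 0, b 4⁆ = 0) (h23 : ⁅b 1, b 2⁆ = 0) (h24 : ⁅b 1, b 3⁆ = 0) (h25 : ⁅b 1, b 4⁆ = 0)
    (h34 : ⁅b 2, b 3⁆ = 0) (h35 : ⁅b 2, b 4⁆ = 0) (h45 : ⁅b 3, b 4⁆ = 0)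

include h12 h13 h14 h15 h23 h24 h25 h34 h35 h45 in
theorem omegaB_cocycle (x y z : L) :
    omegaB b ⁅x, y⁆ z + omegaB b ⁅y, z⁆ x + omegaB b ⁅z, x⁆ y = 0 := by
  have r := repr_lie b h12 h13 h14 h15 h23 h24 h25 h34 h35 h45
  funext k
  fin_cases k <;>
    · simp [Pi.add_apply, Pi.zero_apply, omegaB_apply, r, Fin.zero_eta, Fin.mk_one]
      ring
end Coc


namespace SchurAux
open Cardinal
universe uK uL
variable (K : Type uK) (L : Type uL) [Field K] [LieRing L] [LieAlgebra K L]

noncomputable def piF : FreeLieAlgebra K L →ₗ⁅K⁆ L := FreeLieAlgebra.lift K (id : L → L)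
noncomputable def RF : LieIdeal K (FreeLieAlgebra K L) := (piF K L).ker
noncomputable def BF : Submodule K (FreeLieAlgebra K L) :=
  LieSubmodule.toSubmodule ⁅(⊤ : LieIdeal K (FreeLieAlgebra K L)), RF K L⁆
noncomputable def AF : Submodule K (FreeLieAlgebra K L) :=
  LieSubmodule.toSubmodule (RF K L ⊓ ⁅(⊤ : LieIdeal K (FreeLieAlgebra K L)), (⊤ : LieIdeal K (FreeLieAlgebra K L))⁆)

variable {K L}

theorem piF_of (x : L) : piF K L (FreeLieAlgebra.of K x) = x := by
  simp [piF, FreeLieAlgebra.lift_of_apply]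

theorem mem_RF {z : FreeLieAlgebra K L} : z ∈ RF K L ↔ piF K L z = 0 :=
  LieHom.mem_ker

theorem lie_mem_BF (x z : FreeLieAlgebra K L) (hz : z ∈ RF K L) : ⁅x, z⁆ ∈ BF K L :=
  (LieSubmodule.mem_toSubmodule _).mpr
    (LieSubmodule.lie_mem_lie (LieSubmodule.mem_top x) hz)

theorem lie_mem_BF' (z x : FreeLieAlgebra K L) (hz : z ∈ RF K L) : ⁅z, x⁆ ∈ BF K L := by
  have h : ⁅z, x⁆ = -⁅x, z⁆ := by rw [← lie_skew]
  rw [h]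
  exact neg_mem (lie_mem_BF x z hz)

theorem BF_le_RF {z : FreeLieAlgebra K L} (h : z ∈ BF K L) : z ∈ RF K L :=
  LieSubmodule.lie_le_right (RF K L) ⊤ ((LieSubmodule.mem_toSubmodule _).mp h)

section WithBasis
variable (b : Basis (Fin 5) K L)

noncomputable def vG (p : Fin 5 × Fin 5) : FreeLieAlgebra K L :=
  ⁅FreeLieAlgebra.of K (b p.1), FreeLieAlgebra.of K (b p.2)⁆

theorem piF_vG (p : Fin 5 × Fin 5) : piF K L (vG b p) = ⁅b p.1, b p.2⁆ := by
  simp [vG, piF_of]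

variable (h12 : ⁅b 0, b 1⁆ = b 2) (h13 : ⁅b 0, b 2⁆ = b 3) (h14 : ⁅b 0, b 3⁆ = b 4)
    (h15 : ⁅b 0, b 4⁆ = 0) (h23 : ⁅b 1, b 2⁆ = 0) (h24 : ⁅b 1, b 3⁆ = 0) (h25 : ⁅b 1, b 4⁆ = 0)
    (h34 : ⁅b 2, b 3⁆ = 0) (h35 : ⁅b 2, b 4⁆ = 0) (h45 : ⁅b 3, b 4⁆ = 0)


noncomputable def aB (i : Fin 5) : FreeLieAlgebra K L := FreeLieAlgebra.of K (b i)

theorem piF_aB (i : Fin 5) : piF K L (aB b i) = b i := piF_of (b i)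

theorem vG_eq (p : Fin 5 × Fin 5) : vG b p = ⁅aB b p.1, aB b p.2⁆ := rfl

section Rels

include h13 h23 h12 in
theorem rel13 : vG b (1, 3) ∈ BF K L := by
  have k1 : aB b 3 - ⁅aB b 0, aB b 2⁆ ∈ RF K L := by
    rw [mem_RF]; simp [piF_aB, h13]
  have k2 : ⁅aB b 2, aB b 1⁆ ∈ RF K L := by
    rw [mem_RF]
    have e : ⁅b 2, b 1⁆ = (0 : L) := by rw [← lie_skew, h23, neg_zero]
    simp [piF_aB, e]
  have k3 : ⁅aB b 0, aB b 1⁆ - aB b 2 ∈ RF K L := by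
    rw [mem_RF]; simp [piF_aB, h12]
  have e1 : ⁅aB b 1, aB b 3⁆ - ⁅aB b 1, ⁅aB b 0, aB b 2⁆⁆ ∈ BF K L := by
    rw [← lie_sub]; exact lie_mem_BF _ _ k1
  have e2 : ⁅⁅aB b 0, aB b 2⁆, aB b 1⁆
      = ⁅aB b 0, ⁅aB b 2, aB b 1⁆⁆ - ⁅aB b 2, ⁅aB b 0, aB b 1⁆⁆ := lie_lie _ _ _
  have e3 : ⁅aB b 0, ⁅aB b 2, aB b 1⁆⁆ ∈ BF K L := lie_mem_BF _ _ k2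
  have e5 : ⁅aB b 2, ⁅aB b 0, aB b 1⁆⁆ ∈ BF K L := by
    have e4 := lie_mem_BF (aB b 2) _ k3
    rw [lie_sub, lie_self, sub_zero] at e4
    exact e4
  have e6 : ⁅aB b 1, ⁅aB b 0, aB b 2⁆⁆
      = -(⁅aB b 0, ⁅aB b 2, aB b 1⁆⁆ - ⁅aB b 2, ⁅aB b 0, aB b 1⁆⁆) := by
    rw [← e2, lie_skew]
  have hsplit : vG b (1, 3)
      = (⁅aB b 1, aB b 3⁆ - ⁅aB b 1, ⁅aB b 0, aB b 2⁆⁆) + ⁅aB b 1, ⁅aB b 0, aB b 2⁆⁆ := by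
    rw [vG_eq]; abel
  rw [hsplit]
  refine add_mem e1 ?_
  rw [e6]
  exact neg_mem (sub_mem e3 e5)

include h14 h34 h13 in
theorem rel24 : vG b (2, 4) ∈ BF K L := by
  have k1 : aB b 4 - ⁅aB b 0, aB b 3⁆ ∈ RF K L := by
    rw [mem_RF]; simp [piF_aB, h14]
  have k2 : ⁅aB b 3, aB b 2⁆ ∈ RF K L := by
    rw [mem_RF]
    have e : ⁅b 3, b 2⁆ = (0 : L) := by rw [← lie_skew, h34, neg_zero]
    simp [piF_aB, e]
  have k3 : ⁅aB b 0, aB b 2⁆ - aB b 3 ∈ RF K L := by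
    rw [mem_RF]; simp [piF_aB, h13]
  have e1 : ⁅aB b 2, aB b 4⁆ - ⁅aB b 2, ⁅aB b 0, aB b 3⁆⁆ ∈ BF K L := by
    rw [← lie_sub]; exact lie_mem_BF _ _ k1
  have e2 : ⁅⁅aB b 0, aB b 3⁆, aB b 2⁆
      = ⁅aB b 0, ⁅aB b 3, aB b 2⁆⁆ - ⁅aB b 3, ⁅aB b 0, aB b 2⁆⁆ := lie_lie _ _ _
  have e3 : ⁅aB b 0, ⁅aB b 3, aB b 2⁆⁆ ∈ BF K L := lie_mem_BF _ _ k2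
  have e5 : ⁅aB b 3, ⁅aB b 0, aB b 2⁆⁆ ∈ BF K L := by
    have e4 := lie_mem_BF (aB b 3) _ k3
    rw [lie_sub, lie_self, sub_zero] at e4
    exact e4
  have e6 : ⁅aB b 2, ⁅aB b 0, aB b 3⁆⁆
      = -(⁅aB b 0, ⁅aB b 3, aB b 2⁆⁆ - ⁅aB b 3, ⁅aB b 0, aB b 2⁆⁆) := by
    rw [← e2, lie_skew]
  have hsplit : vG b (2, 4)
      = (⁅aB b 2, aB b 4⁆ - ⁅aB b 2, ⁅aB b 0, aB b 3⁆⁆) + ⁅aB b 2, ⁅aB b 0, aB b 3⁆⁆ := by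
    rw [vG_eq]; abel
  rw [hsplit]
  refine add_mem e1 ?_
  rw [e6]
  exact neg_mem (sub_mem e3 e5)

include h13 h35 h15 in
theorem rel34 : vG b (3, 4) ∈ BF K L := by
  have k1 : aB b 3 - ⁅aB b 0, aB b 2⁆ ∈ RF K L := by
    rw [mem_RF]; simp [piF_aB, h13]
  have k2 : ⁅aB b 2, aB b 4⁆ ∈ RF K L := by
    rw [mem_RF]; simp [piF_aB, h35]
  have k3 : ⁅aB b 0, aB b 4⁆ ∈ RF K L := by
    rw [mem_RF]; simp [piF_aB, h15]
  have e1 : ⁅aB b 3, aB b 4⁆ - ⁅⁅aB b 0, aB b 2⁆, aB b 4⁆ ∈ BF K L := by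
    rw [← sub_lie]; exact lie_mem_BF' _ _ k1
  have e2 : ⁅⁅aB b 0, aB b 2⁆, aB b 4⁆
      = ⁅aB b 0, ⁅aB b 2, aB b 4⁆⁆ - ⁅aB b 2, ⁅aB b 0, aB b 4⁆⁆ := lie_lie _ _ _
  have e3 : ⁅aB b 0, ⁅aB b 2, aB b 4⁆⁆ ∈ BF K L := lie_mem_BF _ _ k2
  have e4 : ⁅aB b 2, ⁅aB b 0, aB b 4⁆⁆ ∈ BF K L := lie_mem_BF _ _ k3
  have hsplit : vG b (3, 4)
      = (⁅aB b 3, aB b 4⁆ - ⁅⁅aB b 0, aB b 2⁆, aB b 4⁆) + ⁅⁅aB b 0, aB b 2⁆, aB b 4⁆ := by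
    rw [vG_eq]; abel
  rw [hsplit]
  refine add_mem e1 ?_
  rw [e2]
  exact sub_mem e3 e4

include h12 h24 h14 in
theorem rel23 : vG b (2, 3) + vG b (1, 4) ∈ BF K L := by
  have k1 : aB b 2 - ⁅aB b 0, aB b 1⁆ ∈ RF K L := by
    rw [mem_RF]; simp [piF_aB, h12]
  have k2 : ⁅aB b 1, aB b 3⁆ ∈ RF K L := by
    rw [mem_RF]; simp [piF_aB, h24]
  have k3 : ⁅aB b 0, aB b 3⁆ - aB b 4 ∈ RF K L := by
    rw [mem_RF]; simp [piF_aB, h14]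
  have e1 : ⁅aB b 2, aB b 3⁆ - ⁅⁅aB b 0, aB b 1⁆, aB b 3⁆ ∈ BF K L := by
    rw [← sub_lie]; exact lie_mem_BF' _ _ k1
  have e2 : ⁅⁅aB b 0, aB b 1⁆, aB b 3⁆
      = ⁅aB b 0, ⁅aB b 1, aB b 3⁆⁆ - ⁅aB b 1, ⁅aB b 0, aB b 3⁆⁆ := lie_lie _ _ _
  have e3 : ⁅aB b 0, ⁅aB b 1, aB b 3⁆⁆ ∈ BF K L := lie_mem_BF _ _ k2
  have e4 : ⁅aB b 1, ⁅aB b 0, aB b 3⁆⁆ - ⁅aB b 1, aB b 4⁆ ∈ BF K L := by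
    rw [← lie_sub]; exact lie_mem_BF _ _ k3
  have hsplit : vG b (2, 3) + vG b (1, 4)
      = ((⁅aB b 2, aB b 3⁆ - ⁅⁅aB b 0, aB b 1⁆, aB b 3⁆)
          + ⁅aB b 0, ⁅aB b 1, aB b 3⁆⁆)
          - (⁅aB b 1, ⁅aB b 0, aB b 3⁆⁆ - ⁅aB b 1, aB b 4⁆) := by
    rw [vG_eq, vG_eq, e2]; abel
  rw [hsplit]
  exact sub_mem (add_mem e1 e3) e4

end Rels

theorem sum_lie'' {ι : Type*} (s : Finset ι) (f : ι → FreeLieAlgebra K L) (y : FreeLieAlgebra K L) :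
    ⁅∑ i ∈ s, f i, y⁆ = ∑ i ∈ s, ⁅f i, y⁆ := by
  induction s using Finset.cons_induction with
  | empty => simp
  | cons a s ha ih => simp [Finset.sum_cons, add_lie, ih]

theorem lie_sum'' {ι : Type*} (s : Finset ι) (x : FreeLieAlgebra K L) (f : ι → FreeLieAlgebra K L) :
    ⁅x, ∑ i ∈ s, f i⁆ = ∑ i ∈ s, ⁅x, f i⁆ := by
  induction s using Finset.cons_induction with
  | empty => simp
  | cons a s ha ih => simp [Finset.sum_cons, lie_add, ih]

noncomputable def sigmaF : FreeLieAlgebra K L →ₗ[K] FreeLieAlgebra K L where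
  toFun z := ∑ i, b.repr (piF K L z) i • aB b i
  map_add' z w := by
    simp [map_add, Finsupp.add_apply, add_smul, Finset.sum_add_distrib]
  map_smul' t z := by
    simp [map_smul, Finsupp.smul_apply, mul_smul, Finset.smul_sum]

theorem sigmaF_apply (z : FreeLieAlgebra K L) :
    sigmaF b z = ∑ i, b.repr (piF K L z) i • aB b i := rfl

theorem sub_sigmaF_mem_RF (z : FreeLieAlgebra K L) : z - sigmaF b z ∈ RF K L := by
  rw [mem_RF, map_sub]
  have h : piF K L (sigmaF b z) = piF K L z := by
    rw [sigmaF_apply, ← LieHom.coe_toLinearMap, map_sum]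
    simp only [map_smul, LieHom.coe_toLinearMap, piF_aB]
    exact b.sum_repr _
  rw [h, sub_self]

theorem lie_mem_sup (x y : FreeLieAlgebra K L) :
    ⁅x, y⁆ ∈ Submodule.span K (Set.range (vG b)) ⊔ BF K L := by
  have hid : ⁅x, y⁆ = ⁅x - sigmaF b x, y⁆ + ⁅sigmaF b x, y - sigmaF b y⁆
      + ⁅sigmaF b x, sigmaF b y⁆ := by
    rw [sub_lie, lie_sub]; abel
  rw [hid]
  refine add_mem (add_mem (Submodule.mem_sup_right ?_) (Submodule.mem_sup_right ?_))
    (Submodule.mem_sup_left ?_)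
  · exact lie_mem_BF' _ _ (sub_sigmaF_mem_RF b x)
  · exact lie_mem_BF _ _ (sub_sigmaF_mem_RF b y)
  · rw [sigmaF_apply b x, sigmaF_apply b y]
    have hls : ∀ (t : K) (x y : FreeLieAlgebra K L), ⁅x, t • y⁆ = t • ⁅x, y⁆ := fun t x y => by
      rw [← lie_skew, smul_lie, ← lie_skew x y, smul_neg]
    simp only [sum_lie'', smul_lie, lie_sum'', hls, Finset.smul_sum]
    refine Submodule.sum_mem _ fun i _ => Submodule.sum_mem _ fun j _ =>
      Submodule.smul_mem _ _ (Submodule.smul_mem _ _ (Submodule.subset_span (Set.mem_range.mpr ⟨(j, i), rfl⟩)))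

theorem derived_le_sup :
    (LieSubmodule.toSubmodule
        ⁅(⊤ : LieIdeal K (FreeLieAlgebra K L)), (⊤ : LieIdeal K (FreeLieAlgebra K L))⁆)
      ≤ Submodule.span K (Set.range (vG b)) ⊔ BF K L := by
  rw [LieSubmodule.lieIdeal_oper_eq_linear_span', Submodule.span_le]
  rintro z ⟨x, -, y, -, rfl⟩
  exact lie_mem_sup b x y

include h12 h13 h14 h15 h23 h24 h25 h34 h35 h45 in
theorem mem_key (a : FreeLieAlgebra K L) (ha : a ∈ AF K L) :
    ∃ c : Fin 3 → K,
      a - (c 0 • vG b (0, 4) + c 1 • vG b (1, 2) + c 2 • vG b (1, 4)) ∈ BF K L := by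
  have hmem := (LieSubmodule.mem_toSubmodule _).mp ha
  rw [LieSubmodule.mem_inf] at hmem
  obtain ⟨haR, haD⟩ := hmem
  have haTB : a ∈ Submodule.span K (Set.range (vG b)) ⊔ BF K L :=
    derived_le_sup b ((LieSubmodule.mem_toSubmodule _).mpr haD)
  rw [Submodule.mem_sup] at haTB
  obtain ⟨t, ht, u, hu, rfl⟩ := haTB
  rw [Submodule.mem_span_range_iff_exists_fun] at ht
  obtain ⟨γ, rfl⟩ := ht
  have hπu : piF K L u = 0 := mem_RF.mp (BF_le_RF hu)
  have hπt : (∑ p : Fin 5 × Fin 5, γ p • ⁅b p.1, b p.2⁆) = 0 := by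
    have h0 : piF K L (∑ p : Fin 5 × Fin 5, γ p • vG b p) = 0 := by
      have h1 := mem_RF.mp haR
      rw [map_add, hπu, add_zero] at h1
      exact h1
    rw [← LieHom.coe_toLinearMap, map_sum] at h0
    simpa only [map_smul, LieHom.coe_toLinearMap, piF_vG] using h0
  have l10 : ⁅b 1, b 0⁆ = -b 2 := by rw [← lie_skew, h12]
  have l20 : ⁅b 2, b 0⁆ = -b 3 := by rw [← lie_skew, h13]
  have l30 : ⁅b 3, b 0⁆ = -b 4 := by rw [← lie_skew, h14]
  have l40 : ⁅b 4, b 0⁆ = 0 := by rw [← lie_skew, h15, neg_zero]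
  have l21 : ⁅b 2, b 1⁆ = 0 := by rw [← lie_skew, h23, neg_zero]
  have l31 : ⁅b 3, b 1⁆ = 0 := by rw [← lie_skew, h24, neg_zero]
  have l41 : ⁅b 4, b 1⁆ = 0 := by rw [← lie_skew, h25, neg_zero]
  have l32 : ⁅b 3, b 2⁆ = 0 := by rw [← lie_skew, h34, neg_zero]
  have l42 : ⁅b 4, b 2⁆ = 0 := by rw [← lie_skew, h35, neg_zero]
  have l43 : ⁅b 4, b 3⁆ = 0 := by rw [← lie_skew, h45, neg_zero]
  have hexp : (γ (0, 1) - γ (1, 0)) • b 2 + (γ (0, 2) - γ (2, 0)) • b 3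
      + (γ (0, 3) - γ (3, 0)) • b 4 = (0 : L) := by
    rw [← hπt, Fintype.sum_prod_type]
    simp only [Fin.sum_univ_five]
    rw [h12, h13, h14, h15, h23, h24, h25, h34, h35, h45,
      l10, l20, l30, l40, l21, l31, l41, l32, l42, l43]
    simp only [lie_self, smul_zero, smul_neg, add_zero, zero_add]
    module
  have hd1 : γ (0, 1) - γ (1, 0) = 0 := by
    have h := congrArg (fun w => b.repr w 2) hexp
    simpa [Finsupp.add_apply, Finsupp.smul_apply, Basis.repr_self,
      Finsupp.single_apply] using h
  have hd2 : γ (0, 2) - γ (2, 0) = 0 := by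
    have h := congrArg (fun w => b.repr w 3) hexp
    simpa [Finsupp.add_apply, Finsupp.smul_apply, Basis.repr_self,
      Finsupp.single_apply] using h
  have hd3 : γ (0, 3) - γ (3, 0) = 0 := by
    have h := congrArg (fun w => b.repr w 4) hexp
    simpa [Finsupp.add_apply, Finsupp.smul_apply, Basis.repr_self,
      Finsupp.single_apply] using h
  have hsk : ∀ i j : Fin 5, vG b (j, i) = - vG b (i, j) := fun i j => by
    rw [vG_eq, vG_eq, ← lie_skew]
  have hdg : ∀ i : Fin 5, vG b (i, i) = 0 := fun i => by
    rw [vG_eq]; exact lie_self _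
  refine ⟨![γ (0, 4) - γ (4, 0), γ (1, 2) - γ (2, 1),
    (γ (1, 4) - γ (4, 1)) - (γ (2, 3) - γ (3, 2))], ?_⟩
  simp only [Matrix.cons_val_zero, Matrix.cons_val_one, Matrix.head_cons,
    Matrix.cons_val_two, Matrix.tail_cons]
  have hdec : (∑ p : Fin 5 × Fin 5, γ p • vG b p) + u
      - ((γ (0, 4) - γ (4, 0)) • vG b (0, 4) + (γ (1, 2) - γ (2, 1)) • vG b (1, 2)
        + ((γ (1, 4) - γ (4, 1)) - (γ (2, 3) - γ (3, 2))) • vG b (1, 4))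
      = ((γ (1, 3) - γ (3, 1)) • vG b (1, 3) + (γ (2, 4) - γ (4, 2)) • vG b (2, 4)
        + (γ (3, 4) - γ (4, 3)) • vG b (3, 4)
        + (γ (2, 3) - γ (3, 2)) • (vG b (2, 3) + vG b (1, 4))
        + ((γ (0, 1) - γ (1, 0)) • vG b (0, 1) + (γ (0, 2) - γ (2, 0)) • vG b (0, 2)
          + (γ (0, 3) - γ (3, 0)) • vG b (0, 3))) + u := by
    rw [Fintype.sum_prod_type]
    simp only [Fin.sum_univ_five]
    rw [hsk 0 1, hsk 0 2, hsk 0 3, hsk 0 4, hsk 1 2, hsk 1 3, hsk 1 4, hsk 2 3, hsk 2 4,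
      hsk 3 4, hdg 0, hdg 1, hdg 2, hdg 3, hdg 4]
    simp only [smul_zero, smul_neg, add_zero, zero_add]
    module
  rw [hdec, hd1, hd2, hd3]
  simp only [zero_smul, add_zero, zero_add]
  refine add_mem (add_mem (add_mem (add_mem
    (Submodule.smul_mem _ _ (rel13 b h12 h13 h23))
    (Submodule.smul_mem _ _ (rel24 b h13 h14 h34)))
    (Submodule.smul_mem _ _ (rel34 b h13 h15 h35)))
    (Submodule.smul_mem _ _ (rel23 b h12 h14 h24))) hu

theorem vG_mem_AF (p : Fin 5 × Fin 5) (h0 : ⁅b p.1, b p.2⁆ = 0) : vG b p ∈ AF K L := by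
  refine (LieSubmodule.mem_toSubmodule _).mpr ?_
  rw [LieSubmodule.mem_inf]
  constructor
  · exact mem_RF.mpr (by rw [piF_vG, h0])
  · rw [vG_eq]
    exact LieSubmodule.lie_mem_lie (LieSubmodule.mem_top _) (LieSubmodule.mem_top _)

include h12 h13 h14 h15 h23 h24 h25 h34 h35 h45 in
theorem rank_le_three :
    Module.rank K ((AF K L) ⧸ ((BF K L).comap (AF K L).subtype)) ≤ 3 := by
  have hW0 : vG b (0, 4) ∈ AF K L := vG_mem_AF b _ h15
  have hW1 : vG b (1, 2) ∈ AF K L := vG_mem_AF b _ h23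
  have hW2 : vG b (1, 4) ∈ AF K L := vG_mem_AF b _ h25
  set P := (BF K L).comap (AF K L).subtype with hP
  let q0 : (AF K L) ⧸ P := Submodule.Quotient.mk ⟨vG b (0, 4), hW0⟩
  let q1 : (AF K L) ⧸ P := Submodule.Quotient.mk ⟨vG b (1, 2), hW1⟩
  let q2 : (AF K L) ⧸ P := Submodule.Quotient.mk ⟨vG b (1, 4), hW2⟩
  have hspan : Submodule.span K ({q0, q1, q2} : Set ((AF K L) ⧸ P)) = ⊤ := by
    rw [Submodule.eq_top_iff']
    intro x
    obtain ⟨⟨a, ha⟩, rfl⟩ := Submodule.Quotient.mk_surjective _ x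
    obtain ⟨c, hc⟩ := mem_key b h12 h13 h14 h15 h23 h24 h25 h34 h35 h45 a ha
    have hmemA : c 0 • vG b (0, 4) + c 1 • vG b (1, 2) + c 2 • vG b (1, 4) ∈ AF K L :=
      add_mem (add_mem (Submodule.smul_mem _ _ hW0) (Submodule.smul_mem _ _ hW1))
        (Submodule.smul_mem _ _ hW2)
    have key : (Submodule.Quotient.mk ⟨a, ha⟩ : (AF K L) ⧸ P)
        = c 0 • q0 + c 1 • q1 + c 2 • q2 := by
      have e : c 0 • q0 + c 1 • q1 + c 2 • q2
          = (Submodule.Quotient.mk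
              ⟨c 0 • vG b (0, 4) + c 1 • vG b (1, 2) + c 2 • vG b (1, 4), hmemA⟩
              : (AF K L) ⧸ P) := by
        rw [show (⟨c 0 • vG b (0, 4) + c 1 • vG b (1, 2) + c 2 • vG b (1, 4), hmemA⟩ : AF K L)
            = c 0 • (⟨vG b (0, 4), hW0⟩ : AF K L) + c 1 • (⟨vG b (1, 2), hW1⟩ : AF K L)
              + c 2 • (⟨vG b (1, 4), hW2⟩ : AF K L) from rfl,
          Submodule.Quotient.mk_add, Submodule.Quotient.mk_add,
          Submodule.Quotient.mk_smul, Submodule.Quotient.mk_smul, Submodule.Quotient.mk_smul]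
      rw [e, Submodule.Quotient.eq]
      change (_ : FreeLieAlgebra K L) ∈ BF K L
      simpa using hc
    rw [key]
    refine add_mem (add_mem (Submodule.smul_mem _ _ ?_) (Submodule.smul_mem _ _ ?_))
      (Submodule.smul_mem _ _ ?_)
    · exact Submodule.subset_span (by simp)
    · exact Submodule.subset_span (by simp)
    · exact Submodule.subset_span (by simp)
  have hrank := rank_span_le (R := K) ({q0, q1, q2} : Set ((AF K L) ⧸ P))
  rw [hspan] at hrank
  have hcard : #({q0, q1, q2} : Set ((AF K L) ⧸ P)) ≤ 3 := by
    refine le_trans Cardinal.mk_insert_le ?_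
    have h2 := Cardinal.mk_insert_le (s := ({q2} : Set ((AF K L) ⧸ P))) (a := q1)
    rw [Cardinal.mk_singleton] at h2
    calc #((insert q1 ({q2} : Set ((AF K L) ⧸ P))) : Set ((AF K L) ⧸ P)) + 1
        ≤ (1 + 1) + 1 := by gcongr
      _ = 3 := by norm_num
  calc Module.rank K ((AF K L) ⧸ P)
      = Module.rank K (⊤ : Submodule K ((AF K L) ⧸ P)) := (rank_top K _).symm
    _ ≤ 3 := le_trans (le_of_eq rfl) (le_trans hrank hcard)


include h12 h13 h14 h15 h23 h24 h25 h34 h35 h45 in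
theorem three_le_rank :
    (3 : Cardinal) ≤ Module.rank K ((AF K L) ⧸ ((BF K L).comap (AF K L).subtype)) := by
  classical
  have h1 := omegaB_self (K := K) b
  have h2 := omegaB_cocycle b h12 h13 h14 h15 h23 h24 h25 h34 h35 h45
  let ψ : FreeLieAlgebra K L →ₗ⁅K⁆ CExt K L (omegaB b) h1 h2 :=
    FreeLieAlgebra.lift K (fun x : L => CExt.mk K L (omegaB b) h1 h2 x 0)
  have hψof : ∀ x : L, ψ (FreeLieAlgebra.of K x) = CExt.mk K L (omegaB b) h1 h2 x 0 :=
    fun x => FreeLieAlgebra.lift_of_apply _ x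
  have hfst : ∀ z, CExt.fstHom K L (omegaB b) h1 h2 (ψ z) = piF K L z := by
    have he : (CExt.fstHom K L (omegaB b) h1 h2).comp ψ = piF K L := by
      apply FreeLieAlgebra.hom_ext
      intro x
      show CExt.fstHom K L (omegaB b) h1 h2 (ψ (FreeLieAlgebra.of K x))
        = piF K L (FreeLieAlgebra.of K x)
      rw [hψof, piF_of, CExt.fstHom_mk]
    intro z
    have h := DFunLike.congr_fun he z
    simpa using h
  have hψB : ∀ z ∈ BF K L, ψ z = 0 := by
    intro z hz
    have hz' : z ∈ Submodule.span K
        {m | ∃ x ∈ (⊤ : LieIdeal K (FreeLieAlgebra K L)), ∃ n ∈ RF K L, ⁅x, n⁆ = m} := by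
      rw [← LieSubmodule.lieIdeal_oper_eq_linear_span']
      exact hz
    refine Submodule.span_induction ?_ ?_ ?_ ?_ hz'
    · rintro m ⟨x, -, n, hn, rfl⟩
      rw [LieHom.map_lie]
      apply CExt.lie_of_fst_zero
      rw [hfst]
      exact mem_RF.mp hn
    · exact ψ.map_zero
    · intro x y _ _ hx hy; rw [map_add, hx, hy, add_zero]
    · intro t x _ hx; rw [map_smul, hx, smul_zero]
  set P := (BF K L).comap (AF K L).subtype with hPdef
  let qlin : (AF K L) →ₗ[K] (Fin 3 → K) :=
    (CExt.sndLin K L (omegaB b) h1 h2) ∘ₗ ψ.toLinearMap ∘ₗ (AF K L).subtype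
  have hker : P ≤ LinearMap.ker qlin := by
    rintro ⟨x, hx⟩ hmem
    have hxB : x ∈ BF K L := hmem
    show CExt.sndLin K L (omegaB b) h1 h2 (ψ x) = 0
    rw [hψB x hxB]
    exact map_zero _
  let qbar := Submodule.liftQ P qlin hker
  have hW0 : vG b (0, 4) ∈ AF K L := vG_mem_AF b _ h15
  have hW1 : vG b (1, 2) ∈ AF K L := vG_mem_AF b _ h23
  have hW2 : vG b (1, 4) ∈ AF K L := vG_mem_AF b _ h25
  have hv : ∀ i j : Fin 5, ψ (vG b (i, j))
      = CExt.mk K L (omegaB b) h1 h2 ⁅b i, b j⁆ (omegaB b (b i) (b j)) := by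
    intro i j
    have : vG b (i, j) = ⁅FreeLieAlgebra.of K (b i), FreeLieAlgebra.of K (b j)⁆ := rfl
    rw [this, LieHom.map_lie, hψof, hψof, CExt.lie_mk]
  have hsurj : Function.Surjective qbar := by
    intro u
    have hmemA : u 0 • vG b (0, 4) + u 1 • vG b (1, 2) + u 2 • vG b (1, 4) ∈ AF K L :=
      add_mem (add_mem (Submodule.smul_mem _ _ hW0) (Submodule.smul_mem _ _ hW1))
        (Submodule.smul_mem _ _ hW2)
    refine ⟨Submodule.Quotient.mk ⟨_, hmemA⟩, ?_⟩
    show CExt.sndLin K L (omegaB b) h1 h2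
      (ψ (u 0 • vG b (0, 4) + u 1 • vG b (1, 2) + u 2 • vG b (1, 4))) = u
    rw [map_add ψ, map_add ψ, map_smul ψ, map_smul ψ, map_smul ψ,
      hv 0 4, hv 1 2, hv 1 4, map_add, map_add, map_smul, map_smul, map_smul,
      CExt.sndLin_mk, CExt.sndLin_mk, CExt.sndLin_mk]
    funext k
    fin_cases k <;>
      · simp [omegaB_apply, Basis.repr_self, Finsupp.single_apply, Fin.zero_eta, Fin.mk_one]
  have hle := LinearMap.lift_rank_le_of_surjective qbar hsurj
  have hr : Module.rank K (Fin 3 → K) = 3 := by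
    rw [rank_fin_fun]
    norm_num
  rw [hr] at hle
  simp only [Cardinal.lift_ofNat] at hle
  rw [Cardinal.lift_id'.{uK, uL}] at hle
  exact hle

end WithBasis
end SchurAux

theorem schur_multiplier_L7517 (K : Type*) (L : Type*) [Field K] [LieRing L] [LieAlgebra K L]
    (hchar : ringChar K ≠ 2) (b : Basis (Fin 5) K L)
    (h12 : ⁅b 0, b 1⁆ = b 2) (h13 : ⁅b 0, b 2⁆ = b 3) (h14 : ⁅b 0, b 3⁆ = b 4)
    (h15 : ⁅b 0, b 4⁆ = 0) (h23 : ⁅b 1, b 2⁆ = 0) (h24 : ⁅b 1, b 3⁆ = 0) (h25 : ⁅b 1, b 4⁆ = 0)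
    (h34 : ⁅b 2, b 3⁆ = 0) (h35 : ⁅b 2, b 4⁆ = 0) (h45 : ⁅b 3, b 4⁆ = 0) :
    schurRank K L = 3 ∧ (finrank K L + 1) / 2 = 3 := by
  constructor
  · have hrfl : schurRank K L = Module.rank K
        ((SchurAux.AF K L) ⧸ ((SchurAux.BF K L).comap (SchurAux.AF K L).subtype)) := rfl
    rw [hrfl]
    exact le_antisymm
      (SchurAux.rank_le_three b h12 h13 h14 h15 h23 h24 h25 h34 h35 h45)
      (SchurAux.three_le_rank b h12 h13 h14 h15 h23 h24 h25 h34 h35 h45)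
  · rw [Module.finrank_eq_card_basis b]
    norm_num
end
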